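/- arXiv:1505.07969 — 6 statements merged into one kernel-verified Lean document; each statement's English description precedes it below -/
import Mathlib

section
/- If at a point (x,y) with y ≠ 0 the fundamental tensor g_{ij}(x,y) = ½ ∂̇_i∂̇_j (L²) is positive definite and L*(x,y) > 0, then the transformed fundamental tensor g*_{ij}(x,y) = ½ ∂̇_i∂̇_j (L*²) is positive definite; in particular det(g*_{ij}) ≠ 0. -/
open Real

/-- Second partial derivative with respect to the `y`-coordinates:
`∂̇_i ∂̇_j f` evaluated at `y`. -/
noncomputable def pdy2 {n : ℕ} (f : (Fin n → ℝ) → ℝ) (i j : Fin n) (y : Fin n → ℝ) : ℝ :=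
  fderiv ℝ (fun z => fderiv ℝ f z (Pi.single j 1)) y (Pi.single i 1)

/-- The fundamental (metric) tensor `g_{ij} = ½ ∂̇_i∂̇_j (L²)` of a Finsler metric `L`. -/
noncomputable def gten {n : ℕ} (L : (Fin n → ℝ) → (Fin n → ℝ) → ℝ)
    (x : Fin n → ℝ) (i j : Fin n) (y : Fin n → ℝ) : ℝ :=
  (1 / 2) * pdy2 (fun z => (L x z) ^ 2) i j y

/-- The Randers conformal change `L*(x,y) = e^{σ(x)} L(x,y) + β(x,y)`. -/
noncomputable def RandersChange {n : ℕ} (L : (Fin n → ℝ) → (Fin n → ℝ) → ℝ)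
    (σ : (Fin n → ℝ) → ℝ) (b : (Fin n → ℝ) → (Fin n → ℝ))
    (x y : Fin n → ℝ) : ℝ :=
  Real.exp (σ x) * L x y + ∑ j, b x j * y j

section
variable {n : ℕ}

/-- smoothness of z ↦ ∂_v f(z) -/
lemma contDiffAt_dapply {f : (Fin n → ℝ) → ℝ} {S : Set (Fin n → ℝ)} (hS : IsOpen S)
    (hf : ContDiffOn ℝ (⊤ : ℕ∞) f S) {y : Fin n → ℝ} (hy : y ∈ S) (v : Fin n → ℝ) :
    ContDiffAt ℝ (⊤ : ℕ∞) (fun z => fderiv ℝ f z v) y :=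
  (((hf.contDiffAt (hS.mem_nhds hy)).fderiv_right (by simp))).clm_apply contDiffAt_const

/-- eventual differentiability -/
lemma eventually_diff {f : (Fin n → ℝ) → ℝ} {S : Set (Fin n → ℝ)} (hS : IsOpen S)
    (hf : ContDiffOn ℝ (⊤ : ℕ∞) f S) {y : Fin n → ℝ} (hy : y ∈ S) :
    ∀ᶠ z in nhds y, DifferentiableAt ℝ f z := by
  filter_upwards [hS.mem_nhds hy] with z hz
  exact (hf.contDiffAt (hS.mem_nhds hz)).differentiableAt (by simp)

end

section
variable {n : ℕ}

/-- product rule for pdy2 -/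
lemma pdy2_mul {f g : (Fin n → ℝ) → ℝ} {S : Set (Fin n → ℝ)} (hS : IsOpen S)
    (hf : ContDiffOn ℝ (⊤ : ℕ∞) f S) (hg : ContDiffOn ℝ (⊤ : ℕ∞) g S)
    {y : Fin n → ℝ} (hy : y ∈ S) (i j : Fin n) :
    pdy2 (fun z => f z * g z) i j y =
      f y * pdy2 g i j y + fderiv ℝ g y (Pi.single j 1) * fderiv ℝ f y (Pi.single i 1)
      + (g y * pdy2 f i j y + fderiv ℝ f y (Pi.single j 1) * fderiv ℝ g y (Pi.single i 1)) := by
  have hDf := contDiffAt_dapply hS hf hy (Pi.single j 1)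
  have hDg := contDiffAt_dapply hS hg hy (Pi.single j 1)
  have h1 : (fun z => fderiv ℝ (fun w => f w * g w) z (Pi.single j 1)) =ᶠ[nhds y]
      (fun z => f z * fderiv ℝ g z (Pi.single j 1) + g z * fderiv ℝ f z (Pi.single j 1)) := by
    filter_upwards [eventually_diff hS hf hy, eventually_diff hS hg hy] with z hfz hgz
    rw [fderiv_fun_mul hfz hgz]
    simp [mul_comm]
  have e2 : pdy2 (fun z => f z * g z) i j y =
      fderiv ℝ (fun z => f z * fderiv ℝ g z (Pi.single j 1)
        + g z * fderiv ℝ f z (Pi.single j 1)) y (Pi.single i 1) := by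
    unfold pdy2
    rw [h1.fderiv_eq]
  rw [e2]
  have dfy : DifferentiableAt ℝ f y := (hf.contDiffAt (hS.mem_nhds hy)).differentiableAt (by simp)
  have dgy : DifferentiableAt ℝ g y := (hg.contDiffAt (hS.mem_nhds hy)).differentiableAt (by simp)
  have dDf : DifferentiableAt ℝ (fun z => fderiv ℝ f z (Pi.single j 1)) y :=
    hDf.differentiableAt (by simp)
  have dDg : DifferentiableAt ℝ (fun z => fderiv ℝ g z (Pi.single j 1)) y :=
    hDg.differentiableAt (by simp)
  rw [fderiv_fun_add (dfy.fun_mul dDg) (dgy.fun_mul dDf), fderiv_fun_mul dfy dDg, fderiv_fun_mul dgy dDf]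
  unfold pdy2
  simp
end

section
variable {n : ℕ}

lemma pdy2_symm {f : (Fin n → ℝ) → ℝ} {S : Set (Fin n → ℝ)} (hS : IsOpen S)
    (hf : ContDiffOn ℝ (⊤ : ℕ∞) f S) {y : Fin n → ℝ} (hy : y ∈ S) (i j : Fin n) :
    pdy2 f i j y = pdy2 f j i y := by
  have hca : ContDiffAt ℝ (⊤ : ℕ∞) f y := hf.contDiffAt (hS.mem_nhds hy)
  have hsym := hca.isSymmSndFDerivAt (by rw [minSmoothness_of_isRCLikeNormedField]; exact ENat.natCast_le_of_coe_top_le_withTop le_rfl 2)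
  have key : ∀ a b : Fin n, pdy2 f a b y =
      fderiv ℝ (fderiv ℝ f) y (Pi.single a 1) (Pi.single b 1) := by
    intro a b
    unfold pdy2
    have hd : DifferentiableAt ℝ (fderiv ℝ f) y :=
      (hca.fderiv_right (m := (⊤ : ℕ∞)) (by simp)).differentiableAt (by simp)
    rw [fderiv_clm_apply hd (differentiableAt_const _)]
    simp
  rw [key i j, key j i, hsym.eq]
end

section
variable {n : ℕ}

/-- Euler's relation from positive homogeneity. -/
lemma euler_hom {h : (Fin n → ℝ) → ℝ} {y : Fin n → ℝ} (hd : DifferentiableAt ℝ h y)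
    (k : ℕ) (hh : ∀ c : ℝ, 0 < c → h (c • y) = c ^ k * h y) :
    fderiv ℝ h y y = k * h y := by
  have h1 : HasDerivAt (fun c : ℝ => h (c • y)) (fderiv ℝ h y y) 1 := by
    have hc : HasDerivAt (fun c : ℝ => c • y) y 1 := by
      simpa using (hasDerivAt_id (1:ℝ)).smul_const y
    have hd' : HasFDerivAt h (fderiv ℝ h y) ((1:ℝ) • y) := by
      simpa using hd.hasFDerivAt
    exact hd'.comp_hasDerivAt 1 hc
  have h2 : HasDerivAt (fun c : ℝ => h (c • y)) ((k : ℝ) * h y) 1 := by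
    have hp : HasDerivAt (fun c : ℝ => c ^ k * h y) ((k : ℝ) * h y) 1 := by
      simpa using (hasDerivAt_pow k (1:ℝ)).mul_const (h y)
    apply hp.congr_of_eventuallyEq
    filter_upwards [eventually_gt_nhds (zero_lt_one)] with c hc
    exact hh c hc
  exact h1.unique h2

lemma fderiv_apply_eq_sum (h : (Fin n → ℝ) → ℝ) (y v : Fin n → ℝ) :
    fderiv ℝ h y v = ∑ i, v i * fderiv ℝ h y (Pi.single i 1) := by
  have hv : v = ∑ i, v i • (Pi.single i 1 : Fin n → ℝ) := by
    funext t
    simp [Finset.sum_apply, Pi.single_apply, mul_comm]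
  conv_lhs => rw [hv]
  rw [map_sum]
  exact Finset.sum_congr rfl fun i _ => by rw [map_smul]; simp

end

section
variable {n : ℕ}

lemma hasFDerivAt_beta (bv : Fin n → ℝ) (z : Fin n → ℝ) :
    HasFDerivAt (fun z : Fin n → ℝ => ∑ k, bv k * z k)
      (∑ k, bv k • ContinuousLinearMap.proj (R := ℝ) (φ := fun _ : Fin n => ℝ) k) z := by
  apply HasFDerivAt.fun_sum
  intro k _
  exact ((ContinuousLinearMap.proj (R := ℝ) (φ := fun _ : Fin n => ℝ) k).hasFDerivAt
    (x := z)).const_mul (bv k)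

lemma beta_deriv_apply (bv : Fin n → ℝ) (z : Fin n → ℝ) (i : Fin n) :
    fderiv ℝ (fun z : Fin n → ℝ => ∑ k, bv k * z k) z (Pi.single i 1) = bv i := by
  rw [(hasFDerivAt_beta bv z).fderiv]
  simp [Pi.single_apply]

lemma fderiv_cf_beta {f : (Fin n → ℝ) → ℝ} {z : Fin n → ℝ} (hfz : DifferentiableAt ℝ f z)
    (c : ℝ) (bv : Fin n → ℝ) (i : Fin n) :
    fderiv ℝ (fun w => c * f w + ∑ k, bv k * w k) z (Pi.single i 1)
      = c * fderiv ℝ f z (Pi.single i 1) + bv i := by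
  rw [fderiv_fun_add ((differentiableAt_const c).fun_mul hfz) (hasFDerivAt_beta bv z).differentiableAt]
  rw [fderiv_const_mul hfz c]
  simp [beta_deriv_apply]

lemma pdy2_cf_beta {f : (Fin n → ℝ) → ℝ} {S : Set (Fin n → ℝ)} (hS : IsOpen S)
    (hf : ContDiffOn ℝ (⊤ : ℕ∞) f S) {y : Fin n → ℝ} (hy : y ∈ S)
    (c : ℝ) (bv : Fin n → ℝ) (i j : Fin n) :
    pdy2 (fun w => c * f w + ∑ k, bv k * w k) i j y = c * pdy2 f i j y := by
  have h1 : (fun z => fderiv ℝ (fun w => c * f w + ∑ k, bv k * w k) z (Pi.single j 1))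
      =ᶠ[nhds y] (fun z => c * fderiv ℝ f z (Pi.single j 1) + bv j) := by
    filter_upwards [eventually_diff hS hf hy] with z hz
    exact fderiv_cf_beta hz c bv j
  unfold pdy2
  rw [h1.fderiv_eq]
  have dDf : DifferentiableAt ℝ (fun z => fderiv ℝ f z (Pi.single j 1)) y :=
    (contDiffAt_dapply hS hf hy _).differentiableAt (by simp)
  rw [fderiv_fun_add ((differentiableAt_const c).fun_mul dDf) (differentiableAt_const _),
    fderiv_const_mul dDf c]
  simp

lemma contDiffOn_cf_beta {f : (Fin n → ℝ) → ℝ} {S : Set (Fin n → ℝ)}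
    (hf : ContDiffOn ℝ (⊤ : ℕ∞) f S) (c : ℝ) (bv : Fin n → ℝ) :
    ContDiffOn ℝ (⊤ : ℕ∞) (fun w => c * f w + ∑ k, bv k * w k) S := by
  apply (contDiffOn_const.mul hf).add
  apply ContDiff.contDiffOn
  exact ContDiff.sum fun k _ => contDiff_const.mul (contDiff_apply ℝ ℝ k)
end

set_option maxHeartbeats 1000000 in
/-- If at a point `(x,y)` with `y ≠ 0` the fundamental tensor `g_{ij}` is positive definite
and `L*(x,y) > 0`, then the transformed fundamental tensor `g*_{ij}` is positive definite;
in particular `det(g*_{ij}) ≠ 0`. -/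
theorem randers_conformal_posdef
    {n : ℕ} (U : Set (Fin n → ℝ)) (hU : IsOpen U)
    (L : (Fin n → ℝ) → (Fin n → ℝ) → ℝ)
    (hL : ContDiffOn ℝ (⊤ : ℕ∞)
      (fun p : (Fin n → ℝ) × (Fin n → ℝ) => L p.1 p.2)
      (U ×ˢ {y : Fin n → ℝ | y ≠ 0}))
    (hLpos : ∀ x ∈ U, ∀ y : Fin n → ℝ, y ≠ 0 → 0 < L x y)
    (hLhom : ∀ x ∈ U, ∀ y : Fin n → ℝ, y ≠ 0 → ∀ c : ℝ, 0 < c →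
      L x (c • y) = c * L x y)
    (σ : (Fin n → ℝ) → ℝ) (hσ : ContDiffOn ℝ (⊤ : ℕ∞) σ U)
    (b : (Fin n → ℝ) → (Fin n → ℝ)) (hb : ContDiffOn ℝ (⊤ : ℕ∞) b U)
    (x : Fin n → ℝ) (hx : x ∈ U) (y : Fin n → ℝ) (hy : y ≠ 0)
    (hposdef : ∀ w : Fin n → ℝ, w ≠ 0 →
      0 < ∑ i, ∑ j, gten L x i j y * w i * w j)
    (hLstar : 0 < RandersChange L σ b x y) :
    (∀ w : Fin n → ℝ, w ≠ 0 →
      0 < ∑ i, ∑ j, gten (RandersChange L σ b) x i j y * w i * w j) ∧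
    (Matrix.of fun i j => gten (RandersChange L σ b) x i j y).det ≠ 0 := by
  have hS : IsOpen {z : Fin n → ℝ | z ≠ 0} := isOpen_ne
  set S : Set (Fin n → ℝ) := {z : Fin n → ℝ | z ≠ 0} with hSdef
  have hyS : y ∈ S := hy
  have hf : ContDiffOn ℝ (⊤ : ℕ∞) (fun z => L x z) S := by
    have heq : (fun z => L x z) =
        (fun p : (Fin n → ℝ) × (Fin n → ℝ) => L p.1 p.2) ∘ (fun z => (x, z)) := rfl
    rw [heq]
    exact hL.comp ((contDiff_const.prodMk contDiff_id).contDiffOn) (fun z hz => ⟨hx, hz⟩)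
  have hfy : 0 < L x y := hLpos x hx y hy
  set c : ℝ := Real.exp (σ x) with hcdef
  have hc : 0 < c := Real.exp_pos _
  set fi : Fin n → ℝ := fun i => fderiv ℝ (fun z => L x z) y (Pi.single i 1) with hfidef
  set β : ℝ := ∑ k, b x k * y k with hβdef
  have hF : RandersChange L σ b x y = c * L x y + β := rfl
  -- first fundamental tensor in terms of first and second derivatives of L x
  have G1 : ∀ i j, gten L x i j y =
      L x y * pdy2 (fun z => L x z) i j y + fi i * fi j := by
    intro i j
    have hq : (fun z => (L x z)^2) = (fun z => (fun z => L x z) z * (fun z => L x z) z) :=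
      funext fun z => pow_two (L x z)
    rw [gten, hq, pdy2_mul hS hf hf hyS i j]
    ring
  -- Euler identity: ∑ i, y i * fi i = L x y
  have E1 : ∑ i, y i * fi i = L x y := by
    have hd : DifferentiableAt ℝ (fun z => L x z) y :=
      (hf.contDiffAt (hS.mem_nhds hyS)).differentiableAt (by simp)
    have he := euler_hom hd 1 (fun c' hc' => by
      simpa using hLhom x hx y hy c' hc')
    rw [fderiv_apply_eq_sum] at he
    simpa using he
  -- contracted Euler identity for the second derivatives
  have hq2 : ContDiffOn ℝ (⊤ : ℕ∞) (fun z => (L x z)^2) S := hf.pow 2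
  have E2 : ∀ j, ∑ i, y i * pdy2 (fun z => (L x z)^2) i j y = 2 * (L x y * fi j) := by
    intro j
    set q : (Fin n → ℝ) → ℝ := fun z => (L x z)^2 with hqdef
    set h : (Fin n → ℝ) → ℝ := fun z => fderiv ℝ q z (Pi.single j 1) with hhdef
    have hdh : DifferentiableAt ℝ h y :=
      (contDiffAt_dapply hS hq2 hyS _).differentiableAt (by simp)
    -- h is positively homogeneous of degree 1
    have hom : ∀ c' : ℝ, 0 < c' → h (c' • y) = c' ^ 1 * h y := by
      intro c' hc'
      have hcy : c' • y ∈ S := by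
        simp only [hSdef, Set.mem_setOf_eq]
        exact smul_ne_zero (ne_of_gt hc') hy
      -- chain rule side
      have hqc : HasFDerivAt q (fderiv ℝ q (c' • y)) (c' • y) :=
        ((hq2.contDiffAt (hS.mem_nhds hcy)).differentiableAt (by simp)).hasFDerivAt
      have hm : HasFDerivAt (fun z : Fin n → ℝ => c' • z)
          (c' • ContinuousLinearMap.id ℝ (Fin n → ℝ)) y :=
        (ContinuousLinearMap.id ℝ (Fin n → ℝ)).hasFDerivAt.const_smul c'
      have hcomp : HasFDerivAt (fun z => q (c' • z))
          ((fderiv ℝ q (c' • y)).comp (c' • ContinuousLinearMap.id ℝ (Fin n → ℝ))) y :=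
        hqc.comp y hm
      -- scaling side
      have hqy : DifferentiableAt ℝ q y :=
        (hq2.contDiffAt (hS.mem_nhds hyS)).differentiableAt (by simp)
      have hscal : HasFDerivAt (fun z => q (c' • z)) ((c' ^ 2) • fderiv ℝ q y) y := by
        have h1 : HasFDerivAt (fun z => c' ^ 2 * q z) ((c' ^ 2) • fderiv ℝ q y) y :=
          hqy.hasFDerivAt.const_smul (c' ^ 2)
        apply h1.congr_of_eventuallyEq
        filter_upwards [hS.mem_nhds hyS] with z hz
        have := hLhom x hx z hz c' hc'
        simp only [hqdef]
        rw [this]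
        ring
      have huniq := hcomp.unique hscal
      have := congrArg (fun (T : (Fin n → ℝ) →L[ℝ] ℝ) => T (Pi.single j 1)) huniq
      simp only [ContinuousLinearMap.comp_apply, ContinuousLinearMap.smul_apply,
        ContinuousLinearMap.coe_smul', Pi.smul_apply, ContinuousLinearMap.id_apply] at this
      -- this : fderiv ℝ q (c' • y) (c' • Pi.single j 1) = c' ^ 2 * h y
      have hlin : fderiv ℝ q (c' • y) (c' • (Pi.single j 1 : Fin n → ℝ)) = c' * h (c' • y) := by
        rw [map_smul]
        simp [hhdef]
      rw [hlin] at this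
      have : h (c' • y) = c' * h y := by
        apply mul_left_cancel₀ (ne_of_gt hc')
        rw [this, smul_eq_mul]
        show c' ^ 2 * fderiv ℝ q y (Pi.single j 1) = c' * (c' * fderiv ℝ q y (Pi.single j 1))
        ring
      simpa using this
    have he := euler_hom hdh 1 hom
    rw [fderiv_apply_eq_sum] at he
    have hpd : ∀ i, fderiv ℝ h y (Pi.single i 1) = pdy2 q i j y := fun i => rfl
    simp only [hpd] at he
    -- h y = 2 * L x y * fi j
    have hhy : h y = 2 * (L x y * fi j) := by
      have hdL : DifferentiableAt ℝ (fun z => L x z) y :=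
        (hf.contDiffAt (hS.mem_nhds hyS)).differentiableAt (by simp)
      have hqm : q = fun z => (fun z => L x z) z * (fun z => L x z) z :=
        funext fun z => pow_two (L x z)
      simp only [hhdef, hqm]
      rw [fderiv_fun_mul hdL hdL]
      simp only [ContinuousLinearMap.add_apply, ContinuousLinearMap.smul_apply, smul_eq_mul]
      simp only [hfidef]
      ring
    rw [hhy] at he
    simpa using he
  -- symmetry of the fundamental tensor
  have SY : ∀ i j, gten L x i j y = gten L x j i y := by
    intro i j
    unfold gten
    rw [pdy2_symm hS hq2 hyS i j]
  -- formula for the transformed tensor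
  set C : Fin n → ℝ := fun i => c * fi i + b x i with hCdef
  have G2 : ∀ i j, gten (RandersChange L σ b) x i j y =
      (c * L x y + β) * (c * pdy2 (fun z => L x z) i j y) + C i * C j := by
    intro i j
    set g : (Fin n → ℝ) → ℝ := fun w => c * L x w + ∑ k, b x k * w k with hgdef
    have hg : ContDiffOn ℝ (⊤ : ℕ∞) g S := contDiffOn_cf_beta hf c (b x)
    have hsq : (fun z => (RandersChange L σ b x z) ^ 2) = (fun z => g z * g z) := by
      funext z
      rw [pow_two]
      rfl
    have hdL : DifferentiableAt ℝ (fun z => L x z) y :=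
      (hf.contDiffAt (hS.mem_nhds hyS)).differentiableAt (by simp)
    have hDg : ∀ i, fderiv ℝ g y (Pi.single i 1) = C i := fun i =>
      fderiv_cf_beta hdL c (b x) i
    have hPg : ∀ i j, pdy2 g i j y = c * pdy2 (fun z => L x z) i j y := fun i j =>
      pdy2_cf_beta hS hf hyS c (b x) i j
    have hgy : g y = c * L x y + β := rfl
    rw [gten, hsq, pdy2_mul hS hg hg hyS i j, hDg, hDg, hPg, hgy]
    ring
  -- combined formula
  set A : ℝ := (c * L x y + β) * c / L x y with hAdef
  have hA : 0 < A := by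
    rw [hAdef]
    have hFpos : 0 < c * L x y + β := by rw [← hF]; exact hLstar
    positivity
  have KF : ∀ i j, gten (RandersChange L σ b) x i j y =
      A * (gten L x i j y - fi i * fi j) + C i * C j := by
    intro i j
    rw [G2 i j, G1 i j, hAdef]
    field_simp
    ring
  -- contracted Euler for gten
  have E2' : ∀ j, ∑ i, y i * gten L x i j y = L x y * fi j := by
    intro j
    have h1 : ∑ i, y i * gten L x i j y
        = (1/2 : ℝ) * ∑ i, y i * pdy2 (fun z => (L x z)^2) i j y := by
      rw [Finset.mul_sum]
      refine Finset.sum_congr rfl fun i _ => ?_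
      rw [gten]
      ring
    rw [h1, E2 j]
    ring
  have T1v : ∀ v : Fin n → ℝ, ∑ i, ∑ j, gten L x i j y * y i * v j
      = L x y * ∑ j, fi j * v j := by
    intro v
    rw [Finset.sum_comm, Finset.mul_sum]
    refine Finset.sum_congr rfl fun j _ => ?_
    have : ∑ i, gten L x i j y * y i * v j = (∑ i, y i * gten L x i j y) * v j := by
      rw [Finset.sum_mul]
      exact Finset.sum_congr rfl fun i _ => by ring
    rw [this, E2' j]
    ring
  -- main positivity
  have main : ∀ w : Fin n → ℝ, w ≠ 0 →
      0 < ∑ i, ∑ j, gten (RandersChange L σ b) x i j y * w i * w j := by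
    intro w hw
    set s₀ : ℝ := ∑ i, fi i * w i with hs₀def
    set t : ℝ := ∑ i, C i * w i with htdef
    set Qw : ℝ := ∑ i, ∑ j, gten L x i j y * w i * w j with hQwdef
    -- quadratic form identity
    have QSTAR : ∑ i, ∑ j, gten (RandersChange L σ b) x i j y * w i * w j
        = A * (Qw - s₀^2) + t^2 := by
      have step1 : ∑ i, ∑ j, gten (RandersChange L σ b) x i j y * w i * w j
          = ∑ i, ∑ j, (A * (gten L x i j y * w i * w j)
              - A * ((fi i * w i) * (fi j * w j)) + (C i * w i) * (C j * w j)) := by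
        refine Finset.sum_congr rfl fun i _ => Finset.sum_congr rfl fun j _ => ?_
        rw [KF i j]
        ring
      have hmid : ∑ i, ∑ j, (fi i * w i) * (fi j * w j) = s₀ * s₀ :=
        (Finset.sum_mul_sum _ _ _ _).symm
      have htt : ∑ i, ∑ j, (C i * w i) * (C j * w j) = t * t :=
        (Finset.sum_mul_sum _ _ _ _).symm
      rw [step1]
      simp only [Finset.sum_add_distrib, Finset.sum_sub_distrib, ← Finset.mul_sum]
      rw [← Finset.sum_mul, ← Finset.sum_mul, ← hQwdef, ← hs₀def, ← htdef]
      ring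
    set lam : ℝ := s₀ / L x y with hlamdef
    set u : Fin n → ℝ := fun i => w i - lam * y i with hudef
    -- Q(u) = Qw - s₀²
    have QU : ∑ i, ∑ j, gten L x i j y * u i * u j = Qw - s₀^2 := by
      have step1 : ∑ i, ∑ j, gten L x i j y * u i * u j
          = ∑ i, ∑ j, (gten L x i j y * w i * w j
              - lam * (gten L x i j y * y i * w j)
              - lam * (gten L x i j y * w i * y j)
              + lam^2 * (gten L x i j y * y i * y j)) := by
        refine Finset.sum_congr rfl fun i _ => Finset.sum_congr rfl fun j _ => ?_
        simp only [hudef]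
        ring
      have T1 : ∑ i, ∑ j, gten L x i j y * y i * w j = L x y * s₀ := by
        rw [T1v w, hs₀def]
      have T2 : ∑ i, ∑ j, gten L x i j y * w i * y j = L x y * s₀ := by
        have hswap : ∑ i, ∑ j, gten L x i j y * w i * y j
            = ∑ j, ∑ i, gten L x j i y * y j * w i := by
          rw [Finset.sum_comm]
          exact Finset.sum_congr rfl fun j _ => Finset.sum_congr rfl fun i _ => by
            rw [SY j i]; ring
        rw [hswap, T1v w, hs₀def]
      have T3 : ∑ i, ∑ j, gten L x i j y * y i * y j = L x y * L x y := by
        rw [T1v y]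
        have : ∑ j, fi j * y j = L x y := by
          rw [← E1]
          exact Finset.sum_congr rfl fun j _ => by ring
        rw [this]
      have hlam : lam * L x y = s₀ := by
        rw [hlamdef]
        field_simp
      rw [step1]
      simp only [Finset.sum_add_distrib, Finset.sum_sub_distrib, ← Finset.mul_sum]
      rw [T1, T2, T3, ← hQwdef]
      nlinarith [hlam]
    rw [QSTAR]
    by_cases hu : u = 0
    · -- w is parallel to y
      have hwi : ∀ i, w i = lam * y i := by
        intro i
        have := congrFun hu i
        simp only [hudef, Pi.zero_apply] at this
        linarith
      have hlamne : lam ≠ 0 := by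
        intro h0
        apply hw
        funext i
        simp [hwi i, h0]
      have hQu0 : Qw - s₀^2 = 0 := by
        rw [← QU]
        simp [hu]
      have hCy : ∑ i, C i * y i = c * L x y + β := by
        have : ∑ i, C i * y i = c * (∑ i, y i * fi i) + ∑ k, b x k * y k := by
          rw [Finset.mul_sum, ← Finset.sum_add_distrib]
          exact Finset.sum_congr rfl fun i _ => by rw [hCdef]; ring
        rw [this, E1, hβdef]
      have ht : t = lam * (c * L x y + β) := by
        rw [htdef, ← hCy, Finset.mul_sum]
        exact Finset.sum_congr rfl fun i _ => by rw [hwi i]; ring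
      have hFpos : 0 < c * L x y + β := by rw [← hF]; exact hLstar
      rw [hQu0, ht]
      have h2 : 0 < (lam * (c * L x y + β)) ^ 2 := by
        rw [sq]
        exact mul_self_pos.mpr (mul_ne_zero hlamne (ne_of_gt hFpos))
      rw [mul_zero, zero_add]
      exact h2
    · have hQupos : 0 < ∑ i, ∑ j, gten L x i j y * u i * u j := hposdef u hu
      rw [QU] at hQupos
      exact add_pos_of_pos_of_nonneg (mul_pos hA hQupos) (sq_nonneg t)
  refine ⟨main, ?_⟩
  intro hdet
  obtain ⟨v, hv0, hMv⟩ := Matrix.exists_mulVec_eq_zero_iff.mpr hdet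
  have hpos := main v hv0
  have hzero : ∑ i, ∑ j, gten (RandersChange L σ b) x i j y * v i * v j = 0 := by
    have : ∀ i, ∑ j, gten (RandersChange L σ b) x i j y * v i * v j
        = v i * (Matrix.mulVec (Matrix.of fun i j => gten (RandersChange L σ b) x i j y) v) i := by
      intro i
      simp only [Matrix.mulVec, dotProduct, Matrix.of_apply, Finset.mul_sum]
      exact Finset.sum_congr rfl fun j _ => by ring
    rw [Finset.sum_congr rfl fun i _ => this i]
    simp [hMv]
  rw [hzero] at hpos
  exact lt_irrefl 0 hpos
end

section
/- Fix (x,y) with y ≠ 0 and let N ∈ ℝⁿ satisfy Σ_{i,j} g_{ij} N^i N^j = 1 and Σ_{i,j} g_{ij} y^i N^j = 0. Then Σ_{i,j} g*_{ij} N^i N^j = τ + (Σ_i b_i N^i)², where g*_{ij} = ½ ∂̇_i∂̇_j (L*²) and τ = e^{σ} L*/L. -/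
open Real

/-- The factor `τ = e^{σ} L*/L` of the Randers conformal change. -/
noncomputable def tauRC {n : ℕ} (L : (Fin n → ℝ) → (Fin n → ℝ) → ℝ)
    (σ : (Fin n → ℝ) → ℝ) (b : (Fin n → ℝ) → (Fin n → ℝ))
    (x y : Fin n → ℝ) : ℝ :=
  Real.exp (σ x) * RandersChange L σ b x y / L x y

namespace RCaux

variable {n : ℕ}

lemma hVopen : IsOpen {z : Fin n → ℝ | z ≠ 0} := isOpen_ne

lemma top1 : ((⊤:ℕ∞) : WithTop ℕ∞) + 1 ≤ ((⊤:ℕ∞) : WithTop ℕ∞) := by norm_num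

lemma top2 : ((⊤:ℕ∞) : WithTop ℕ∞) ≠ 0 := by simp

lemma clm_expand (T : (Fin n → ℝ) →L[ℝ] ℝ) (w : Fin n → ℝ) :
    T w = ∑ j, w j * T (Pi.single j 1) := by
  conv_lhs => rw [← Finset.univ_sum_single w]
  rw [map_sum]
  refine Finset.sum_congr rfl fun j _ => ?_
  have h : Pi.single j (w j) = w j • (Pi.single j 1 : Fin n → ℝ) := by
    funext k
    simp [Pi.single_apply, mul_ite]
  rw [h, map_smul, smul_eq_mul]

lemma lin_hasFDeriv (c : Fin n → ℝ) (z : Fin n → ℝ) :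
    HasFDerivAt (fun z : Fin n → ℝ => ∑ j, c j * z j)
      (∑ j, c j • ContinuousLinearMap.proj (R := ℝ) (φ := fun _ : Fin n => ℝ) j) z := by
  apply HasFDerivAt.fun_sum
  intro j _
  exact ((ContinuousLinearMap.proj (R := ℝ) (φ := fun _ : Fin n => ℝ) j).hasFDerivAt).const_mul
    (c j)

lemma lin_clm_apply (c v : Fin n → ℝ) :
    (∑ j, c j • ContinuousLinearMap.proj (R := ℝ) (φ := fun _ : Fin n => ℝ) j) v
      = ∑ j, c j * v j := by
  simp [ContinuousLinearMap.sum_apply]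

lemma lin_contDiff (c : Fin n → ℝ) :
    ContDiff ℝ ((⊤:ℕ∞) : WithTop ℕ∞) (fun z : Fin n → ℝ => ∑ j, c j * z j) :=
  ContDiff.sum fun j _ => contDiff_const.mul
    ((ContinuousLinearMap.proj (R := ℝ) (φ := fun _ : Fin n => ℝ) j).contDiff)

/-- Contraction of `pdy2` with two vectors equals a double directional derivative. -/
lemma contract (g : (Fin n → ℝ) → ℝ) (y v w : Fin n → ℝ)
    (hg : DifferentiableAt ℝ (fderiv ℝ g) y) :
    ∑ i, ∑ j, pdy2 g i j y * v i * w j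
      = fderiv ℝ (fun z => fderiv ℝ g z w) y v := by
  have hdj : ∀ u : Fin n → ℝ, DifferentiableAt ℝ (fun z => fderiv ℝ g z u) y :=
    fun u => hg.clm_apply (differentiableAt_const u)
  have hw : (fun z => fderiv ℝ g z w)
      = fun z => ∑ j, w j * fderiv ℝ g z (Pi.single j 1) := by
    funext z; exact clm_expand _ w
  rw [hw, fderiv_fun_sum (fun j _ => (hdj (Pi.single j 1)).const_mul (w j)),
    ContinuousLinearMap.sum_apply]
  have hterm : ∀ j : Fin n,
      (fderiv ℝ (fun z => w j * fderiv ℝ g z (Pi.single j 1)) y) v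
        = w j * ∑ i, v i * pdy2 g i j y := by
    intro j
    rw [fderiv_const_mul (hdj _) (w j), ContinuousLinearMap.smul_apply, smul_eq_mul,
      clm_expand (fderiv ℝ (fun z => fderiv ℝ g z (Pi.single j 1)) y) v]
    rfl
  simp only [hterm]
  rw [Finset.sum_comm]
  refine Finset.sum_congr rfl fun j _ => ?_
  rw [Finset.mul_sum]
  refine Finset.sum_congr rfl fun i _ => ?_
  ring

variable {f : (Fin n → ℝ) → ℝ}

lemma hfAt (hf : ContDiffOn ℝ (⊤:ℕ∞) f {z : Fin n → ℝ | z ≠ 0}) {z : Fin n → ℝ}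
    (hz : z ≠ 0) : ContDiffAt ℝ (⊤:ℕ∞) f z :=
  hf.contDiffAt (hVopen.mem_nhds hz)

lemma hfDiff (hf : ContDiffOn ℝ (⊤:ℕ∞) f {z : Fin n → ℝ | z ≠ 0}) {z : Fin n → ℝ}
    (hz : z ≠ 0) : DifferentiableAt ℝ f z :=
  (hfAt hf hz).differentiableAt top2

lemma hDfDiff (hf : ContDiffOn ℝ (⊤:ℕ∞) f {z : Fin n → ℝ | z ≠ 0}) {z : Fin n → ℝ}
    (hz : z ≠ 0) : DifferentiableAt ℝ (fderiv ℝ f) z :=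
  (((hfAt hf hz).fderiv_right top1).differentiableAt top2)

/-- Degree-0 homogeneity of the derivative of a 1-homogeneous function. -/
lemma fderiv_homog (hf : ContDiffOn ℝ (⊤:ℕ∞) f {z : Fin n → ℝ | z ≠ 0})
    (hhom : ∀ z : Fin n → ℝ, z ≠ 0 → ∀ c : ℝ, 0 < c → f (c • z) = c * f z)
    {y : Fin n → ℝ} (hy : y ≠ 0) {c : ℝ} (hc : 0 < c) :
    fderiv ℝ f (c • y) = fderiv ℝ f y := by
  have hcy : c • y ≠ 0 := smul_ne_zero (ne_of_gt hc) hy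
  have hsm : HasFDerivAt (fun z : Fin n → ℝ => c • z)
      (c • ContinuousLinearMap.id ℝ (Fin n → ℝ)) y :=
    (hasFDerivAt_id y).const_smul c
  have h1 : HasFDerivAt (fun z => f (c • z))
      ((fderiv ℝ f (c • y)).comp (c • ContinuousLinearMap.id ℝ (Fin n → ℝ))) y :=
    (hfDiff hf hcy).hasFDerivAt.comp y hsm
  have h2 : (fun z => f (c • z)) =ᶠ[nhds y] fun z => c * f z := by
    filter_upwards [hVopen.mem_nhds hy] with z hz
    exact hhom z hz c hc
  have h3 : HasFDerivAt (fun z => c * f z)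
      ((fderiv ℝ f (c • y)).comp (c • ContinuousLinearMap.id ℝ (Fin n → ℝ))) y :=
    h1.congr_of_eventuallyEq h2.symm
  have h4 : HasFDerivAt (fun z => c * f z) (c • fderiv ℝ f y) y :=
    (hfDiff hf hy).hasFDerivAt.const_mul c
  have h5 := h3.unique h4
  ext v
  have h6 := congrFun (congrArg DFunLike.coe h5) v
  simp only [ContinuousLinearMap.coe_comp', Function.comp_apply,
    ContinuousLinearMap.smul_apply, ContinuousLinearMap.coe_id', id_eq,
    map_smul, smul_eq_mul] at h6
  exact mul_left_cancel₀ (ne_of_gt hc) h6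

/-- Euler's identity. -/
lemma euler (hf : ContDiffOn ℝ (⊤:ℕ∞) f {z : Fin n → ℝ | z ≠ 0})
    (hhom : ∀ z : Fin n → ℝ, z ≠ 0 → ∀ c : ℝ, 0 < c → f (c • z) = c * f z)
    {y : Fin n → ℝ} (hy : y ≠ 0) : fderiv ℝ f y y = f y := by
  have hray : HasDerivAt (fun t : ℝ => t • y) y 1 := by
    simpa using (hasDerivAt_id (1:ℝ)).smul_const y
  have hy1 : HasFDerivAt f (fderiv ℝ f y) ((1:ℝ) • y) := by
    rw [one_smul]; exact (hfDiff hf hy).hasFDerivAt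
  have h1 : HasDerivAt (fun t : ℝ => f (t • y)) (fderiv ℝ f y y) 1 :=
    hy1.comp_hasDerivAt 1 hray
  have h2 : (fun t : ℝ => f (t • y)) =ᶠ[nhds 1] fun t => t * f y := by
    filter_upwards [isOpen_Ioi.mem_nhds (by norm_num : (0:ℝ) < 1)] with t ht
    exact hhom y hy t ht
  have h3 : HasDerivAt (fun t : ℝ => t * f y) (fderiv ℝ f y y) 1 :=
    h1.congr_of_eventuallyEq h2.symm
  have h4 : HasDerivAt (fun t : ℝ => t * f y) (f y) 1 := by
    simpa using (hasDerivAt_id (1:ℝ)).mul_const (f y)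
  exact h3.unique h4

/-- Second Euler identity: `y` in the outer slot kills the second derivative. -/
lemma euler2 (hf : ContDiffOn ℝ (⊤:ℕ∞) f {z : Fin n → ℝ | z ≠ 0})
    (hhom : ∀ z : Fin n → ℝ, z ≠ 0 → ∀ c : ℝ, 0 < c → f (c • z) = c * f z)
    {y : Fin n → ℝ} (hy : y ≠ 0) (w : Fin n → ℝ) :
    fderiv ℝ (fun z => fderiv ℝ f z w) y y = 0 := by
  have hdg : DifferentiableAt ℝ (fun z => fderiv ℝ f z w) y :=
    (hDfDiff hf hy).clm_apply (differentiableAt_const w)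
  have hray : HasDerivAt (fun t : ℝ => t • y) y 1 := by
    simpa using (hasDerivAt_id (1:ℝ)).smul_const y
  have hy1 : HasFDerivAt (fun z => fderiv ℝ f z w)
      (fderiv ℝ (fun z => fderiv ℝ f z w) y) ((1:ℝ) • y) := by
    rw [one_smul]; exact hdg.hasFDerivAt
  have h1 : HasDerivAt (fun t : ℝ => fderiv ℝ f (t • y) w)
      (fderiv ℝ (fun z => fderiv ℝ f z w) y y) 1 := by
    have := hy1.comp_hasDerivAt 1 hray; exact this
  have h2 : (fun t : ℝ => fderiv ℝ f (t • y) w) =ᶠ[nhds 1]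
      fun _ => fderiv ℝ f y w := by
    filter_upwards [isOpen_Ioi.mem_nhds (by norm_num : (0:ℝ) < 1)] with t ht
    rw [fderiv_homog hf hhom hy ht]
  have h3 : HasDerivAt (fun _ : ℝ => fderiv ℝ f y w)
      (fderiv ℝ (fun z => fderiv ℝ f z w) y y) 1 :=
    h1.congr_of_eventuallyEq h2.symm
  exact h3.unique (hasDerivAt_const 1 _)

/-- The key second-derivative formula for `(s f + β)²`. -/
lemma key (hf : ContDiffOn ℝ (⊤:ℕ∞) f {z : Fin n → ℝ | z ≠ 0})
    {y : Fin n → ℝ} (hy : y ≠ 0) (s : ℝ) (c v w : Fin n → ℝ) :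
    fderiv ℝ (fun z => fderiv ℝ (fun u => (s * f u + ∑ j, c j * u j) ^ 2) z w) y v
      = 2 * ((s * fderiv ℝ f y v + ∑ j, c j * v j)
            * (s * fderiv ℝ f y w + ∑ j, c j * w j)
          + (s * f y + ∑ j, c j * y j)
            * (s * fderiv ℝ (fun z => fderiv ℝ f z w) y v)) := by
  set Cβ : (Fin n → ℝ) →L[ℝ] ℝ :=
    ∑ j, c j • ContinuousLinearMap.proj (R := ℝ) (φ := fun _ : Fin n => ℝ) j with hCβ
  have hF : ∀ z : Fin n → ℝ, z ≠ 0 →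
      HasFDerivAt (fun u => s * f u + ∑ j, c j * u j) (s • fderiv ℝ f z + Cβ) z :=
    fun z hz => ((hfDiff hf hz).hasFDerivAt.const_mul s).add (lin_hasFDeriv c z)
  have hG : ∀ z : Fin n → ℝ, z ≠ 0 →
      HasFDerivAt (fun u => (s * f u + ∑ j, c j * u j) ^ 2)
        ((s * f z + ∑ j, c j * z j) • (s • fderiv ℝ f z + Cβ)
          + (s * f z + ∑ j, c j * z j) • (s • fderiv ℝ f z + Cβ)) z := by
    intro z hz
    have h := (hF z hz).mul (hF z hz)
    have heq : (fun u => (s * f u + ∑ j, c j * u j) ^ 2)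
        = fun u => (s * f u + ∑ j, c j * u j) * (s * f u + ∑ j, c j * u j) := by
      funext u; ring
    rw [heq]
    exact h
  have hev : (fun z => fderiv ℝ (fun u => (s * f u + ∑ j, c j * u j) ^ 2) z w)
      =ᶠ[nhds y] fun z => (2 * (s * f z + ∑ j, c j * z j))
        * (s * fderiv ℝ f z w + ∑ j, c j * w j) := by
    filter_upwards [hVopen.mem_nhds hy] with z hz
    rw [(hG z hz).fderiv]
    simp only [ContinuousLinearMap.add_apply, ContinuousLinearMap.smul_apply,
      smul_eq_mul, hCβ, lin_clm_apply]
    ring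
  rw [hev.fderiv_eq]
  have hDw : DifferentiableAt ℝ (fun z => fderiv ℝ f z w) y :=
    (hDfDiff hf hy).clm_apply (differentiableAt_const w)
  have h1 : HasFDerivAt (fun z : Fin n → ℝ => 2 * (s * f z + ∑ j, c j * z j))
      ((2:ℝ) • (s • fderiv ℝ f y + Cβ)) y := (hF y hy).const_mul 2
  have h2 : HasFDerivAt (fun z : Fin n → ℝ => s * fderiv ℝ f z w + ∑ j, c j * w j)
      (s • fderiv ℝ (fun z => fderiv ℝ f z w) y) y :=
    (hDw.hasFDerivAt.const_mul s).add_const _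
  have h3 : HasFDerivAt (fun z : Fin n → ℝ => (2 * (s * f z + ∑ j, c j * z j))
        * (s * fderiv ℝ f z w + ∑ j, c j * w j))
      ((2 * (s * f y + ∑ j, c j * y j)) • (s • fderiv ℝ (fun z => fderiv ℝ f z w) y)
        + (s * fderiv ℝ f y w + ∑ j, c j * w j) • ((2:ℝ) • (s • fderiv ℝ f y + Cβ))) y :=
    h1.mul h2
  rw [h3.fderiv, ContinuousLinearMap.add_apply]
  simp only [ContinuousLinearMap.smul_apply, ContinuousLinearMap.add_apply,
    smul_eq_mul, hCβ, lin_clm_apply]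
  ring

end RCaux

/-- If `N` is a `g`-unit vector `g`-orthogonal to `y`, then
`g*_{ij} N^i N^j = τ + (b_i N^i)²`. -/
theorem randers_conformal_normal_norm
    {n : ℕ} (U : Set (Fin n → ℝ)) (hU : IsOpen U)
    (L : (Fin n → ℝ) → (Fin n → ℝ) → ℝ)
    (hL : ContDiffOn ℝ (⊤ : ℕ∞)
      (fun p : (Fin n → ℝ) × (Fin n → ℝ) => L p.1 p.2)
      (U ×ˢ {y : Fin n → ℝ | y ≠ 0}))
    (hLpos : ∀ x ∈ U, ∀ y : Fin n → ℝ, y ≠ 0 → 0 < L x y)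
    (hLhom : ∀ x ∈ U, ∀ y : Fin n → ℝ, y ≠ 0 → ∀ c : ℝ, 0 < c →
      L x (c • y) = c * L x y)
    (σ : (Fin n → ℝ) → ℝ) (hσ : ContDiffOn ℝ (⊤ : ℕ∞) σ U)
    (b : (Fin n → ℝ) → (Fin n → ℝ)) (hb : ContDiffOn ℝ (⊤ : ℕ∞) b U)
    (x : Fin n → ℝ) (hx : x ∈ U) (y : Fin n → ℝ) (hy : y ≠ 0)
    (N : Fin n → ℝ)
    (hN1 : ∑ i, ∑ j, gten L x i j y * N i * N j = 1)
    (hN2 : ∑ i, ∑ j, gten L x i j y * y i * N j = 0) :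
    ∑ i, ∑ j, gten (RandersChange L σ b) x i j y * N i * N j
      = tauRC L σ b x y + (∑ i, b x i * N i) ^ 2 := by
  classical
  -- smoothness of `f := L x ·` on the punctured space
  have hfAt : ∀ z : Fin n → ℝ, z ≠ 0 → ContDiffAt ℝ (⊤:ℕ∞) (fun z => L x z) z := by
    intro z hz
    have hmem : ((x, z) : (Fin n → ℝ) × (Fin n → ℝ)) ∈ U ×ˢ {y : Fin n → ℝ | y ≠ 0} :=
      ⟨hx, hz⟩
    have h1 : ContDiffAt ℝ (⊤:ℕ∞) (fun p : (Fin n → ℝ) × (Fin n → ℝ) => L p.1 p.2) (x, z) :=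
      hL.contDiffAt ((hU.prod RCaux.hVopen).mem_nhds hmem)
    exact h1.comp z (ContDiffAt.prodMk contDiffAt_const contDiffAt_id)
  have hf : ContDiffOn ℝ (⊤:ℕ∞) (fun z => L x z) {z : Fin n → ℝ | z ≠ 0} :=
    fun z hz => (hfAt z hz).contDiffWithinAt
  have hhom : ∀ z : Fin n → ℝ, z ≠ 0 → ∀ c : ℝ, 0 < c →
      (fun z => L x z) (c • z) = c * (fun z => L x z) z :=
    fun z hz c hc => hLhom x hx z hz c hc
  have hLy : 0 < L x y := hLpos x hx y hy
  have hL0 : L x y ≠ 0 := ne_of_gt hLy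
  set s : ℝ := Real.exp (σ x) with hs
  -- simplification of the canonical forms
  have efun : (fun u : Fin n → ℝ => ((1:ℝ) * L x u + ∑ j, (0:ℝ) * u j) ^ 2)
      = fun u => L x u ^ 2 := by
    funext u; simp
  have e1 : (fun z => (RandersChange L σ b x z) ^ 2)
      = fun u => (s * L x u + ∑ j, b x j * u j) ^ 2 := by
    funext u
    simp only [RandersChange, hs]
  -- differentiability of the gradients of both squared Lagrangians at y
  have hdG0 : DifferentiableAt ℝ (fderiv ℝ (fun u => L x u ^ 2)) y := by
    have hAt : ContDiffAt ℝ (⊤:ℕ∞) (fun u => L x u ^ 2) y := (hfAt y hy).pow 2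
    exact (hAt.fderiv_right RCaux.top1).differentiableAt RCaux.top2
  have hdG1 : DifferentiableAt ℝ
      (fderiv ℝ (fun u => (s * L x u + ∑ j, b x j * u j) ^ 2)) y := by
    have hAt : ContDiffAt ℝ (⊤:ℕ∞) (fun u => (s * L x u + ∑ j, b x j * u j) ^ 2) y :=
      ((contDiffAt_const.mul (hfAt y hy)).add
        ((RCaux.lin_contDiff (b x)).contDiffAt)).pow 2
    exact (hAt.fderiv_right RCaux.top1).differentiableAt RCaux.top2
  -- translate hN1 into a statement about the double directional derivative
  have hc1 : fderiv ℝ (fun z => fderiv ℝ (fun u => L x u ^ 2) z N) y N = 2 := by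
    rw [← RCaux.contract (fun u => L x u ^ 2) y N N hdG0]
    calc ∑ i, ∑ j, pdy2 (fun u => L x u ^ 2) i j y * N i * N j
        = ∑ i, ∑ j, 2 * (gten L x i j y * N i * N j) := by
          refine Finset.sum_congr rfl fun i _ => Finset.sum_congr rfl fun j _ => ?_
          rw [gten]; ring
      _ = 2 := by simp_rw [← Finset.mul_sum]; rw [hN1, mul_one]
  have hc2 : fderiv ℝ (fun z => fderiv ℝ (fun u => L x u ^ 2) z N) y y = 0 := by
    rw [← RCaux.contract (fun u => L x u ^ 2) y y N hdG0]
    calc ∑ i, ∑ j, pdy2 (fun u => L x u ^ 2) i j y * y i * N j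
        = ∑ i, ∑ j, 2 * (gten L x i j y * y i * N j) := by
          refine Finset.sum_congr rfl fun i _ => Finset.sum_congr rfl fun j _ => ?_
          rw [gten]; ring
      _ = 0 := by simp_rw [← Finset.mul_sum]; rw [hN2, mul_zero]
  -- instantiate the key formula for the base metric
  have hk1 : fderiv ℝ (fun z => fderiv ℝ
        (fun u => ((1:ℝ) * L x u + ∑ j, (0:ℝ) * u j) ^ 2) z N) y N
      = 2 * (((1:ℝ) * fderiv ℝ (fun z => L x z) y N + ∑ j, (0:ℝ) * N j)
            * ((1:ℝ) * fderiv ℝ (fun z => L x z) y N + ∑ j, (0:ℝ) * N j)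
          + ((1:ℝ) * L x y + ∑ j, (0:ℝ) * y j)
            * ((1:ℝ) * fderiv ℝ (fun z => fderiv ℝ (fun z => L x z) z N) y N)) :=
    RCaux.key hf hy 1 0 N N
  have hk2 : fderiv ℝ (fun z => fderiv ℝ
        (fun u => ((1:ℝ) * L x u + ∑ j, (0:ℝ) * u j) ^ 2) z N) y y
      = 2 * (((1:ℝ) * fderiv ℝ (fun z => L x z) y y + ∑ j, (0:ℝ) * y j)
            * ((1:ℝ) * fderiv ℝ (fun z => L x z) y N + ∑ j, (0:ℝ) * N j)
          + ((1:ℝ) * L x y + ∑ j, (0:ℝ) * y j)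
            * ((1:ℝ) * fderiv ℝ (fun z => fderiv ℝ (fun z => L x z) z N) y y)) :=
    RCaux.key hf hy 1 0 y N
  rw [efun] at hk1 hk2
  rw [hc1] at hk1
  rw [hc2] at hk2
  have heuler : fderiv ℝ (fun z => L x z) y y = L x y :=
    RCaux.euler hf hhom hy
  have heuler2 : fderiv ℝ (fun z => fderiv ℝ (fun z => L x z) z N) y y = 0 :=
    RCaux.euler2 hf hhom hy N
  rw [heuler, heuler2] at hk2
  simp only [one_mul, zero_mul, Finset.sum_const_zero, add_zero, mul_zero] at hk1 hk2
  -- deduce D N = 0 and L x y * H N N = 1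
  have hDN0 : fderiv ℝ (fun z => L x z) y N = 0 := by
    have h : L x y * fderiv ℝ (fun z => L x z) y N = 0 := by linarith
    exact (mul_eq_zero.mp h).resolve_left hL0
  have hH1 : L x y * fderiv ℝ (fun z => fderiv ℝ (fun z => L x z) z N) y N = 1 := by
    rw [hDN0] at hk1
    nlinarith [hk1]
  -- compute the left-hand side
  have hc3 : ∑ i, ∑ j, gten (RandersChange L σ b) x i j y * N i * N j
      = (1/2) * fderiv ℝ (fun z => fderiv ℝ
          (fun u => (s * L x u + ∑ j, b x j * u j) ^ 2) z N) y N := by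
    rw [← RCaux.contract _ y N N hdG1, Finset.mul_sum]
    refine Finset.sum_congr rfl fun i _ => ?_
    rw [Finset.mul_sum]
    refine Finset.sum_congr rfl fun j _ => ?_
    rw [gten, e1]; ring
  have hk3 : fderiv ℝ (fun z => fderiv ℝ
        (fun u => (s * L x u + ∑ j, b x j * u j) ^ 2) z N) y N
      = 2 * ((s * fderiv ℝ (fun z => L x z) y N + ∑ j, b x j * N j)
            * (s * fderiv ℝ (fun z => L x z) y N + ∑ j, b x j * N j)
          + (s * L x y + ∑ j, b x j * y j)
            * (s * fderiv ℝ (fun z => fderiv ℝ (fun z => L x z) z N) y N)) :=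
    RCaux.key hf hy s (b x) N N
  rw [hc3, hk3, hDN0]
  rw [tauRC, RandersChange, ← hs]
  have hH2 : fderiv ℝ (fun z => fderiv ℝ (fun z => L x z) z N) y N = 1 / L x y := by
    rw [eq_div_iff hL0]; linarith [hH1]
  rw [hH2]
  field_simp
  ring
end

section
/- Fix (x,y) with y ≠ 0 and suppose L*(x,y) > 0. Let B_1, …, B_{n−1}, N ∈ ℝⁿ and v ∈ ℝ^{n−1} satisfy y = Σ_α v^α B_α, Σ_{i,j} g_{ij} B_α^i N^j = 0 for every α, and Σ_{i,j} g_{ij} N^i N^j = 1, and set N* = N / √(τ + (Σ_i b_i N^i)²). Then: (1) Σ_{i,j} g*_{ij} N*^i N*^j = 1; and (2) Σ_{i,j} g*_{ij} B_α^i N*^j = 0 for every α if and only if Σ_i b_i N^i = 0, in which case N* = N/√τ. In particular, if N* is g*-orthogonal to the tangent frame then the covector b is tangential (b_i N^i = 0). -/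
open Real Filter Topology

lemma hasFDerivAt_linsum {n : ℕ} (a : Fin n → ℝ) (z : Fin n → ℝ) :
    HasFDerivAt (fun w : Fin n → ℝ => ∑ j, a j * w j)
      (∑ j, a j • (ContinuousLinearMap.proj j : ((Fin n → ℝ)) →L[ℝ] ℝ)) z := by
  apply HasFDerivAt.fun_sum
  intro j _
  exact ((a j • (ContinuousLinearMap.proj j : ((Fin n → ℝ)) →L[ℝ] ℝ)).hasFDerivAt (x := z))

lemma linsum_apply_single {n : ℕ} (a : Fin n → ℝ) (i : Fin n) :
    (∑ j, a j • (ContinuousLinearMap.proj j : ((Fin n → ℝ)) →L[ℝ] ℝ)) (Pi.single i 1) = a i := by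
  simp [ContinuousLinearMap.sum_apply, Pi.single_apply]

lemma pdy2_sq {n : ℕ} (φ : (Fin n → ℝ) → ℝ) (y : Fin n → ℝ) (hφ : ContDiffAt ℝ 2 φ y) (i j : Fin n) :
    pdy2 (fun z => (φ z)^2) i j y =
      2 * (φ y * pdy2 φ i j y +
        fderiv ℝ φ y (Pi.single i 1) * fderiv ℝ φ y (Pi.single j 1)) := by
  have hev : ∀ᶠ z in 𝓝 y, ContDiffAt ℝ 2 φ z := hφ.eventually (by simp)
  have h1 : (fun z => fderiv ℝ (fun w => (φ w)^2) z (Pi.single j 1))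
      =ᶠ[𝓝 y] fun z => 2 * φ z * fderiv ℝ φ z (Pi.single j 1) := by
    filter_upwards [hev] with z hz
    have hd : DifferentiableAt ℝ φ z := hz.differentiableAt (by norm_num)
    have h2 : (fun w => (φ w)^2) = fun w => φ w * φ w := by funext w; ring
    rw [h2, (hd.hasFDerivAt.fun_mul hd.hasFDerivAt).fderiv]
    simp; ring
  have hD : DifferentiableAt ℝ (fun z => fderiv ℝ φ z (Pi.single j 1)) y := by
    have h3 : ContDiffAt ℝ 1 (fderiv ℝ φ) y := hφ.fderiv_right (by norm_num)
    exact (h3.differentiableAt one_ne_zero).clm_apply (differentiableAt_const _)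
  have hφd : DifferentiableAt ℝ φ y := hφ.differentiableAt (by norm_num)
  have hmul := ((hφd.hasFDerivAt.const_mul (2:ℝ)).fun_mul hD.hasFDerivAt).fderiv
  unfold pdy2
  rw [h1.fderiv_eq]
  rw [hmul]
  simp [pdy2]
  ring

lemma pdy2_affine_sq {n : ℕ} (φ : (Fin n → ℝ) → ℝ) (y : Fin n → ℝ)
    (hφev : ∀ᶠ z in 𝓝 y, ContDiffAt ℝ 2 φ z) (c : ℝ) (a : Fin n → ℝ) (i j : Fin n) :
    pdy2 (fun z => (c * φ z + ∑ k, a k * z k)^2) i j y =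
      2 * ((c * φ y + ∑ k, a k * y k) * (c * pdy2 φ i j y)
        + (c * fderiv ℝ φ y (Pi.single i 1) + a i) * (c * fderiv ℝ φ y (Pi.single j 1) + a j)) := by
  have hφy : ContDiffAt ℝ 2 φ y := hφev.self_of_nhds
  have hlin : ContDiff ℝ 2 (fun z : Fin n → ℝ => ∑ k, a k * z k) := by
    apply ContDiff.sum; intro k _
    exact contDiff_const.mul ((ContinuousLinearMap.proj k : ((Fin n → ℝ)) →L[ℝ] ℝ).contDiff)
  have hψ : ContDiffAt ℝ 2 (fun z => c * φ z + ∑ k, a k * z k) y :=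
    (contDiffAt_const.mul hφy).add hlin.contDiffAt
  have hsq := pdy2_sq (fun z => c * φ z + ∑ k, a k * z k) y hψ i j
  have hfd : ∀ z, ContDiffAt ℝ 2 φ z → fderiv ℝ (fun z => c * φ z + ∑ k, a k * z k) z
      = c • fderiv ℝ φ z + ∑ k, a k • (ContinuousLinearMap.proj k : ((Fin n → ℝ)) →L[ℝ] ℝ) := by
    intro z hz
    have hd : DifferentiableAt ℝ φ z := hz.differentiableAt (by norm_num)
    exact ((hd.hasFDerivAt.const_mul c).add (hasFDerivAt_linsum a z)).fderiv
  have hDψ : ∀ k, fderiv ℝ (fun z => c * φ z + ∑ k, a k * z k) y (Pi.single k 1)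
      = c * fderiv ℝ φ y (Pi.single k 1) + a k := by
    intro k; rw [hfd y hφy]; simp [linsum_apply_single, Pi.single_apply]
  have hpd : pdy2 (fun z => c * φ z + ∑ k, a k * z k) i j y = c * pdy2 φ i j y := by
    have hev : (fun z => fderiv ℝ (fun w => c * φ w + ∑ k, a k * w k) z (Pi.single j 1))
        =ᶠ[𝓝 y] fun z => c * fderiv ℝ φ z (Pi.single j 1) + a j := by
      filter_upwards [hφev] with z hz
      rw [hfd z hz]; simp [linsum_apply_single, Pi.single_apply]
    have hD : DifferentiableAt ℝ (fun z => fderiv ℝ φ z (Pi.single j 1)) y := by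
      have h3 : ContDiffAt ℝ 1 (fderiv ℝ φ) y := hφy.fderiv_right (by norm_num)
      exact (h3.differentiableAt one_ne_zero).clm_apply (differentiableAt_const _)
    unfold pdy2
    rw [hev.fderiv_eq, ((hD.hasFDerivAt.const_mul c).add_const (a j)).fderiv]
    simp [pdy2]
  rw [hsq, hpd, hDψ i, hDψ j]

lemma sum_split {n : ℕ} (e : ℝ) (A : Fin n → Fin n → ℝ) (p q u w : Fin n → ℝ) :
    ∑ i, ∑ j, (e * A i j + p i * q j) * u i * w j
      = e * (∑ i, ∑ j, A i j * u i * w j) + (∑ i, p i * u i) * (∑ j, q j * w j) := by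
  have h : ∀ (i j : Fin n), (e * A i j + p i * q j) * u i * w j
      = e * (A i j * u i * w j) + (p i * u i) * (q j * w j) := fun i j => by ring
  simp_rw [h, Finset.sum_add_distrib, ← Finset.mul_sum, ← Finset.sum_mul]

lemma sum_frame {n m : ℕ} (A : Fin n → Fin n → ℝ) (v : Fin m → ℝ) (B : Fin m → Fin n → ℝ)
    (w : Fin n → ℝ) :
    ∑ i, ∑ j, A i j * (∑ α, v α * B α i) * w j = ∑ α, v α * ∑ i, ∑ j, A i j * B α i * w j := by
  have h : ∀ i j, A i j * (∑ α, v α * B α i) * w j = ∑ α, v α * (A i j * B α i * w j) := by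
    intro i j
    rw [Finset.mul_sum, Finset.sum_mul]
    exact Finset.sum_congr rfl fun α _ => by ring
  simp_rw [h]
  rw [show (∑ i, ∑ j, ∑ α, v α * (A i j * B α i * w j))
      = ∑ i, ∑ α, ∑ j, v α * (A i j * B α i * w j) from
    Finset.sum_congr rfl fun i _ => Finset.sum_comm, Finset.sum_comm]
  simp_rw [← Finset.mul_sum]

lemma sum_frame1 {n m : ℕ} (p : Fin n → ℝ) (v : Fin m → ℝ) (B : Fin m → Fin n → ℝ) :
    ∑ i, p i * (∑ α, v α * B α i) = ∑ α, v α * ∑ i, p i * B α i := by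
  have h : ∀ i, p i * (∑ α, v α * B α i) = ∑ α, v α * (p i * B α i) := by
    intro i
    rw [Finset.mul_sum]
    exact Finset.sum_congr rfl fun α _ => by ring
  simp_rw [h]
  rw [Finset.sum_comm]
  simp_rw [← Finset.mul_sum]

lemma euler1 {n : ℕ} (φ : (Fin n → ℝ) → ℝ) (y : Fin n → ℝ)
    (hdiff : DifferentiableAt ℝ φ y)
    (hhom : ∀ t : ℝ, 0 < t → φ (t • y) = t * φ y) :
    fderiv ℝ φ y y = φ y := by
  have hs : HasDerivAt (fun t : ℝ => t • y) y 1 := by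
    simpa using (hasDerivAt_id (1:ℝ)).smul_const y
  have h1 : HasDerivAt (fun t : ℝ => φ (t • y)) (fderiv ℝ φ y y) 1 := by
    have hF : HasFDerivAt φ (fderiv ℝ φ y) ((fun t : ℝ => t • y) 1) := by
      simpa using hdiff.hasFDerivAt
    exact hF.comp_hasDerivAt 1 hs
  have h2 : HasDerivAt (fun t : ℝ => t * φ y) (φ y) 1 := by
    simpa using (hasDerivAt_id (1:ℝ)).mul_const (φ y)
  have heq : (fun t : ℝ => t * φ y) =ᶠ[nhds (1:ℝ)] fun t => φ (t • y) := by
    filter_upwards [eventually_gt_nhds one_pos] with t ht using (hhom t ht).symm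
  exact (h1.congr_of_eventuallyEq heq).unique h2

lemma fderiv_homog {n : ℕ} (φ : (Fin n → ℝ) → ℝ) (y : Fin n → ℝ)
    (hhom : ∀ t : ℝ, 0 < t → ∀ z : Fin n → ℝ, z ≠ 0 → φ (t • z) = t * φ z)
    (t : ℝ) (ht : 0 < t) (hy : y ≠ 0)
    (hdy : DifferentiableAt ℝ φ y) (hdty : DifferentiableAt ℝ φ (t • y)) :
    fderiv ℝ φ (t • y) = fderiv ℝ φ y := by
  have hsmul : HasFDerivAt (fun z : Fin n → ℝ => t • z)
      (t • ContinuousLinearMap.id ℝ (Fin n → ℝ)) y :=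
    ((ContinuousLinearMap.id ℝ (Fin n → ℝ)).hasFDerivAt).const_smul t
  have hcomp : HasFDerivAt (fun z : Fin n → ℝ => φ (t • z))
      ((fderiv ℝ φ (t • y)).comp (t • ContinuousLinearMap.id ℝ (Fin n → ℝ))) y :=
    HasFDerivAt.comp y hdty.hasFDerivAt hsmul
  have hmul : HasFDerivAt (fun z : Fin n → ℝ => t * φ z) (t • fderiv ℝ φ y) y :=
    hdy.hasFDerivAt.const_mul t
  have heq : (fun z : Fin n → ℝ => t * φ z) =ᶠ[nhds y] fun z => φ (t • z) := by
    filter_upwards [isOpen_ne.eventually_mem hy] with z hz using (hhom t ht z hz).symm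
  have huniq : (fderiv ℝ φ (t • y)).comp (t • ContinuousLinearMap.id ℝ (Fin n → ℝ))
      = t • fderiv ℝ φ y :=
    (hcomp.congr_of_eventuallyEq heq).unique hmul
  ext w
  have := congrArg (fun (L : (Fin n → ℝ) →L[ℝ] ℝ) => L w) huniq
  simp only [ContinuousLinearMap.comp_apply, ContinuousLinearMap.smul_apply,
    ContinuousLinearMap.id_apply, map_smul, smul_eq_mul] at this
  exact mul_left_cancel₀ (ne_of_gt ht) this

lemma euler0 {n : ℕ} (φ : (Fin n → ℝ) → ℝ) (y : Fin n → ℝ) (hy : y ≠ 0)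
    (hφev : ∀ᶠ z in 𝓝 y, ContDiffAt ℝ 2 φ z)
    (hhom : ∀ t : ℝ, 0 < t → ∀ z : Fin n → ℝ, z ≠ 0 → φ (t • z) = t * φ z) (j : Fin n) :
    fderiv ℝ (fun z => fderiv ℝ φ z (Pi.single j 1)) y y = 0 := by
  have hφy : ContDiffAt ℝ 2 φ y := hφev.self_of_nhds
  have hdy : DifferentiableAt ℝ φ y := hφy.differentiableAt (by norm_num)
  have hD : DifferentiableAt ℝ (fun z => fderiv ℝ φ z (Pi.single j 1)) y := by
    have h3 : ContDiffAt ℝ 1 (fderiv ℝ φ) y := hφy.fderiv_right (by norm_num)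
    exact (h3.differentiableAt one_ne_zero).clm_apply (differentiableAt_const _)
  have hs : HasDerivAt (fun t : ℝ => t • y) y 1 := by
    simpa using (hasDerivAt_id (1:ℝ)).smul_const y
  have h1 : HasDerivAt (fun t : ℝ => fderiv ℝ φ (t • y) (Pi.single j 1))
      (fderiv ℝ (fun z => fderiv ℝ φ z (Pi.single j 1)) y y) 1 := by
    have hF : HasFDerivAt (fun z => fderiv ℝ φ z (Pi.single j 1))
        (fderiv ℝ (fun z => fderiv ℝ φ z (Pi.single j 1)) y) ((fun t : ℝ => t • y) 1) := by
      simpa using hD.hasFDerivAt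
    exact hF.comp_hasDerivAt 1 hs
  have hcont : ContinuousAt (fun t : ℝ => t • y) 1 := by fun_prop
  have hmem : ∀ᶠ t : ℝ in 𝓝 1, ContDiffAt ℝ 2 φ (t • y) := by
    have := hcont.preimage_mem_nhds (t := {z | ContDiffAt ℝ 2 φ z})
      (by show {z | ContDiffAt ℝ 2 φ z} ∈ 𝓝 ((1:ℝ) • y); rw [one_smul]; exact hφev)
    exact this
  have heq : (fun t : ℝ => fderiv ℝ φ (t • y) (Pi.single j 1))
      =ᶠ[𝓝 (1:ℝ)] fun _ => fderiv ℝ φ y (Pi.single j 1) := by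
    filter_upwards [eventually_gt_nhds one_pos, hmem] with t ht hmt
    rw [fderiv_homog φ y hhom t ht hy hdy (hmt.differentiableAt (by norm_num))]
  have h2 : HasDerivAt (fun _ : ℝ => fderiv ℝ φ y (Pi.single j 1))
      (0 : ℝ) 1 := hasDerivAt_const _ _
  exact (h1.congr_of_eventuallyEq heq.symm).unique h2

lemma clm_apply_sum {n : ℕ} (T : (Fin n → ℝ) →L[ℝ] ℝ) (w : Fin n → ℝ) :
    T w = ∑ k, T (Pi.single k 1) * w k := by
  have hrep : ∑ k, w k • (Pi.single k (1:ℝ) : Fin n → ℝ) = w := by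
    funext i
    simp [Finset.sum_apply, Pi.single_apply]
  conv_lhs => rw [← hrep]
  rw [map_sum]
  exact Finset.sum_congr rfl fun k _ => by rw [map_smul]; simp [mul_comm]


/-- If `N` is a `g`-unit normal to a tangent frame `B_1, …, B_{n-1}` whose span contains the
supporting element `y`, and `N* = N / √(τ + (b_i N^i)²)`, then `N*` is a `g*`-unit vector;
moreover `N*` is `g*`-orthogonal to the frame iff `b_i N^i = 0`, in which case
`N* = N/√τ`. -/
theorem randers_conformal_unit_normal
    {n : ℕ} (U : Set (Fin n → ℝ)) (hU : IsOpen U)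
    (L : (Fin n → ℝ) → (Fin n → ℝ) → ℝ)
    (hL : ContDiffOn ℝ (⊤ : ℕ∞)
      (fun p : (Fin n → ℝ) × (Fin n → ℝ) => L p.1 p.2)
      (U ×ˢ {y : Fin n → ℝ | y ≠ 0}))
    (hLpos : ∀ x ∈ U, ∀ y : Fin n → ℝ, y ≠ 0 → 0 < L x y)
    (hLhom : ∀ x ∈ U, ∀ y : Fin n → ℝ, y ≠ 0 → ∀ c : ℝ, 0 < c →
      L x (c • y) = c * L x y)
    (σ : (Fin n → ℝ) → ℝ) (hσ : ContDiffOn ℝ (⊤ : ℕ∞) σ U)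
    (b : (Fin n → ℝ) → (Fin n → ℝ)) (hb : ContDiffOn ℝ (⊤ : ℕ∞) b U)
    (x : Fin n → ℝ) (hx : x ∈ U) (y : Fin n → ℝ) (hy : y ≠ 0)
    (hLstar : 0 < RandersChange L σ b x y)
    (B : Fin (n - 1) → (Fin n → ℝ)) (v : Fin (n - 1) → ℝ)
    (hyB : y = fun i => ∑ α, v α * B α i)
    (N : Fin n → ℝ)
    (hN1 : ∀ α, ∑ i, ∑ j, gten L x i j y * B α i * N j = 0)
    (hN2 : ∑ i, ∑ j, gten L x i j y * N i * N j = 1)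
    (Nstar : Fin n → ℝ)
    (hNstar : Nstar = fun i =>
      N i / Real.sqrt (tauRC L σ b x y + (∑ k, b x k * N k) ^ 2)) :
    (∑ i, ∑ j, gten (RandersChange L σ b) x i j y * Nstar i * Nstar j = 1) ∧
    ((∀ α, ∑ i, ∑ j, gten (RandersChange L σ b) x i j y * B α i * Nstar j = 0) ↔
      ∑ i, b x i * N i = 0) ∧
    (∑ i, b x i * N i = 0 →
      Nstar = fun i => N i / Real.sqrt (tauRC L σ b x y)) := by
  -- Step A : smoothness of f := L x ·
  have hfC : ∀ z : Fin n → ℝ, z ≠ 0 → ContDiffAt ℝ 2 (fun w => L x w) z := by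
    intro z hz
    have hopen : IsOpen (U ×ˢ {w : Fin n → ℝ | w ≠ 0}) := hU.prod isOpen_ne
    have hmem : (x, z) ∈ U ×ˢ {w : Fin n → ℝ | w ≠ 0} := ⟨hx, hz⟩
    have h1 : ContDiffAt ℝ (⊤ : ℕ∞) (fun p : (Fin n → ℝ) × (Fin n → ℝ) => L p.1 p.2) (x, z) :=
      hL.contDiffAt (hopen.mem_nhds hmem)
    have h2 : ContDiffAt ℝ (⊤ : ℕ∞) (fun w : Fin n → ℝ => ((x, w) : (Fin n → ℝ) × (Fin n → ℝ))) z :=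
      ContDiffAt.prodMk contDiffAt_const contDiffAt_id
    exact (h1.comp z h2).of_le (by exact WithTop.coe_le_coe.mpr le_top)
  have hfev : ∀ᶠ z in 𝓝 y, ContDiffAt ℝ 2 (fun w => L x w) z := by
    filter_upwards [isOpen_ne.eventually_mem hy] with z hz using hfC z hz
  have hfy : ContDiffAt ℝ 2 (fun w => L x w) y := hfev.self_of_nhds
  have hF : 0 < L x y := hLpos x hx y hy
  have hGy : RandersChange L σ b x y = Real.exp (σ x) * L x y + ∑ k, b x k * y k := rfl
  have hyw : ∀ i, y i = ∑ α, v α * B α i := fun i => by rw [hyB]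
  -- Step B : formulas for both metric tensors
  have hgL : ∀ i j, gten L x i j y = L x y * pdy2 (fun w => L x w) i j y
      + fderiv ℝ (fun w => L x w) y (Pi.single i 1) * fderiv ℝ (fun w => L x w) y (Pi.single j 1) := by
    intro i j
    have h : pdy2 (fun z => (L x z)^2) i j y
        = 2 * ((L x y) * pdy2 (fun w => L x w) i j y
          + fderiv ℝ (fun w => L x w) y (Pi.single i 1)
            * fderiv ℝ (fun w => L x w) y (Pi.single j 1)) :=
      pdy2_sq (fun w => L x w) y hfy i j
    unfold gten
    rw [h]; ring
  have hgS : ∀ i j, gten (RandersChange L σ b) x i j y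
      = (RandersChange L σ b x y * Real.exp (σ x)) * pdy2 (fun w => L x w) i j y
      + (Real.exp (σ x) * fderiv ℝ (fun w => L x w) y (Pi.single i 1) + b x i)
        * (Real.exp (σ x) * fderiv ℝ (fun w => L x w) y (Pi.single j 1) + b x j) := by
    intro i j
    have h : pdy2 (fun z => (Real.exp (σ x) * L x z + ∑ k, b x k * z k)^2) i j y
        = 2 * ((Real.exp (σ x) * L x y + ∑ k, b x k * y k)
            * (Real.exp (σ x) * pdy2 (fun w => L x w) i j y)
          + (Real.exp (σ x) * fderiv ℝ (fun w => L x w) y (Pi.single i 1) + b x i)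
            * (Real.exp (σ x) * fderiv ℝ (fun w => L x w) y (Pi.single j 1) + b x j)) :=
      pdy2_affine_sq (fun w => L x w) y hfev (Real.exp (σ x)) (b x) i j
    unfold gten
    rw [show (fun z => (RandersChange L σ b x z)^2)
        = (fun z => (Real.exp (σ x) * L x z + ∑ k, b x k * z k)^2) from rfl]
    rw [h, hGy]; ring
  -- Step C : Euler identities
  have hE1 : ∑ k, fderiv ℝ (fun w => L x w) y (Pi.single k 1) * y k = L x y := by
    have hhom : ∀ t : ℝ, 0 < t → (fun w => L x w) (t • y) = t * (fun w => L x w) y :=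
      fun t ht => hLhom x hx y hy t ht
    have h := euler1 (fun w => L x w) y (hfy.differentiableAt (by norm_num)) hhom
    rw [← clm_apply_sum (fderiv ℝ (fun w => L x w) y) y, h]
  have hE2 : ∀ j, ∑ k, pdy2 (fun w => L x w) k j y * y k = 0 := by
    intro j
    have hhom : ∀ t : ℝ, 0 < t → ∀ z : Fin n → ℝ, z ≠ 0 →
        (fun w => L x w) (t • z) = t * (fun w => L x w) z :=
      fun t ht z hz => hLhom x hx z hz t ht
    have h := euler0 (fun w => L x w) y hy hfev hhom j
    unfold pdy2
    rw [← clm_apply_sum (fderiv ℝ (fun z => fderiv ℝ (fun w => L x w) z (Pi.single j 1)) y) y, h]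
  -- Step D : contractions
  have hsplitL : ∀ u w : Fin n → ℝ, ∑ i, ∑ j, gten L x i j y * u i * w j
      = L x y * (∑ i, ∑ j, pdy2 (fun w' => L x w') i j y * u i * w j)
        + (∑ i, fderiv ℝ (fun w' => L x w') y (Pi.single i 1) * u i)
          * (∑ j, fderiv ℝ (fun w' => L x w') y (Pi.single j 1) * w j) := by
    intro u w
    simp_rw [hgL]
    exact sum_split (L x y) (fun i j => pdy2 (fun w' => L x w') i j y)
      (fun i => fderiv ℝ (fun w' => L x w') y (Pi.single i 1))
      (fun j => fderiv ℝ (fun w' => L x w') y (Pi.single j 1)) u w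
  have hsplitS : ∀ u w : Fin n → ℝ, ∑ i, ∑ j, gten (RandersChange L σ b) x i j y * u i * w j
      = (RandersChange L σ b x y * Real.exp (σ x))
          * (∑ i, ∑ j, pdy2 (fun w' => L x w') i j y * u i * w j)
        + (∑ i, (Real.exp (σ x) * fderiv ℝ (fun w' => L x w') y (Pi.single i 1) + b x i) * u i)
          * (∑ j, (Real.exp (σ x) * fderiv ℝ (fun w' => L x w') y (Pi.single j 1) + b x j) * w j) := by
    intro u w
    simp_rw [hgS]
    exact sum_split (RandersChange L σ b x y * Real.exp (σ x))
      (fun i j => pdy2 (fun w' => L x w') i j y)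
      (fun i => Real.exp (σ x) * fderiv ℝ (fun w' => L x w') y (Pi.single i 1) + b x i)
      (fun j => Real.exp (σ x) * fderiv ℝ (fun w' => L x w') y (Pi.single j 1) + b x j) u w
  -- fij contracted with y in the first slot vanishes
  have hT : ∑ i, ∑ j, pdy2 (fun w' => L x w') i j y * y i * N j = 0 := by
    rw [Finset.sum_comm]
    apply Finset.sum_eq_zero
    intro j _
    have h1 : ∑ i, pdy2 (fun w' => L x w') i j y * y i * N j
        = (∑ i, pdy2 (fun w' => L x w') i j y * y i) * N j := (Finset.sum_mul _ _ _).symm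
    rw [h1, hE2 j, zero_mul]
  -- g(y, N) = 0
  have hyN : ∑ i, ∑ j, gten L x i j y * y i * N j = 0 := by
    simp_rw [hyw]
    rw [sum_frame]
    simp [hN1]
  -- P = 0
  have hP : ∑ i, fderiv ℝ (fun w' => L x w') y (Pi.single i 1) * N i = 0 := by
    have h := hsplitL y N
    rw [hyN, hT, hE1, mul_zero, zero_add] at h
    exact (mul_eq_zero.mp h.symm).resolve_left (ne_of_gt hF)
  -- M = 1 / L x y
  have hM : ∑ i, ∑ j, pdy2 (fun w' => L x w') i j y * N i * N j = 1 / L x y := by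
    have h := hsplitL N N
    rw [hN2, hP, mul_zero, add_zero] at h
    field_simp at h ⊢
    linarith
  -- T_α = 0
  have hTB : ∀ α, ∑ i, ∑ j, pdy2 (fun w' => L x w') i j y * B α i * N j = 0 := by
    intro α
    have h := hsplitL (B α) N
    rw [hN1 α, hP, mul_zero, add_zero] at h
    exact (mul_eq_zero.mp h.symm).resolve_left (ne_of_gt hF)
  -- the modified first factors contracted with N
  have hpN : ∑ j, (Real.exp (σ x) * fderiv ℝ (fun w' => L x w') y (Pi.single j 1) + b x j) * N j
      = ∑ k, b x k * N k := by
    simp_rw [add_mul, Finset.sum_add_distrib, mul_assoc, ← Finset.mul_sum]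
    rw [hP, mul_zero, zero_add]
  -- g*(N, N) = τ + Q²
  have hSNN : ∑ i, ∑ j, gten (RandersChange L σ b) x i j y * N i * N j
      = tauRC L σ b x y + (∑ k, b x k * N k)^2 := by
    rw [hsplitS N N, hM, hpN]
    have hτ : tauRC L σ b x y = Real.exp (σ x) * RandersChange L σ b x y / L x y := rfl
    rw [hτ]
    field_simp
  -- g*(B α, N) = (∑ p_i B α i) * Q
  have hSBN : ∀ α, ∑ i, ∑ j, gten (RandersChange L σ b) x i j y * B α i * N j
      = (∑ i, (Real.exp (σ x) * fderiv ℝ (fun w' => L x w') y (Pi.single i 1) + b x i) * B α i)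
        * (∑ k, b x k * N k) := by
    intro α
    rw [hsplitS (B α) N, hTB α, hpN, mul_zero, zero_add]
  -- ∑ α v α * (∑ p_i B α i) = L*
  have hvp : ∑ α, v α * (∑ i, (Real.exp (σ x) * fderiv ℝ (fun w' => L x w') y (Pi.single i 1) + b x i) * B α i)
      = RandersChange L σ b x y := by
    rw [← sum_frame1 (fun i => Real.exp (σ x) * fderiv ℝ (fun w' => L x w') y (Pi.single i 1) + b x i) v B]
    simp_rw [← hyw]
    rw [hGy]
    simp_rw [add_mul, Finset.sum_add_distrib, mul_assoc, ← Finset.mul_sum]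
    rw [hE1]
  -- positivity
  have hτpos : 0 < tauRC L σ b x y := by
    have hτ : tauRC L σ b x y = Real.exp (σ x) * RandersChange L σ b x y / L x y := rfl
    rw [hτ]
    exact div_pos (mul_pos (Real.exp_pos _) hLstar) hF
  have hQpos : 0 < tauRC L σ b x y + (∑ k, b x k * N k)^2 :=
    add_pos_of_pos_of_nonneg hτpos (sq_nonneg _)
  have hspos : 0 < Real.sqrt (tauRC L σ b x y + (∑ k, b x k * N k)^2) :=
    Real.sqrt_pos.mpr hQpos
  have hss : Real.sqrt (tauRC L σ b x y + (∑ k, b x k * N k)^2)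
      * Real.sqrt (tauRC L σ b x y + (∑ k, b x k * N k)^2)
      = tauRC L σ b x y + (∑ k, b x k * N k)^2 := Real.mul_self_sqrt (le_of_lt hQpos)
  have hNs : ∀ i, Nstar i
      = N i / Real.sqrt (tauRC L σ b x y + (∑ k, b x k * N k)^2) := fun i => by rw [hNstar]
  -- Goal 1
  have goal1 : ∑ i, ∑ j, gten (RandersChange L σ b) x i j y * Nstar i * Nstar j = 1 := by
    simp_rw [hNs, div_eq_mul_inv]
    have h : ∀ i j : Fin n, gten (RandersChange L σ b) x i j y
        * (N i * (Real.sqrt (tauRC L σ b x y + (∑ k, b x k * N k)^2))⁻¹)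
        * (N j * (Real.sqrt (tauRC L σ b x y + (∑ k, b x k * N k)^2))⁻¹)
        = gten (RandersChange L σ b) x i j y * N i * N j
          * ((Real.sqrt (tauRC L σ b x y + (∑ k, b x k * N k)^2)
            * Real.sqrt (tauRC L σ b x y + (∑ k, b x k * N k)^2))⁻¹) := by
      intro i j
      rw [mul_inv]
      ring
    simp_rw [h, ← Finset.sum_mul]
    rw [hSNN, hss, mul_inv_cancel₀ (ne_of_gt hQpos)]
  -- Frame contraction with Nstar
  have hBNs : ∀ α, ∑ i, ∑ j, gten (RandersChange L σ b) x i j y * B α i * Nstar j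
      = ((∑ i, (Real.exp (σ x) * fderiv ℝ (fun w' => L x w') y (Pi.single i 1) + b x i) * B α i)
          * (∑ k, b x k * N k))
        * (Real.sqrt (tauRC L σ b x y + (∑ k, b x k * N k)^2))⁻¹ := by
    intro α
    simp_rw [hNs, div_eq_mul_inv]
    have h : ∀ i j : Fin n, gten (RandersChange L σ b) x i j y * B α i
        * (N j * (Real.sqrt (tauRC L σ b x y + (∑ k, b x k * N k)^2))⁻¹)
        = gten (RandersChange L σ b) x i j y * B α i * N j
          * (Real.sqrt (tauRC L σ b x y + (∑ k, b x k * N k)^2))⁻¹ := fun i j => by ring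
    simp_rw [h, ← Finset.sum_mul]
    rw [hSBN α]
  refine ⟨goal1, ⟨?_, ?_⟩, ?_⟩
  · -- forward direction
    intro h
    have h2 : ∀ α, (∑ i, (Real.exp (σ x) * fderiv ℝ (fun w' => L x w') y (Pi.single i 1) + b x i) * B α i)
        * (∑ k, b x k * N k) = 0 := by
      intro α
      have h3 := (hBNs α).symm.trans (h α)
      rcases mul_eq_zero.mp h3 with h4 | h4
      · exact h4
      · exact absurd h4 (inv_ne_zero (ne_of_gt hspos))
    have h5 : (∑ α, v α * (∑ i, (Real.exp (σ x) * fderiv ℝ (fun w' => L x w') y (Pi.single i 1) + b x i) * B α i))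
        * (∑ k, b x k * N k) = 0 := by
      rw [Finset.sum_mul]
      apply Finset.sum_eq_zero
      intro α _
      rw [mul_assoc, h2 α, mul_zero]
    rw [hvp] at h5
    exact (mul_eq_zero.mp h5).resolve_left (ne_of_gt hLstar)
  · -- backward direction
    intro hQ α
    rw [hBNs α, hQ, mul_zero, zero_mul]
  · -- Goal 3
    intro hQ
    rw [hNstar, hQ]
    norm_num
end

section
/- Fix (x,y) with y ≠ 0 and let N ∈ ℝⁿ satisfy Σ_{i,j} g_{ij} y^i N^j = 0 and Σ_i b_i N^i = 0, and assume τ > 0. Then the g*-covariant components of N* = N/√τ satisfy N*_i := Σ_j g*_{ij} N*^j = √τ N_i, where N_i = Σ_j g_{ij} N^j, g*_{ij} = ½ ∂̇_i∂̇_j (L*²), and τ = e^{σ} L*/L. -/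
open Real

/-- Evaluation of a continuous linear functional as a sum over coordinates. -/
lemma clm_eval_sum {n : ℕ} (T : (Fin n → ℝ) →L[ℝ] ℝ) (y : Fin n → ℝ) :
    T y = ∑ i, y i * T (Pi.single i 1) := by
  have hy : y = ∑ i, y i • (Pi.single i (1:ℝ) : Fin n → ℝ) := by
    funext k
    simp [Finset.sum_apply, Pi.single_apply]
  calc T y = T (∑ i, y i • (Pi.single i (1:ℝ) : Fin n → ℝ)) := by rw [← hy]
    _ = ∑ i, y i * T (Pi.single i 1) := by rw [map_sum]; simp

/-- The second `y`-derivatives of `(a f + B)²`. -/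
lemma key_pdy2 {n : ℕ} {f : (Fin n → ℝ) → ℝ} {y : Fin n → ℝ} (hy : y ≠ 0)
    (hfd : ∀ z : Fin n → ℝ, z ≠ 0 → DifferentiableAt ℝ f z)
    (hfd2 : ∀ j : Fin n, DifferentiableAt ℝ (fun z => fderiv ℝ f z (Pi.single j 1)) y)
    (a : ℝ) (B : (Fin n → ℝ) →L[ℝ] ℝ) (i j : Fin n) :
    pdy2 (fun z => (a * f z + B z) ^ 2) i j y
      = 2 * ((a * fderiv ℝ f y (Pi.single i 1) + B (Pi.single i 1)) *
             (a * fderiv ℝ f y (Pi.single j 1) + B (Pi.single j 1)))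
        + 2 * ((a * f y + B y) * (a * pdy2 f i j y)) := by
  have hVnhds : {z : Fin n → ℝ | z ≠ 0} ∈ nhds y := isOpen_ne.mem_nhds hy
  have hu : ∀ z : Fin n → ℝ, z ≠ 0 →
      HasFDerivAt (fun w => a * f w + B w) (a • fderiv ℝ f z + B) z :=
    fun z hz => ((hfd z hz).hasFDerivAt.const_mul a).add B.hasFDerivAt
  have hev : (fun z => fderiv ℝ (fun w => (a * f w + B w) ^ 2) z (Pi.single j 1))
      =ᶠ[nhds y] (fun z => 2 * ((a * f z + B z) *
          (a * fderiv ℝ f z (Pi.single j 1) + B (Pi.single j 1)))) := by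
    filter_upwards [hVnhds] with z hz
    have hsq : HasFDerivAt (fun w => (a * f w + B w) ^ 2)
        ((a * f z + B z) • (a • fderiv ℝ f z + B)
          + (a * f z + B z) • (a • fderiv ℝ f z + B)) z := by
      simpa [sq] using (hu z hz).fun_mul (hu z hz)
    rw [hsq.fderiv]
    simp only [ContinuousLinearMap.add_apply, ContinuousLinearMap.smul_apply, smul_eq_mul]
    ring
  have hq : HasFDerivAt (fun z => a * fderiv ℝ f z (Pi.single j 1) + B (Pi.single j 1))
      (a • fderiv ℝ (fun z => fderiv ℝ f z (Pi.single j 1)) y) y :=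
    ((hfd2 j).hasFDerivAt.const_mul a).add_const _
  have hp : HasFDerivAt (fun z => a * f z + B z) (a • fderiv ℝ f y + B) y := hu y hy
  have hpq : HasFDerivAt (fun z => 2 * ((a * f z + B z) *
      (a * fderiv ℝ f z (Pi.single j 1) + B (Pi.single j 1))))
      ((2:ℝ) • ((a * f y + B y) • (a • fderiv ℝ (fun z => fderiv ℝ f z (Pi.single j 1)) y)
        + (a * fderiv ℝ f y (Pi.single j 1) + B (Pi.single j 1)) • (a • fderiv ℝ f y + B))) y :=
    (hp.mul hq).const_mul 2
  show fderiv ℝ (fun z => fderiv ℝ (fun w => (a * f w + B w) ^ 2) z (Pi.single j 1)) y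
      (Pi.single i 1) = _
  rw [hev.fderiv_eq, hpq.fderiv]
  show (2:ℝ) * ((a * f y + B y) * (a * fderiv ℝ (fun z => fderiv ℝ f z (Pi.single j 1)) y
      (Pi.single i 1)) + (a * fderiv ℝ f y (Pi.single j 1) + B (Pi.single j 1))
        * (a * fderiv ℝ f y (Pi.single i 1) + B (Pi.single i 1))) = _
  show _ = 2 * _ + 2 * ((a * f y + B y) * (a * fderiv ℝ (fun z => fderiv ℝ f z (Pi.single j 1))
      y (Pi.single i 1)))
  ring

/-- For a vector `N` that is `g`-orthogonal to `y` and annihilated by `b`, the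
`g*`-covariant components of `N* = N/√τ` are `N*_i = √τ N_i`. -/
theorem randers_conformal_covariant_normal
    {n : ℕ} (U : Set (Fin n → ℝ)) (hU : IsOpen U)
    (L : (Fin n → ℝ) → (Fin n → ℝ) → ℝ)
    (hL : ContDiffOn ℝ (⊤ : ℕ∞)
      (fun p : (Fin n → ℝ) × (Fin n → ℝ) => L p.1 p.2)
      (U ×ˢ {y : Fin n → ℝ | y ≠ 0}))
    (hLpos : ∀ x ∈ U, ∀ y : Fin n → ℝ, y ≠ 0 → 0 < L x y)
    (hLhom : ∀ x ∈ U, ∀ y : Fin n → ℝ, y ≠ 0 → ∀ c : ℝ, 0 < c →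
      L x (c • y) = c * L x y)
    (σ : (Fin n → ℝ) → ℝ) (hσ : ContDiffOn ℝ (⊤ : ℕ∞) σ U)
    (b : (Fin n → ℝ) → (Fin n → ℝ)) (hb : ContDiffOn ℝ (⊤ : ℕ∞) b U)
    (x : Fin n → ℝ) (hx : x ∈ U) (y : Fin n → ℝ) (hy : y ≠ 0)
    (N : Fin n → ℝ)
    (hN : ∑ i, ∑ j, gten L x i j y * y i * N j = 0)
    (hbN : ∑ i, b x i * N i = 0)
    (htau : 0 < tauRC L σ b x y) :
    ∀ i : Fin n,
      ∑ j, gten (RandersChange L σ b) x i j y * (N j / Real.sqrt (tauRC L σ b x y))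
        = Real.sqrt (tauRC L σ b x y) * ∑ j, gten L x i j y * N j := by
  classical
  set f : (Fin n → ℝ) → ℝ := fun z => L x z with hfdef
  have hVopen : IsOpen {z : Fin n → ℝ | z ≠ 0} := isOpen_ne
  have hVnhds : {z : Fin n → ℝ | z ≠ 0} ∈ nhds y := hVopen.mem_nhds hy
  -- smoothness of the slice z ↦ L x z
  have hfC : ContDiffOn ℝ (⊤ : ℕ∞) f {z : Fin n → ℝ | z ≠ 0} := by
    have h1 : ContDiffOn ℝ (⊤ : ℕ∞) (fun z : Fin n → ℝ => (x, z))
        {z : Fin n → ℝ | z ≠ 0} := (contDiff_const.prodMk contDiff_id).contDiffOn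
    exact hL.comp h1 (fun z hz => ⟨hx, hz⟩)
  have hfz : ∀ z : Fin n → ℝ, z ≠ 0 → ContDiffAt ℝ (⊤ : ℕ∞) f z := fun z hz =>
    hfC.contDiffAt (hVopen.mem_nhds hz)
  have hfd : ∀ z : Fin n → ℝ, z ≠ 0 → DifferentiableAt ℝ f z := fun z hz =>
    (hfz z hz).differentiableAt (by simp)
  have hfy' : ContDiffAt ℝ (⊤ : ℕ∞) (fun z => fderiv ℝ f z) y :=
    (hfz y hy).fderiv_right (by simp)
  have hhdiff : ∀ j : Fin n, DifferentiableAt ℝ (fun z => fderiv ℝ f z (Pi.single j 1)) y :=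
    fun j => (hfy'.differentiableAt (by simp)).clm_apply (differentiableAt_const _)
  have hfypos : 0 < f y := hLpos x hx y hy
  have hhom : ∀ z : Fin n → ℝ, z ≠ 0 → ∀ c : ℝ, 0 < c → f (c • z) = c * f z := fun z hz c hc =>
    hLhom x hx z hz c hc
  -- Euler: ⟨df(y), y⟩ = f(y)
  have hγ : HasDerivAt (fun c : ℝ => c • y) y 1 := by
    simpa using (hasDerivAt_id (1:ℝ)).smul_const y
  have euler1 : fderiv ℝ f y y = f y := by
    have h1 : HasDerivAt (fun c : ℝ => f (c • y)) (fderiv ℝ f y y) 1 := by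
      exact (hfd y hy).hasFDerivAt.comp_hasDerivAt_of_eq 1 hγ (by simp)
    have h2 : HasDerivAt (fun c : ℝ => f (c • y)) (f y) 1 := by
      have heq : (fun c : ℝ => f (c • y)) =ᶠ[nhds 1] (fun c : ℝ => c * f y) := by
        filter_upwards [Ioi_mem_nhds (zero_lt_one)] with c hc
        exact hhom y hy c hc
      have h3 : HasDerivAt (fun c : ℝ => c * f y) (f y) 1 := by
        simpa using (hasDerivAt_id (1:ℝ)).mul_const (f y)
      exact h3.congr_of_eventuallyEq heq
    exact h1.unique h2
  -- df is homogeneous of degree 0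
  have hscale : ∀ c : ℝ, 0 < c → ∀ v, fderiv ℝ f (c • y) v = fderiv ℝ f y v := by
    intro c hc v
    have hcy : c • y ≠ 0 := smul_ne_zero (ne_of_gt hc) hy
    have hm : HasFDerivAt (fun z : Fin n → ℝ => c • z)
        (c • ContinuousLinearMap.id ℝ (Fin n → ℝ)) y :=
      ((ContinuousLinearMap.id ℝ (Fin n → ℝ)).hasFDerivAt (x := y)).const_smul c
    have h1 : HasFDerivAt (fun z : Fin n → ℝ => f (c • z))
        ((fderiv ℝ f (c • y)).comp (c • ContinuousLinearMap.id ℝ (Fin n → ℝ))) y :=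
      ((hfd _ hcy).hasFDerivAt).comp y hm
    have h2 : HasFDerivAt (fun z : Fin n → ℝ => c * f z) (c • fderiv ℝ f y) y :=
      (hfd y hy).hasFDerivAt.const_mul c
    have heq : (fun z : Fin n → ℝ => f (c • z)) =ᶠ[nhds y] (fun z => c * f z) := by
      filter_upwards [hVnhds] with z hz
      exact hhom z hz c hc
    have h4 := h1.unique (h2.congr_of_eventuallyEq heq)
    have h5 : fderiv ℝ f (c • y) (c • v) = c * fderiv ℝ f y v := by
      have := congrArg (fun (T : (Fin n → ℝ) →L[ℝ] ℝ) => T v) h4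
      simpa using this
    have h6 : fderiv ℝ f (c • y) (c • v) = c * fderiv ℝ f (c • y) v := by
      simp
    exact mul_left_cancel₀ (ne_of_gt hc) (h6.symm.trans h5)
  -- Euler for the degree-0 function ∂_j f
  have euler0 : ∀ j : Fin n, fderiv ℝ (fun z => fderiv ℝ f z (Pi.single j 1)) y y = 0 := by
    intro j
    have h1 : HasDerivAt (fun c : ℝ => fderiv ℝ f (c • y) (Pi.single j 1))
        (fderiv ℝ (fun z => fderiv ℝ f z (Pi.single j 1)) y y) 1 :=
      (hhdiff j).hasFDerivAt.comp_hasDerivAt_of_eq 1 hγ (by simp)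
    have h2 : HasDerivAt (fun c : ℝ => fderiv ℝ f (c • y) (Pi.single j 1)) 0 1 := by
      have heq : (fun c : ℝ => fderiv ℝ f (c • y) (Pi.single j 1))
          =ᶠ[nhds 1] (fun _ : ℝ => fderiv ℝ f y (Pi.single j 1)) := by
        filter_upwards [Ioi_mem_nhds (zero_lt_one)] with c hc
        exact hscale c hc (Pi.single j 1)
      exact (hasDerivAt_const 1 _).congr_of_eventuallyEq heq
    exact h1.unique h2
  -- the linear form β as a CLM
  set B : (Fin n → ℝ) →L[ℝ] ℝ :=
    ∑ k, b x k • (ContinuousLinearMap.proj k : (Fin n → ℝ) →L[ℝ] ℝ) with hBdef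
  have hBapp : ∀ z : Fin n → ℝ, B z = ∑ k, b x k * z k := by
    intro z
    simp [hBdef, ContinuousLinearMap.sum_apply, ContinuousLinearMap.smul_apply,
      ContinuousLinearMap.proj_apply, smul_eq_mul]
  have hBej : ∀ j : Fin n, B (Pi.single j 1) = b x j := by
    intro j
    rw [hBapp]
    simp [Pi.single_apply]
  -- the two metric tensors
  have hg : ∀ i j : Fin n, gten L x i j y
      = fderiv ℝ f y (Pi.single i 1) * fderiv ℝ f y (Pi.single j 1) + f y * pdy2 f i j y := by
    intro i j
    have hone : (fun z => (L x z) ^ 2)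
        = fun z => ((1:ℝ) * f z + (0 : (Fin n → ℝ) →L[ℝ] ℝ) z) ^ 2 := by
      funext z; simp [hfdef]
    rw [gten, hone, key_pdy2 hy hfd hhdiff 1 (0 : (Fin n → ℝ) →L[ℝ] ℝ) i j]
    simp
    ring
  have hgs : ∀ i j : Fin n, gten (RandersChange L σ b) x i j y
      = (Real.exp (σ x) * fderiv ℝ f y (Pi.single i 1) + b x i)
        * (Real.exp (σ x) * fderiv ℝ f y (Pi.single j 1) + b x j)
        + (Real.exp (σ x) * f y + ∑ k, b x k * y k)
          * (Real.exp (σ x) * pdy2 f i j y) := by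
    intro i j
    have hrc : (fun z => (RandersChange L σ b x z) ^ 2)
        = fun z => (Real.exp (σ x) * f z + B z) ^ 2 := by
      funext z; rw [hBapp]; rfl
    rw [gten, hrc, key_pdy2 hy hfd hhdiff (Real.exp (σ x)) B i j, hBej, hBej, hBapp]
    ring
  -- Euler identities in summed form
  have hsumy : ∑ i, y i * fderiv ℝ f y (Pi.single i 1) = f y := by
    rw [← clm_eval_sum]; exact euler1
  have hsumyG : ∀ j : Fin n, ∑ i, y i * pdy2 f i j y = 0 := by
    intro j
    have := clm_eval_sum (fderiv ℝ (fun z => fderiv ℝ f z (Pi.single j 1)) y) y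
    rw [euler0 j] at this
    exact this.symm
  -- P = ∑ ℓ_j N_j = 0
  have hP : ∑ j, fderiv ℝ f y (Pi.single j 1) * N j = 0 := by
    have e1 : ∑ i, ∑ j, gten L x i j y * y i * N j
        = f y * ∑ j, fderiv ℝ f y (Pi.single j 1) * N j := by
      simp only [hg]
      rw [Finset.sum_comm, Finset.mul_sum]
      refine Finset.sum_congr rfl fun j _ => ?_
      calc ∑ i, (fderiv ℝ f y (Pi.single i 1) * fderiv ℝ f y (Pi.single j 1)
              + f y * pdy2 f i j y) * y i * N j
          = (∑ i, y i * fderiv ℝ f y (Pi.single i 1))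
              * (fderiv ℝ f y (Pi.single j 1) * N j)
            + (∑ i, y i * pdy2 f i j y) * (f y * N j) := by
            rw [Finset.sum_mul, Finset.sum_mul, ← Finset.sum_add_distrib]
            exact Finset.sum_congr rfl fun i _ => by ring
        _ = f y * (fderiv ℝ f y (Pi.single j 1) * N j) := by
            rw [hsumy, hsumyG j]; ring
    rw [e1] at hN
    exact (mul_eq_zero.mp hN).resolve_left (ne_of_gt hfypos)
  -- main computation
  intro i
  set t := tauRC L σ b x y with htdef
  have hst : 0 < Real.sqrt t := Real.sqrt_pos.mpr htau
  have hLne : L x y ≠ 0 := ne_of_gt (hLpos x hx y hy)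
  have hLstar : Real.exp (σ x) * (Real.exp (σ x) * f y + ∑ k, b x k * y k) = t * f y := by
    rw [htdef, tauRC, RandersChange]
    show Real.exp (σ x) * (Real.exp (σ x) * L x y + ∑ k, b x k * y k) = _ * L x y
    field_simp
  have eL : ∑ j, gten (RandersChange L σ b) x i j y * N j
      = (Real.exp (σ x) * f y + ∑ k, b x k * y k) * Real.exp (σ x)
        * (∑ j, pdy2 f i j y * N j) := by
    simp only [hgs]
    have expand : ∀ j : Fin n,
        ((Real.exp (σ x) * fderiv ℝ f y (Pi.single i 1) + b x i)
          * (Real.exp (σ x) * fderiv ℝ f y (Pi.single j 1) + b x j)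
          + (Real.exp (σ x) * f y + ∑ k, b x k * y k)
            * (Real.exp (σ x) * pdy2 f i j y)) * N j
        = ((Real.exp (σ x) * fderiv ℝ f y (Pi.single i 1) + b x i) * Real.exp (σ x))
            * (fderiv ℝ f y (Pi.single j 1) * N j)
          + (Real.exp (σ x) * fderiv ℝ f y (Pi.single i 1) + b x i) * (b x j * N j)
          + ((Real.exp (σ x) * f y + ∑ k, b x k * y k) * Real.exp (σ x))
            * (pdy2 f i j y * N j) := fun j => by ring
    rw [Finset.sum_congr rfl fun j _ => expand j]
    rw [Finset.sum_add_distrib, Finset.sum_add_distrib, ← Finset.mul_sum, ← Finset.mul_sum,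
      ← Finset.mul_sum, hP, hbN]
    ring
  have eR : ∑ j, gten L x i j y * N j = f y * ∑ j, pdy2 f i j y * N j := by
    simp only [hg]
    have expand : ∀ j : Fin n,
        (fderiv ℝ f y (Pi.single i 1) * fderiv ℝ f y (Pi.single j 1) + f y * pdy2 f i j y) * N j
        = fderiv ℝ f y (Pi.single i 1) * (fderiv ℝ f y (Pi.single j 1) * N j)
          + f y * (pdy2 f i j y * N j) := fun j => by ring
    rw [Finset.sum_congr rfl fun j _ => expand j]
    rw [Finset.sum_add_distrib, ← Finset.mul_sum, ← Finset.mul_sum, hP]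
    ring
  have hsumdiv : ∑ j, gten (RandersChange L σ b) x i j y * (N j / Real.sqrt t)
      = (∑ j, gten (RandersChange L σ b) x i j y * N j) / Real.sqrt t := by
    rw [Finset.sum_div]
    exact Finset.sum_congr rfl fun j _ => by ring
  rw [hsumdiv, eL, eR]
  have h2 : (Real.exp (σ x) * f y + ∑ k, b x k * y k) * Real.exp (σ x) = t * f y := by
    rw [← hLstar]; ring
  rw [h2]
  field_simp
  linear_combination (∑ j, pdy2 f i j y * N j) * (Real.mul_self_sqrt htau.le).symm
end

section
/- Let x : V → U (V ⊆ ℝ^{n−1} open) be a smooth hypersurface parametrization with projection factors B^i_α = ∂x^i/∂u^α of rank n−1, and fix (u, v) with supporting element y^i = Σ_α B^i_α (u) v^α ≠ 0. Assume g_{ij}(x(u), y) is positive definite, L*(x(u), y) > 0, and Σ_i b_i(x(u)) N^i = 0, where N is the unit normal of (U,L) along the hypersurface. Assume further that the Randers conformal change is projective: G*^i = G^i + P y^i for a smooth scalar P. Then the normal curvature of the hypersurface in (U, L*), computed with the unit normal N* = N/√τ, satisfies H*_α = √τ H_α for every α, where H_α = Σ_i N_i ( Σ_β v^β ∂²x^i/∂u^β∂u^α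 + Σ_j N^i_j B^j_α ), H*_α = Σ_i N*_i ( Σ_β v^β ∂²x^i/∂u^β∂u^α + Σ_j N*^i_j B^j_α ), N_i = Σ_j g_{ij} N^j, N*_i = Σ_j g*_{ij} N*^j, N^i_j = ∂̇_j G^i, N*^i_j = ∂̇_j G*^i, and τ = e^{σ} L*/L. -/
open Real

/-- Partial derivative with respect to the `i`-th `y`-coordinate. -/
noncomputable def pdy {n : ℕ} (f : (Fin n → ℝ) → ℝ) (i : Fin n) (y : Fin n → ℝ) : ℝ :=
  fderiv ℝ f y (Pi.single i 1)

/-- Partial derivative of a function of the position variable in the `i`-th direction. -/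
noncomputable def pdx {n : ℕ} (f : (Fin n → ℝ) → ℝ) (i : Fin n) (x : Fin n → ℝ) : ℝ :=
  fderiv ℝ f x (Pi.single i 1)

/-- The fundamental tensor as a matrix. -/
noncomputable def gmat {n : ℕ} (L : (Fin n → ℝ) → (Fin n → ℝ) → ℝ)
    (x y : Fin n → ℝ) : Matrix (Fin n) (Fin n) ℝ :=
  Matrix.of fun i j => gten L x i j y

/-- The geodesic spray coefficients `G^i = ½ γ^i_{jk} y^j y^k`, where
`γ^i_{jk} = ½ g^{ir} (∂g_{jr}/∂x^k + ∂g_{kr}/∂x^j − ∂g_{jk}/∂x^r)`. -/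
noncomputable def spray {n : ℕ} (L : (Fin n → ℝ) → (Fin n → ℝ) → ℝ)
    (x y : Fin n → ℝ) (i : Fin n) : ℝ :=
  (1 / 2) * ∑ j, ∑ k,
    ((1 / 2) * ∑ r, (gmat L x y)⁻¹ i r *
        (pdx (fun z => gten L z j r y) k x + pdx (fun z => gten L z k r y) j x
          - pdx (fun z => gten L z j k y) r x))
      * y j * y k

/-- The projection factors `B^i_α = ∂x^i/∂u^α` of a hypersurface parametrization. -/
noncomputable def Bproj {n : ℕ} (xmap : (Fin (n - 1) → ℝ) → (Fin n → ℝ))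
    (u : Fin (n - 1) → ℝ) (α : Fin (n - 1)) (i : Fin n) : ℝ :=
  fderiv ℝ xmap u (Pi.single α 1) i

/-- The second derivatives `B^i_{βα} = ∂²x^i/∂u^β∂u^α` of a hypersurface parametrization. -/
noncomputable def B2 {n : ℕ} (xmap : (Fin (n - 1) → ℝ) → (Fin n → ℝ))
    (u : Fin (n - 1) → ℝ) (β α : Fin (n - 1)) (i : Fin n) : ℝ :=
  fderiv ℝ (fun w => fderiv ℝ xmap w (Pi.single α 1) i) u (Pi.single β 1)

/-- The supporting element `y^i = Σ_α v^α B^i_α` of the hypersurface. -/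
noncomputable def yvec {n : ℕ} (xmap : (Fin (n - 1) → ℝ) → (Fin n → ℝ))
    (u : Fin (n - 1) → ℝ) (v : Fin (n - 1) → ℝ) : Fin n → ℝ :=
  fun i => ∑ α, v α * Bproj xmap u α i

/-- The normal curvature vector `H_α = N_i (B^i_{0α} + N^i_j B^j_α)` of a hypersurface,
computed with respect to the metric `L` and a normal vector `N`, where
`N_i = Σ_j g_{ij} N^j`, `B^i_{0α} = Σ_β v^β B^i_{βα}`, and `N^i_j = ∂̇_j G^i`. -/
noncomputable def normalCurv {n : ℕ} (L : (Fin n → ℝ) → (Fin n → ℝ) → ℝ)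
    (xmap : (Fin (n - 1) → ℝ) → (Fin n → ℝ))
    (u : Fin (n - 1) → ℝ) (v : Fin (n - 1) → ℝ)
    (N : Fin n → ℝ) (α : Fin (n - 1)) : ℝ :=
  ∑ i, (∑ j, gten L (xmap u) i j (yvec xmap u v) * N j) *
    ((∑ β, v β * B2 xmap u β α i)
      + ∑ j, pdy (fun z => spray L (xmap u) z i) j (yvec xmap u v) * Bproj xmap u α j)

section RRNhelpers

open Filter

variable {n : ℕ}

lemma RRN_fderiv_slice_right {E F : Type*} [NormedAddCommGroup E] [NormedSpace ℝ E]
    [NormedAddCommGroup F] [NormedSpace ℝ F]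
    {G : E × F → ℝ} {a : E} {b : F} (h : DifferentiableAt ℝ G (a, b)) (v : F) :
    fderiv ℝ (fun w => G (a, w)) b v = fderiv ℝ G (a, b) (0, v) := by
  have hc := (h.hasFDerivAt.comp b (hasFDerivAt_prodMk_right a b)).fderiv
  have : (fun w => G (a, w)) = G ∘ Prod.mk a := rfl
  rw [this, hc]; simp

lemma RRN_fderiv_slice_left {E F : Type*} [NormedAddCommGroup E] [NormedSpace ℝ E]
    [NormedAddCommGroup F] [NormedSpace ℝ F]
    {G : E × F → ℝ} {a : E} {b : F} (h : DifferentiableAt ℝ G (a, b)) (v : E) :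
    fderiv ℝ (fun w => G (w, b)) a v = fderiv ℝ G (a, b) (v, 0) := by
  have hc := (h.hasFDerivAt.comp a (hasFDerivAt_prodMk_left (𝕜 := ℝ) a b)).fderiv
  have : (fun w => G (w, b)) = G ∘ (fun w => (w, b)) := rfl
  rw [this, hc]; simp

lemma RRN_euler_aux (f : (Fin n → ℝ) → ℝ) (y₀ : Fin n → ℝ) (hdiff : DifferentiableAt ℝ f y₀)
    (hhom : ∀ c : ℝ, 0 < c → f (c • y₀) = c * f y₀) : fderiv ℝ f y₀ y₀ = f y₀ := by
  have h1 : HasDerivAt (fun c : ℝ => c • y₀) y₀ 1 := by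
    simpa using (hasDerivAt_id (1 : ℝ)).smul_const y₀
  have h2 : HasDerivAt (fun c : ℝ => f (c • y₀)) (fderiv ℝ f y₀ y₀) 1 := by
    have hf : HasFDerivAt f (fderiv ℝ f y₀) ((fun c : ℝ => c • y₀) 1) := by
      simpa using hdiff.hasFDerivAt
    exact hf.comp_hasDerivAt 1 h1
  have h3 : HasDerivAt (fun c : ℝ => c * f y₀) (f y₀) 1 := by
    simpa using (hasDerivAt_id (1 : ℝ)).mul_const (f y₀)
  have heq : (fun c : ℝ => c * f y₀) =ᶠ[nhds (1 : ℝ)] fun c => f (c • y₀) := by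
    filter_upwards [eventually_gt_nhds zero_lt_one] with c hc
    exact (hhom c hc).symm
  exact (h2.congr_of_eventuallyEq heq).unique h3

lemma RRN_clm_apply_eq_sum (φ : (Fin n → ℝ) →L[ℝ] ℝ) (y : Fin n → ℝ) :
    φ y = ∑ i, y i * φ (Pi.single i 1) := by
  have hy : y = ∑ i, y i • (Pi.single i 1 : Fin n → ℝ) := by
    funext j
    simp [Finset.sum_apply, Pi.single_apply]
  conv_lhs => rw [hy]
  rw [map_sum]
  simp [smul_eq_mul]

lemma RRN_fderiv_sq_apply {ψ : (Fin n → ℝ) → ℝ} {z : Fin n → ℝ} (hz : DifferentiableAt ℝ ψ z)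
    (v : Fin n → ℝ) :
    fderiv ℝ (fun w => ψ w ^ 2) z v = 2 * ψ z * fderiv ℝ ψ z v := by
  have h := (hz.hasFDerivAt.fun_mul hz.hasFDerivAt).fderiv
  have he : (fun w => ψ w ^ 2) = fun w => ψ w * ψ w := by funext w; ring
  rw [he, h]
  simp; ring

lemma RRN_pdy2_sq (ψ : (Fin n → ℝ) → ℝ) (y₀ : Fin n → ℝ) (i j : Fin n)
    (hs : ∀ᶠ z in nhds y₀, DifferentiableAt ℝ ψ z)
    (h2 : DifferentiableAt ℝ (fun z => fderiv ℝ ψ z (Pi.single j 1)) y₀) :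
    pdy2 (fun z => (ψ z) ^ 2) i j y₀ =
      2 * (pdy ψ i y₀ * pdy ψ j y₀ + ψ y₀ * pdy2 ψ i j y₀) := by
  have hself : DifferentiableAt ℝ ψ y₀ := hs.self_of_nhds
  have hev : (fun z => fderiv ℝ (fun w => (ψ w) ^ 2) z (Pi.single j 1)) =ᶠ[nhds y₀]
      (fun z => 2 * ψ z * fderiv ℝ ψ z (Pi.single j 1)) := by
    filter_upwards [hs] with z hz
    exact RRN_fderiv_sq_apply hz _
  have hdiffprod : DifferentiableAt ℝ (fun z => 2 * ψ z) y₀ := hself.const_mul 2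
  unfold pdy2
  rw [hev.fderiv_eq]
  have hmul := (hdiffprod.hasFDerivAt.fun_mul h2.hasFDerivAt).fderiv
  have he2 : (fun z => 2 * ψ z * fderiv ℝ ψ z (Pi.single j 1))
      = fun z => (2 * ψ z) * (fderiv ℝ ψ z (Pi.single j 1)) := rfl
  rw [he2, hmul]
  have hfc : fderiv ℝ (fun z => 2 * ψ z) y₀ = (2 : ℝ) • fderiv ℝ ψ y₀ := by
    have := (hself.hasFDerivAt.const_mul (2 : ℝ)).fderiv
    simpa using this
  simp [hfc, pdy, pdy2]
  ring

lemma RRN_hasFDerivAt_linsum (c : Fin n → ℝ) (y₀ : Fin n → ℝ) :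
    HasFDerivAt (fun z : Fin n → ℝ => ∑ m, c m * z m)
      (∑ m, c m • (ContinuousLinearMap.proj m : (Fin n → ℝ) →L[ℝ] ℝ)) y₀ :=
  HasFDerivAt.fun_sum fun m _ =>
    ((ContinuousLinearMap.proj m : (Fin n → ℝ) →L[ℝ] ℝ).hasFDerivAt (x := y₀)).const_mul (c m)

lemma RRN_linsum_clm_apply (c : Fin n → ℝ) (k : Fin n) :
    (∑ m, c m • (ContinuousLinearMap.proj m : (Fin n → ℝ) →L[ℝ] ℝ)) (Pi.single k 1) = c k := by
  simp [ContinuousLinearMap.sum_apply, Pi.single_apply]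

lemma RRN_pdy_affine {f : (Fin n → ℝ) → ℝ} (A : ℝ) (c : Fin n → ℝ) {y₀ : Fin n → ℝ}
    (hf : DifferentiableAt ℝ f y₀) (k : Fin n) :
    fderiv ℝ (fun z => A * f z + ∑ m, c m * z m) y₀ (Pi.single k 1)
      = A * fderiv ℝ f y₀ (Pi.single k 1) + c k := by
  have h := ((hf.hasFDerivAt.const_mul A).fun_add (RRN_hasFDerivAt_linsum c y₀)).fderiv
  rw [h]
  simp [RRN_linsum_clm_apply, Pi.single_apply]

lemma RRN_pdy2_affine {f : (Fin n → ℝ) → ℝ} (A : ℝ) (c : Fin n → ℝ) {y₀ : Fin n → ℝ}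
    (hs : ∀ᶠ z in nhds y₀, DifferentiableAt ℝ f z)
    (h2 : ∀ j, DifferentiableAt ℝ (fun z => fderiv ℝ f z (Pi.single j 1)) y₀) (i j : Fin n) :
    pdy2 (fun z => A * f z + ∑ m, c m * z m) i j y₀ = A * pdy2 f i j y₀ := by
  have hev : (fun z => fderiv ℝ (fun w => A * f w + ∑ m, c m * w m) z (Pi.single j 1))
      =ᶠ[nhds y₀] (fun z => A * fderiv ℝ f z (Pi.single j 1) + c j) := by
    filter_upwards [hs] with z hz
    exact RRN_pdy_affine A c hz j
  unfold pdy2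
  rw [hev.fderiv_eq]
  have h := (((h2 j).hasFDerivAt.const_mul A).add_const (c j)).fderiv
  rw [h]
  simp

lemma RRN_differentiableAt_finprod {ι : Type*} [DecidableEq ι] (s : Finset ι)
    (f : ι → (Fin n → ℝ) → ℝ) {y₀ : Fin n → ℝ}
    (h : ∀ a ∈ s, DifferentiableAt ℝ (f a) y₀) :
    DifferentiableAt ℝ (fun z => ∏ a ∈ s, f a z) y₀ := by
  classical
  induction s using Finset.induction with
  | empty => simpa using differentiableAt_const (1 : ℝ)
  | insert a s' ha ih =>
    have := (h a (Finset.mem_insert_self a s')).fun_mul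
      (ih fun b hb => h b (Finset.mem_insert_of_mem hb))
    simpa [Finset.prod_insert ha] using this

lemma RRN_differentiableAt_det {m : ℕ} (M : (Fin n → ℝ) → Matrix (Fin m) (Fin m) ℝ)
    {y₀ : Fin n → ℝ} (h : ∀ a b, DifferentiableAt ℝ (fun z => M z a b) y₀) :
    DifferentiableAt ℝ (fun z => (M z).det) y₀ := by
  classical
  have he : (fun z => (M z).det)
      = fun z => ∑ σ : Equiv.Perm (Fin m), ((Equiv.Perm.sign σ : ℤ) : ℝ) * ∏ a, M z (σ a) a := by
    funext z
    rw [Matrix.det_apply]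
    simp [Units.smul_def, zsmul_eq_mul]
  rw [he]
  exact DifferentiableAt.fun_sum fun σ _ =>
    (RRN_differentiableAt_finprod Finset.univ _ fun a _ => h (σ a) a).const_mul _

lemma RRN_differentiableAt_inv_entry {m : ℕ} (M : (Fin n → ℝ) → Matrix (Fin m) (Fin m) ℝ)
    {y₀ : Fin n → ℝ} (h : ∀ a b, DifferentiableAt ℝ (fun z => M z a b) y₀)
    (hdet : ∀ᶠ z in nhds y₀, (M z).det ≠ 0) (i r : Fin m) :
    DifferentiableAt ℝ (fun z => (M z)⁻¹ i r) y₀ := by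
  classical
  have he : (fun z => (M z)⁻¹ i r) =ᶠ[nhds y₀]
      fun z => ((M z).det)⁻¹ * ((M z).updateRow r (Pi.single i 1)).det := by
    filter_upwards [hdet] with z _
    rw [Matrix.inv_def]
    simp [Ring.inverse_eq_inv', Matrix.adjugate_apply, smul_eq_mul]
  have hadj : DifferentiableAt ℝ (fun z => ((M z).updateRow r (Pi.single i 1)).det) y₀ := by
    apply RRN_differentiableAt_det
    intro a b
    by_cases har : a = r
    · subst har; simp [Matrix.updateRow_apply]
    · simpa [Matrix.updateRow_apply, har] using h a b
  have hd := RRN_differentiableAt_det M h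
  exact ((hd.inv hdet.self_of_nhds).mul hadj).congr_of_eventuallyEq he

lemma RRN_det_ne_zero_of_posdef {m : ℕ} (A : Matrix (Fin m) (Fin m) ℝ)
    (hpos : ∀ w : Fin m → ℝ, w ≠ 0 → 0 < ∑ i, ∑ j, A i j * w i * w j) : A.det ≠ 0 := by
  intro h0
  obtain ⟨w, hw0, hww⟩ := (Matrix.exists_mulVec_eq_zero_iff).mpr h0
  have hzero : ∑ i, ∑ j, A i j * w i * w j = 0 := by
    have hrow : ∀ i, ∑ j, A i j * w i * w j = 0 := by
      intro i
      have hmv : ∑ j, A i j * w j = 0 := by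
        have := congrFun hww i
        simpa [Matrix.mulVec, dotProduct] using this
      calc ∑ j, A i j * w i * w j = w i * ∑ j, A i j * w j := by
            rw [Finset.mul_sum]; apply Finset.sum_congr rfl; intros; ring
        _ = 0 := by rw [hmv]; ring
    simp [hrow]
  exact absurd (hpos w hw0) (by simp [hzero])

lemma RRN_sum3_swap {A B C : Type*} [Fintype A] [Fintype B] [Fintype C] (f : A → B → C → ℝ) :
    ∑ a, ∑ b, ∑ c, f a b c = ∑ c, ∑ b, ∑ a, f a b c := by
  calc ∑ a, ∑ b, ∑ c, f a b c
      = ∑ b, ∑ a, ∑ c, f a b c := Finset.sum_comm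
    _ = ∑ b, ∑ c, ∑ a, f a b c := Finset.sum_congr rfl fun b _ => Finset.sum_comm
    _ = ∑ c, ∑ b, ∑ a, f a b c := Finset.sum_comm

lemma RRN_gten_machinery (L : (Fin n → ℝ) → (Fin n → ℝ) → ℝ)
    {U : Set (Fin n → ℝ)} (hU : IsOpen U)
    (hL2 : ContDiffOn ℝ (⊤ : ℕ∞)
      (fun p : (Fin n → ℝ) × (Fin n → ℝ) => (L p.1 p.2) ^ 2)
      (U ×ˢ {y : Fin n → ℝ | y ≠ 0}))
    {x₀ y₀ : Fin n → ℝ} (hx : x₀ ∈ U) (hy : y₀ ≠ 0) (j r k : Fin n) :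
    DifferentiableAt ℝ (fun z => gten L x₀ j r z) y₀ ∧
    DifferentiableAt ℝ (fun z => pdx (fun x' => gten L x' j r z) k x₀) y₀ := by
  classical
  set Ω : Set ((Fin n → ℝ) × (Fin n → ℝ)) := U ×ˢ {y : Fin n → ℝ | y ≠ 0} with hΩdef
  have hΩ : IsOpen Ω := hU.prod isOpen_ne
  have hmem : ∀ {x z : Fin n → ℝ}, x ∈ U → z ≠ 0 →
      ((x, z) : (Fin n → ℝ) × (Fin n → ℝ)) ∈ Ω :=
    fun hx hz => Set.mem_prod.mpr ⟨hx, hz⟩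
  have h1le : ((⊤ : ℕ∞) : WithTop ℕ∞) ≠ 0 := by
    simp
  have hstep : ((⊤ : ℕ∞) : WithTop ℕ∞) + 1 ≤ ((⊤ : ℕ∞) : WithTop ℕ∞) := by
    exact_mod_cast le_top
  set F2 : (Fin n → ℝ) × (Fin n → ℝ) → ℝ := fun p => (L p.1 p.2) ^ 2 with hF2def
  have hD1 : ContDiffOn ℝ (⊤ : ℕ∞) (fderiv ℝ F2) Ω := hL2.fderiv_of_isOpen hΩ hstep
  set A : (Fin n → ℝ) × (Fin n → ℝ) → ℝ :=
    fun p => fderiv ℝ F2 p ((0 : Fin n → ℝ), Pi.single r 1) with hAdef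
  have hA : ContDiffOn ℝ (⊤ : ℕ∞) A Ω := hD1.clm_apply contDiffOn_const
  have hD2 : ContDiffOn ℝ (⊤ : ℕ∞) (fderiv ℝ A) Ω := hA.fderiv_of_isOpen hΩ hstep
  set C : (Fin n → ℝ) × (Fin n → ℝ) → ℝ :=
    fun p => fderiv ℝ A p ((0 : Fin n → ℝ), Pi.single j 1) with hCdef
  have hC : ContDiffOn ℝ (⊤ : ℕ∞) C Ω := hD2.clm_apply contDiffOn_const
  have hD3 : ContDiffOn ℝ (⊤ : ℕ∞) (fderiv ℝ C) Ω := hC.fderiv_of_isOpen hΩ hstep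
  have claim1 : ∀ x ∈ U, ∀ z : Fin n → ℝ, z ≠ 0 →
      gten L x j r z = (1 / 2) * C (x, z) := by
    intro x hxx z hz
    have hin : ∀ᶠ w in nhds z, (x, w) ∈ Ω := by
      have hcont : ContinuousAt (fun w : Fin n → ℝ => ((x, w) : _ × _)) z :=
        (continuous_const.prodMk continuous_id).continuousAt
      exact hcont.preimage_mem_nhds (hΩ.mem_nhds (hmem hxx hz))
    have hev : (fun w => fderiv ℝ (fun w' => (L x w') ^ 2) w (Pi.single r 1)) =ᶠ[nhds z]
        (fun w => A (x, w)) := by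
      filter_upwards [hin] with w hw
      exact RRN_fderiv_slice_right ((hL2.contDiffAt (hΩ.mem_nhds hw)).differentiableAt h1le) _
    unfold gten pdy2
    rw [hev.fderiv_eq]
    have hAd : DifferentiableAt ℝ A (x, z) :=
      (hA.contDiffAt (hΩ.mem_nhds (hmem hxx hz))).differentiableAt h1le
    rw [RRN_fderiv_slice_right hAd]
  have claim2 : ∀ z : Fin n → ℝ, z ≠ 0 →
      pdx (fun x' => gten L x' j r z) k x₀
        = (1 / 2) * fderiv ℝ C (x₀, z) (Pi.single k 1, (0 : Fin n → ℝ)) := by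
    intro z hz
    have hev : (fun x' => gten L x' j r z) =ᶠ[nhds x₀]
        (fun x' => (1 / 2) * C (x', z)) := by
      filter_upwards [hU.mem_nhds hx] with x' hx'
      exact claim1 x' hx' z hz
    have hCd : DifferentiableAt ℝ C (x₀, z) :=
      (hC.contDiffAt (hΩ.mem_nhds (hmem hx hz))).differentiableAt h1le
    have hslice : DifferentiableAt ℝ (fun x' => C (x', z)) x₀ :=
      by have := hCd.comp x₀ (hasFDerivAt_prodMk_left (𝕜 := ℝ) x₀ z).differentiableAt; exact this
    unfold pdx
    rw [hev.fderiv_eq, fderiv_const_mul hslice]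
    simp only [ContinuousLinearMap.smul_apply, smul_eq_mul]
    rw [RRN_fderiv_slice_left hCd]
  have hyev : ∀ᶠ z in nhds y₀, z ≠ (0 : Fin n → ℝ) := isOpen_ne.mem_nhds hy
  constructor
  · have hgood : DifferentiableAt ℝ (fun z => (1 / 2) * C (x₀, z)) y₀ := by
      have hCd : DifferentiableAt ℝ C (x₀, y₀) :=
        (hC.contDiffAt (hΩ.mem_nhds (hmem hx hy))).differentiableAt h1le
      exact (hCd.comp y₀ (hasFDerivAt_prodMk_right x₀ y₀).differentiableAt).const_mul _
    apply hgood.congr_of_eventuallyEq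
    filter_upwards [hyev] with z hz
    exact claim1 x₀ hx z hz
  · have hgood : DifferentiableAt ℝ
        (fun z => (1 / 2) * fderiv ℝ C (x₀, z) (Pi.single k 1, (0 : Fin n → ℝ))) y₀ := by
      have hE : ContDiffOn ℝ (⊤ : ℕ∞)
          (fun p => fderiv ℝ C p (Pi.single k 1, (0 : Fin n → ℝ))) Ω :=
        hD3.clm_apply contDiffOn_const
      have hEd : DifferentiableAt ℝ
          (fun p => fderiv ℝ C p (Pi.single k 1, (0 : Fin n → ℝ))) (x₀, y₀) :=
        (hE.contDiffAt (hΩ.mem_nhds (hmem hx hy))).differentiableAt h1le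
      exact (hEd.comp y₀ (hasFDerivAt_prodMk_right x₀ y₀).differentiableAt).const_mul _
    apply hgood.congr_of_eventuallyEq
    filter_upwards [hyev] with z hz
    exact claim2 z hz

end RRNhelpers

/-- Under a projective Randers conformal change, with `b` tangential to the hypersurface,
the normal curvature computed with the unit normal `N* = N/√τ` satisfies
`H*_α = √τ H_α`. -/
theorem randers_conformal_normal_curvature
    {n : ℕ} (U : Set (Fin n → ℝ)) (hU : IsOpen U)
    (L : (Fin n → ℝ) → (Fin n → ℝ) → ℝ)
    (hL : ContDiffOn ℝ (⊤ : ℕ∞)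
      (fun p : (Fin n → ℝ) × (Fin n → ℝ) => L p.1 p.2)
      (U ×ˢ {y : Fin n → ℝ | y ≠ 0}))
    (hLpos : ∀ x ∈ U, ∀ y : Fin n → ℝ, y ≠ 0 → 0 < L x y)
    (hLhom : ∀ x ∈ U, ∀ y : Fin n → ℝ, y ≠ 0 → ∀ c : ℝ, 0 < c →
      L x (c • y) = c * L x y)
    (σ : (Fin n → ℝ) → ℝ) (hσ : ContDiffOn ℝ (⊤ : ℕ∞) σ U)
    (b : (Fin n → ℝ) → (Fin n → ℝ)) (hb : ContDiffOn ℝ (⊤ : ℕ∞) b U)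
    (V : Set (Fin (n - 1) → ℝ)) (hV : IsOpen V)
    (xmap : (Fin (n - 1) → ℝ) → (Fin n → ℝ))
    (hxmap : ContDiffOn ℝ (⊤ : ℕ∞) xmap V)
    (hxU : ∀ u ∈ V, xmap u ∈ U)
    (u : Fin (n - 1) → ℝ) (hu : u ∈ V)
    (hrank : LinearIndependent ℝ (fun α : Fin (n - 1) => fun i => Bproj xmap u α i))
    (v : Fin (n - 1) → ℝ) (hy : yvec xmap u v ≠ 0)
    (hposdef : ∀ w : Fin n → ℝ, w ≠ 0 →
      0 < ∑ i, ∑ j, gten L (xmap u) i j (yvec xmap u v) * w i * w j)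
    (hLstar : 0 < RandersChange L σ b (xmap u) (yvec xmap u v))
    (N : Fin n → ℝ)
    (hN1 : ∀ α, ∑ i, ∑ j,
      gten L (xmap u) i j (yvec xmap u v) * Bproj xmap u α i * N j = 0)
    (hN2 : ∑ i, ∑ j, gten L (xmap u) i j (yvec xmap u v) * N i * N j = 1)
    (hbN : ∑ i, b (xmap u) i * N i = 0)
    (P : (Fin n → ℝ) → (Fin n → ℝ) → ℝ)
    (hP : ContDiffOn ℝ (⊤ : ℕ∞)
      (fun p : (Fin n → ℝ) × (Fin n → ℝ) => P p.1 p.2)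
      (U ×ˢ {y : Fin n → ℝ | y ≠ 0}))
    (hproj : ∀ x ∈ U, ∀ y : Fin n → ℝ, y ≠ 0 → ∀ i : Fin n,
      spray (RandersChange L σ b) x y i = spray L x y i + P x y * y i) :
    ∀ α : Fin (n - 1),
      normalCurv (RandersChange L σ b) xmap u v
          (fun i => N i / Real.sqrt (tauRC L σ b (xmap u) (yvec xmap u v))) α
        = Real.sqrt (tauRC L σ b (xmap u) (yvec xmap u v))
            * normalCurv L xmap u v N α := by
  classical
  intro α
  simp only [normalCurv]
  set x₀ : Fin n → ℝ := xmap u with hx₀def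
  set y₀ : Fin n → ℝ := yvec xmap u v with hy₀def
  have hxU₀ : x₀ ∈ U := hxU u hu
  have hA0 : (0 : ℝ) < Real.exp (σ x₀) := Real.exp_pos _
  have hf₀ : 0 < L x₀ y₀ := hLpos x₀ hxU₀ y₀ hy
  have hopen0 : IsOpen {z : Fin n → ℝ | z ≠ 0} := isOpen_ne
  have h1le : ((⊤ : ℕ∞) : WithTop ℕ∞) ≠ 0 := by simp
  have hstep : ((⊤ : ℕ∞) : WithTop ℕ∞) + 1 ≤ ((⊤ : ℕ∞) : WithTop ℕ∞) := by
    exact_mod_cast le_top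
  have hcomp : ContDiffOn ℝ (⊤ : ℕ∞)
      (fun z : Fin n → ℝ => ((x₀, z) : (Fin n → ℝ) × (Fin n → ℝ)))
      {z : Fin n → ℝ | z ≠ 0} := (contDiff_const.prodMk contDiff_id).contDiffOn
  have hmaps : ∀ z ∈ {z : Fin n → ℝ | z ≠ 0},
      ((x₀, z) : (Fin n → ℝ) × (Fin n → ℝ)) ∈ U ×ˢ {y : Fin n → ℝ | y ≠ 0} :=
    fun z hz => Set.mem_prod.mpr ⟨hxU₀, hz⟩
  have hLslice : ContDiffOn ℝ (⊤ : ℕ∞) (fun z => L x₀ z) {z : Fin n → ℝ | z ≠ 0} :=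
    hL.comp hcomp hmaps
  have hPslice : ContDiffOn ℝ (⊤ : ℕ∞) (fun z => P x₀ z) {z : Fin n → ℝ | z ≠ 0} :=
    hP.comp hcomp hmaps
  have hfdiff_ev : ∀ᶠ z in nhds y₀, DifferentiableAt ℝ (fun z => L x₀ z) z := by
    filter_upwards [hopen0.mem_nhds hy] with z hz
    exact (hLslice.contDiffAt (hopen0.mem_nhds hz)).differentiableAt h1le
  have hfdiff : DifferentiableAt ℝ (fun z => L x₀ z) y₀ := hfdiff_ev.self_of_nhds
  have hPdiffat : DifferentiableAt ℝ (fun z => P x₀ z) y₀ :=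
    (hPslice.contDiffAt (hopen0.mem_nhds hy)).differentiableAt h1le
  have h2nd : ∀ j, DifferentiableAt ℝ
      (fun z => fderiv ℝ (fun w => L x₀ w) z (Pi.single j 1)) y₀ := by
    intro j
    exact (((hLslice.fderiv_of_isOpen hopen0 hstep).clm_apply
      contDiffOn_const).contDiffAt (hopen0.mem_nhds hy)).differentiableAt h1le
  set ℓ : Fin n → ℝ := fun j => fderiv ℝ (fun w => L x₀ w) y₀ (Pi.single j 1) with hℓdef
  -- metric tensor of L at the point
  have hgL : ∀ i j, gten L x₀ i j y₀
      = ℓ i * ℓ j + L x₀ y₀ * pdy2 (fun w => L x₀ w) i j y₀ := by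
    intro i j
    have h := RRN_pdy2_sq (fun w => L x₀ w) y₀ i j hfdiff_ev (h2nd j)
    have hfold : gten L x₀ i j y₀ = (1 / 2) * pdy2 (fun w => (L x₀ w) ^ 2) i j y₀ := rfl
    rw [hfold, h]
    simp only [pdy]
    ring
  -- Euler identities
  have hF2slice : ContDiffOn ℝ (⊤ : ℕ∞) (fun z => (L x₀ z) ^ 2) {z : Fin n → ℝ | z ≠ 0} :=
    hLslice.pow 2
  have hFdiffat : ∀ z : Fin n → ℝ, z ≠ 0 → DifferentiableAt ℝ (fun w => (L x₀ w) ^ 2) z :=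
    fun z hz => (hF2slice.contDiffAt (hopen0.mem_nhds hz)).differentiableAt h1le
  have hFd2 : ∀ j, DifferentiableAt ℝ
      (fun z => fderiv ℝ (fun w => (L x₀ w) ^ 2) z (Pi.single j 1)) y₀ := by
    intro j
    exact (((hF2slice.fderiv_of_isOpen hopen0 hstep).clm_apply
      contDiffOn_const).contDiffAt (hopen0.mem_nhds hy)).differentiableAt h1le
  have hGhom : ∀ j, ∀ c : ℝ, 0 < c →
      fderiv ℝ (fun w => (L x₀ w) ^ 2) (c • y₀) (Pi.single j 1)
        = c * fderiv ℝ (fun w => (L x₀ w) ^ 2) y₀ (Pi.single j 1) := by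
    intro j c hc
    have hcy : c • y₀ ≠ 0 := smul_ne_zero (ne_of_gt hc) hy
    have hev : (fun z => (L x₀ (c • z)) ^ 2) =ᶠ[nhds y₀]
        (fun z => c ^ 2 * (L x₀ z) ^ 2) := by
      filter_upwards [hopen0.mem_nhds hy] with z hz
      rw [hLhom x₀ hxU₀ z hz c hc]; ring
    have hsm : HasFDerivAt (fun z : Fin n → ℝ => c • z)
        (c • ContinuousLinearMap.id ℝ (Fin n → ℝ)) y₀ :=
      (c • ContinuousLinearMap.id ℝ (Fin n → ℝ)).hasFDerivAt
    have hchain' := ((hFdiffat _ hcy).hasFDerivAt).comp y₀ hsm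
    have hchain : HasFDerivAt (fun z : Fin n → ℝ => (L x₀ (c • z)) ^ 2)
        ((fderiv ℝ (fun w => (L x₀ w) ^ 2) (c • y₀)).comp
          (c • ContinuousLinearMap.id ℝ (Fin n → ℝ))) y₀ := hchain'
    have hrhs : fderiv ℝ (fun z : Fin n → ℝ => c ^ 2 * (L x₀ z) ^ 2) y₀
        = (c ^ 2) • fderiv ℝ (fun w => (L x₀ w) ^ 2) y₀ :=
      fderiv_const_mul (hFdiffat y₀ hy) _
    have heq : fderiv ℝ (fun z : Fin n → ℝ => (L x₀ (c • z)) ^ 2) y₀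
        = fderiv ℝ (fun z : Fin n → ℝ => c ^ 2 * (L x₀ z) ^ 2) y₀ := hev.fderiv_eq
    rw [hchain.fderiv, hrhs] at heq
    have happ : c * fderiv ℝ (fun w => (L x₀ w) ^ 2) (c • y₀) (Pi.single j 1)
        = c ^ 2 * fderiv ℝ (fun w => (L x₀ w) ^ 2) y₀ (Pi.single j 1) := by
      have h' := congrFun (congrArg (DFunLike.coe) heq) (Pi.single j 1)
      simpa [smul_eq_mul] using h'
    have hc0 : c ≠ 0 := ne_of_gt hc
    apply mul_left_cancel₀ hc0
    rw [happ]
    ring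
  have hE1 : ∀ j, ∑ i, y₀ i * gten L x₀ i j y₀ = L x₀ y₀ * ℓ j := by
    intro j
    have heuler : fderiv ℝ (fun z => fderiv ℝ (fun w => (L x₀ w) ^ 2) z (Pi.single j 1)) y₀ y₀
        = fderiv ℝ (fun w => (L x₀ w) ^ 2) y₀ (Pi.single j 1) :=
      RRN_euler_aux _ y₀ (hFd2 j) (fun c hc => hGhom j c hc)
    have hsum := RRN_clm_apply_eq_sum
      (fderiv ℝ (fun z => fderiv ℝ (fun w => (L x₀ w) ^ 2) z (Pi.single j 1)) y₀) y₀
    have hFj : fderiv ℝ (fun w => (L x₀ w) ^ 2) y₀ (Pi.single j 1)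
        = 2 * L x₀ y₀ * ℓ j := RRN_fderiv_sq_apply hfdiff _
    have hgf : ∀ i, gten L x₀ i j y₀
        = (1 / 2) * fderiv ℝ (fun z => fderiv ℝ (fun w => (L x₀ w) ^ 2) z (Pi.single j 1)) y₀
            (Pi.single i 1) := fun i => rfl
    calc ∑ i, y₀ i * gten L x₀ i j y₀
        = (1 / 2) * ∑ i, y₀ i *
            fderiv ℝ (fun z => fderiv ℝ (fun w => (L x₀ w) ^ 2) z (Pi.single j 1)) y₀
              (Pi.single i 1) := by
          rw [Finset.mul_sum]
          exact Finset.sum_congr rfl fun i _ => by rw [hgf i]; ring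
      _ = (1 / 2) * fderiv ℝ (fun z => fderiv ℝ (fun w => (L x₀ w) ^ 2) z (Pi.single j 1)) y₀ y₀ := by
          rw [← hsum]
      _ = (1 / 2) * fderiv ℝ (fun w => (L x₀ w) ^ 2) y₀ (Pi.single j 1) := by rw [heuler]
      _ = L x₀ y₀ * ℓ j := by rw [hFj]; ring
  -- tangency of ℓ against N
  have hlN : ∑ j, ℓ j * N j = 0 := by
    have hyi : ∀ i, y₀ i = ∑ α', v α' * Bproj xmap u α' i := fun i => rfl
    have h1 : ∑ j, (∑ i, y₀ i * gten L x₀ i j y₀) * N j = 0 := by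
      calc ∑ j, (∑ i, y₀ i * gten L x₀ i j y₀) * N j
          = ∑ α', ∑ i, ∑ j, v α' * (gten L x₀ i j y₀ * Bproj xmap u α' i * N j) := by
            simp only [hyi, Finset.sum_mul]
            rw [RRN_sum3_swap (fun j i α' =>
              v α' * Bproj xmap u α' i * gten L x₀ i j y₀ * N j)]
            exact Finset.sum_congr rfl fun α' _ => Finset.sum_congr rfl fun i _ =>
              Finset.sum_congr rfl fun j _ => by ring
        _ = 0 := by
            have : ∀ α', ∑ i, ∑ j, v α' * (gten L x₀ i j y₀ * Bproj xmap u α' i * N j)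
                = v α' * ∑ i, ∑ j, gten L x₀ i j y₀ * Bproj xmap u α' i * N j := by
              intro α'; simp [Finset.mul_sum]
            simp only [this, hN1, mul_zero, Finset.sum_const_zero]
    have h2 : L x₀ y₀ * ∑ j, ℓ j * N j = 0 := by
      rw [Finset.mul_sum]
      rw [← h1]
      exact Finset.sum_congr rfl fun j _ => by rw [hE1 j]; ring
    exact (mul_eq_zero.mp h2).resolve_left (ne_of_gt hf₀)
  -- contraction facts for M i := ∑ j g_ij N j
  have hMB : ∀ α', ∑ i, (∑ j, gten L x₀ i j y₀ * N j) * Bproj xmap u α' i = 0 := by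
    intro α'
    calc ∑ i, (∑ j, gten L x₀ i j y₀ * N j) * Bproj xmap u α' i
        = ∑ i, ∑ j, gten L x₀ i j y₀ * Bproj xmap u α' i * N j := by
          simp only [Finset.sum_mul]
          exact Finset.sum_congr rfl fun i _ => Finset.sum_congr rfl fun j _ => by ring
      _ = 0 := hN1 α'
  have hMy : ∑ i, (∑ j, gten L x₀ i j y₀ * N j) * y₀ i = 0 := by
    have hyi : ∀ i, y₀ i = ∑ α', v α' * Bproj xmap u α' i := fun i => rfl
    calc ∑ i, (∑ j, gten L x₀ i j y₀ * N j) * y₀ i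
        = ∑ α', v α' * ∑ i, (∑ j, gten L x₀ i j y₀ * N j) * Bproj xmap u α' i := by
          simp only [hyi, Finset.mul_sum]
          rw [Finset.sum_comm]
          exact Finset.sum_congr rfl fun α' _ => Finset.sum_congr rfl fun i _ => by ring
      _ = 0 := by simp [hMB]
  -- metric tensor of the Randers change at the point
  have hφev : ∀ᶠ z in nhds y₀, DifferentiableAt ℝ
      (fun w => Real.exp (σ x₀) * L x₀ w + ∑ m, b x₀ m * w m) z := by
    filter_upwards [hfdiff_ev] with z hz
    exact (hz.const_mul _).add (RRN_hasFDerivAt_linsum (b x₀) z).differentiableAt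
  have hφ2nd : ∀ j, DifferentiableAt ℝ
      (fun z => fderiv ℝ (fun w => Real.exp (σ x₀) * L x₀ w + ∑ m, b x₀ m * w m) z
        (Pi.single j 1)) y₀ := by
    intro j
    have hgood : DifferentiableAt ℝ
        (fun z => Real.exp (σ x₀) * fderiv ℝ (fun w => L x₀ w) z (Pi.single j 1) + b x₀ j)
        y₀ := ((h2nd j).const_mul _).add_const _
    apply hgood.congr_of_eventuallyEq
    filter_upwards [hfdiff_ev] with z hz
    exact RRN_pdy_affine _ (b x₀) hz j
  have hgRC : ∀ i j, gten (RandersChange L σ b) x₀ i j y₀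
      = (Real.exp (σ x₀) * ℓ i + b x₀ i) * (Real.exp (σ x₀) * ℓ j + b x₀ j)
        + RandersChange L σ b x₀ y₀
          * (Real.exp (σ x₀) * pdy2 (fun w => L x₀ w) i j y₀) := by
    intro i j
    have hfold : gten (RandersChange L σ b) x₀ i j y₀
        = (1 / 2) * pdy2 (fun z => (Real.exp (σ x₀) * L x₀ z + ∑ m, b x₀ m * z m) ^ 2) i j y₀ :=
      rfl
    rw [hfold, RRN_pdy2_sq (fun z => Real.exp (σ x₀) * L x₀ z + ∑ m, b x₀ m * z m) y₀ i j
      hφev (hφ2nd j), RRN_pdy2_affine _ (b x₀) hfdiff_ev h2nd i j]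
    have hpa : ∀ k, pdy (fun z => Real.exp (σ x₀) * L x₀ z + ∑ m, b x₀ m * z m) k y₀
        = Real.exp (σ x₀) * ℓ k + b x₀ k := fun k => RRN_pdy_affine _ (b x₀) hfdiff k
    rw [hpa i, hpa j]
    have hval : Real.exp (σ x₀) * L x₀ y₀ + ∑ m, b x₀ m * y₀ m
        = RandersChange L σ b x₀ y₀ := rfl
    rw [hval]
    ring
  have hf'' : ∀ i j, pdy2 (fun w => L x₀ w) i j y₀
      = (gten L x₀ i j y₀ - ℓ i * ℓ j) / L x₀ y₀ := by
    intro i j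
    rw [hgL i j]
    field_simp
    ring
  have hgRCN : ∀ i, ∑ j, gten (RandersChange L σ b) x₀ i j y₀ * N j
      = (Real.exp (σ x₀) * RandersChange L σ b x₀ y₀ / L x₀ y₀)
        * ∑ j, gten L x₀ i j y₀ * N j := by
    intro i
    have hterm : ∀ j, gten (RandersChange L σ b) x₀ i j y₀ * N j
        = (Real.exp (σ x₀) * ℓ i + b x₀ i) * Real.exp (σ x₀) * (ℓ j * N j)
          + (Real.exp (σ x₀) * ℓ i + b x₀ i) * (b x₀ j * N j)
          + (RandersChange L σ b x₀ y₀ * Real.exp (σ x₀) / L x₀ y₀)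
              * (gten L x₀ i j y₀ * N j)
          - (RandersChange L σ b x₀ y₀ * Real.exp (σ x₀) / L x₀ y₀) * (ℓ i * (ℓ j * N j)) := by
      intro j
      rw [hgRC i j, hf'' i j]
      field_simp
      ring
    calc ∑ j, gten (RandersChange L σ b) x₀ i j y₀ * N j
        = ∑ j, ((Real.exp (σ x₀) * ℓ i + b x₀ i) * Real.exp (σ x₀) * (ℓ j * N j)
          + (Real.exp (σ x₀) * ℓ i + b x₀ i) * (b x₀ j * N j)
          + (RandersChange L σ b x₀ y₀ * Real.exp (σ x₀) / L x₀ y₀)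
              * (gten L x₀ i j y₀ * N j)
          - (RandersChange L σ b x₀ y₀ * Real.exp (σ x₀) / L x₀ y₀) * (ℓ i * (ℓ j * N j))) :=
          Finset.sum_congr rfl fun j _ => hterm j
      _ = (Real.exp (σ x₀) * ℓ i + b x₀ i) * Real.exp (σ x₀) * ∑ j, ℓ j * N j
          + (Real.exp (σ x₀) * ℓ i + b x₀ i) * ∑ j, b x₀ j * N j
          + (RandersChange L σ b x₀ y₀ * Real.exp (σ x₀) / L x₀ y₀)
              * ∑ j, gten L x₀ i j y₀ * N j
          - (RandersChange L σ b x₀ y₀ * Real.exp (σ x₀) / L x₀ y₀)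
              * (ℓ i * ∑ j, ℓ j * N j) := by
          simp only [Finset.sum_add_distrib, Finset.sum_sub_distrib, ← Finset.mul_sum]
      _ = (Real.exp (σ x₀) * RandersChange L σ b x₀ y₀ / L x₀ y₀)
            * ∑ j, gten L x₀ i j y₀ * N j := by
          rw [hlN, hbN]
          ring
  -- differentiability of the spray of L in y
  have hL2 : ContDiffOn ℝ (⊤ : ℕ∞)
      (fun p : (Fin n → ℝ) × (Fin n → ℝ) => (L p.1 p.2) ^ 2)
      (U ×ˢ {y : Fin n → ℝ | y ≠ 0}) := hL.pow 2
  have hmach := fun j r k => RRN_gten_machinery L hU hL2 hxU₀ hy j r k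
  have hgdiff : ∀ a c : Fin n, DifferentiableAt ℝ (fun z => gten L x₀ a c z) y₀ :=
    fun a c => (hmach a c a).1
  have hgmat_entry : ∀ a c : Fin n, DifferentiableAt ℝ (fun z => gmat L x₀ z a c) y₀ :=
    fun a c => hgdiff a c
  have hdet0 : (gmat L x₀ y₀).det ≠ 0 := by
    apply RRN_det_ne_zero_of_posdef
    intro w hw
    exact hposdef w hw
  have hdetev : ∀ᶠ z in nhds y₀, (gmat L x₀ z).det ≠ 0 :=
    (RRN_differentiableAt_det (fun z => gmat L x₀ z) hgmat_entry).continuousAt.eventually_ne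
      hdet0
  have hinv : ∀ a c : Fin n, DifferentiableAt ℝ (fun z => (gmat L x₀ z)⁻¹ a c) y₀ :=
    fun a c => RRN_differentiableAt_inv_entry (fun z => gmat L x₀ z) hgmat_entry hdetev a c
  have hprojcoord : ∀ m : Fin n, DifferentiableAt ℝ (fun z : Fin n → ℝ => z m) y₀ :=
    fun m => (ContinuousLinearMap.proj m : (Fin n → ℝ) →L[ℝ] ℝ).differentiableAt
  have hsprayd : ∀ i, DifferentiableAt ℝ (fun z => spray L x₀ z i) y₀ := by
    intro i
    simp only [spray]
    apply DifferentiableAt.const_mul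
    apply DifferentiableAt.fun_sum
    intro j _
    apply DifferentiableAt.fun_sum
    intro k _
    apply DifferentiableAt.mul
    apply DifferentiableAt.mul
    · apply DifferentiableAt.const_mul
      apply DifferentiableAt.fun_sum
      intro r _
      exact (hinv i r).mul
        ((((hmach j r k).2).add ((hmach k r j).2)).sub ((hmach j k r).2))
    · exact hprojcoord j
    · exact hprojcoord k
  -- key formula for the spray of the Randers change
  have hkey : ∀ i j, pdy (fun z => spray (RandersChange L σ b) x₀ z i) j y₀
      = pdy (fun z => spray L x₀ z i) j y₀
        + P x₀ y₀ * (Pi.single j 1 : Fin n → ℝ) i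
        + y₀ i * fderiv ℝ (fun z => P x₀ z) y₀ (Pi.single j 1) := by
    intro i j
    have hev : (fun z => spray (RandersChange L σ b) x₀ z i) =ᶠ[nhds y₀]
        (fun z => spray L x₀ z i + P x₀ z * z i) := by
      filter_upwards [hopen0.mem_nhds hy] with z hz
      exact hproj x₀ hxU₀ z hz i
    have hcomb : HasFDerivAt (fun z => spray L x₀ z i + P x₀ z * z i)
        (fderiv ℝ (fun z => spray L x₀ z i) y₀
          + (P x₀ y₀ • (ContinuousLinearMap.proj i : (Fin n → ℝ) →L[ℝ] ℝ)
            + y₀ i • fderiv ℝ (fun z => P x₀ z) y₀)) y₀ :=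
      (hsprayd i).hasFDerivAt.add
        (hPdiffat.hasFDerivAt.mul
          ((ContinuousLinearMap.proj i : (Fin n → ℝ) →L[ℝ] ℝ).hasFDerivAt (x := y₀)))
    unfold pdy
    rw [hev.fderiv_eq, hcomb.fderiv]
    simp [smul_eq_mul]
    ring
  -- spray contraction is unchanged
  have hTT : ∑ i, (∑ j, gten L x₀ i j y₀ * N j) *
        ((∑ β, v β * B2 xmap u β α i)
          + ∑ j, pdy (fun z => spray (RandersChange L σ b) x₀ z i) j y₀ * Bproj xmap u α j)
      = ∑ i, (∑ j, gten L x₀ i j y₀ * N j) *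
        ((∑ β, v β * B2 xmap u β α i)
          + ∑ j, pdy (fun z => spray L x₀ z i) j y₀ * Bproj xmap u α j) := by
    have hdiff : ∀ i, ∑ j, pdy (fun z => spray (RandersChange L σ b) x₀ z i) j y₀
          * Bproj xmap u α j
        = (∑ j, pdy (fun z => spray L x₀ z i) j y₀ * Bproj xmap u α j)
          + P x₀ y₀ * Bproj xmap u α i
          + y₀ i * ∑ j, fderiv ℝ (fun z => P x₀ z) y₀ (Pi.single j 1) * Bproj xmap u α j := by
      intro i
      have hmid : ∑ j, P x₀ y₀ * (Pi.single j 1 : Fin n → ℝ) i * Bproj xmap u α j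
          = P x₀ y₀ * Bproj xmap u α i := by
        rw [Finset.sum_eq_single i]
        · simp
        · intro j _ hji
          have : (Pi.single j 1 : Fin n → ℝ) i = 0 := by
            simp [Pi.single_apply, (Ne.symm hji)]
          rw [this]; ring
        · intro h; exact absurd (Finset.mem_univ i) h
      calc ∑ j, pdy (fun z => spray (RandersChange L σ b) x₀ z i) j y₀ * Bproj xmap u α j
          = ∑ j, (pdy (fun z => spray L x₀ z i) j y₀ * Bproj xmap u α j
              + P x₀ y₀ * (Pi.single j 1 : Fin n → ℝ) i * Bproj xmap u α j
              + y₀ i * (fderiv ℝ (fun z => P x₀ z) y₀ (Pi.single j 1) * Bproj xmap u α j)) :=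
            Finset.sum_congr rfl fun j _ => by rw [hkey i j]; ring
        _ = _ := by
            simp only [Finset.sum_add_distrib, ← Finset.mul_sum, hmid]
    calc ∑ i, (∑ j, gten L x₀ i j y₀ * N j) *
          ((∑ β, v β * B2 xmap u β α i)
            + ∑ j, pdy (fun z => spray (RandersChange L σ b) x₀ z i) j y₀ * Bproj xmap u α j)
        = ∑ i, ((∑ j, gten L x₀ i j y₀ * N j) *
            ((∑ β, v β * B2 xmap u β α i)
              + ∑ j, pdy (fun z => spray L x₀ z i) j y₀ * Bproj xmap u α j)
            + P x₀ y₀ * ((∑ j, gten L x₀ i j y₀ * N j) * Bproj xmap u α i)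
            + (∑ j, fderiv ℝ (fun z => P x₀ z) y₀ (Pi.single j 1) * Bproj xmap u α j)
                * ((∑ j, gten L x₀ i j y₀ * N j) * y₀ i)) := by
          refine Finset.sum_congr rfl fun i _ => ?_
          rw [hdiff i]
          ring
      _ = _ := by
          simp only [Finset.sum_add_distrib, ← Finset.mul_sum, hMy, hMB α, mul_zero, add_zero]
  -- final assembly
  have htau : tauRC L σ b x₀ y₀
      = Real.exp (σ x₀) * RandersChange L σ b x₀ y₀ / L x₀ y₀ := rfl
  have htaupos : 0 < tauRC L σ b x₀ y₀ := by
    rw [htau]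
    exact div_pos (mul_pos hA0 hLstar) hf₀
  have hspos : 0 < Real.sqrt (tauRC L σ b x₀ y₀) := Real.sqrt_pos.mpr htaupos
  have hss : Real.sqrt (tauRC L σ b x₀ y₀) * Real.sqrt (tauRC L σ b x₀ y₀)
      = tauRC L σ b x₀ y₀ := Real.mul_self_sqrt htaupos.le
  have hrow : ∀ i, ∑ j, gten (RandersChange L σ b) x₀ i j y₀
        * (N j / Real.sqrt (tauRC L σ b x₀ y₀))
      = Real.sqrt (tauRC L σ b x₀ y₀) * ∑ j, gten L x₀ i j y₀ * N j := by
    intro i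
    have h1 : ∑ j, gten (RandersChange L σ b) x₀ i j y₀
          * (N j / Real.sqrt (tauRC L σ b x₀ y₀))
        = (∑ j, gten (RandersChange L σ b) x₀ i j y₀ * N j)
            / Real.sqrt (tauRC L σ b x₀ y₀) := by
      rw [Finset.sum_div]
      exact Finset.sum_congr rfl fun j _ => by ring
    rw [h1, hgRCN i, ← htau]
    field_simp
    linear_combination (-(∑ j, gten L x₀ i j y₀ * N j)) * hss
  calc ∑ i, (∑ j, gten (RandersChange L σ b) x₀ i j y₀
        * (N j / Real.sqrt (tauRC L σ b x₀ y₀))) *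
        ((∑ β, v β * B2 xmap u β α i)
          + ∑ j, pdy (fun z => spray (RandersChange L σ b) x₀ z i) j y₀ * Bproj xmap u α j)
      = Real.sqrt (tauRC L σ b x₀ y₀) * ∑ i, (∑ j, gten L x₀ i j y₀ * N j) *
        ((∑ β, v β * B2 xmap u β α i)
          + ∑ j, pdy (fun z => spray (RandersChange L σ b) x₀ z i) j y₀
              * Bproj xmap u α j) := by
        rw [Finset.mul_sum]
        exact Finset.sum_congr rfl fun i _ => by rw [hrow i]; ring
    _ = Real.sqrt (tauRC L σ b x₀ y₀) * ∑ i, (∑ j, gten L x₀ i j y₀ * N j) *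
        ((∑ β, v β * B2 xmap u β α i)
          + ∑ j, pdy (fun z => spray L x₀ z i) j y₀ * Bproj xmap u α j) := by
        rw [hTT]
end

section
/- Let x : V → U (V ⊆ ℝ^{n−1} open) be a smooth hypersurface parametrization with projection factors B^i_α = ∂x^i/∂u^α of rank n−1, with supporting element y^i = Σ_α B^i_α(u) v^α ≠ 0 at each (u,v). Assume g_{ij} is positive definite along the hypersurface, L* > 0, Σ_i b_i N^i = 0 along the hypersurface (N the unit normal of (U,L)), and that the Randers conformal change is projective: G*^i = G^i + P y^i for a smooth scalar P. Then the hypersurface is totally geodesic in (U, L) (i.e., its normal curvature H_α vanishes identically) if and only if it is totally geodesic in (U, L*) (i.e., the normal curvature H*_α computed from L* with unit normal N* = N/√τ vanishes identically). -/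
open Real

section helpers
variable {n : ℕ}

lemma sum_single_mul (c : Fin n → ℝ) (i : Fin n) :
    ∑ j, (Pi.single j 1 : Fin n → ℝ) i * c j = c i := by
  simp [Pi.single_apply]

lemma clm_eq_sum (T : (Fin n → ℝ) →L[ℝ] ℝ) (y : Fin n → ℝ) :
    T y = ∑ i, y i * T (Pi.single i 1) := by
  have hy : y = ∑ i, y i • (Pi.single i 1 : Fin n → ℝ) := by
    funext j
    simp [Pi.single_apply]
  conv_lhs => rw [hy]
  rw [map_sum]
  simp [smul_eq_mul]

lemma euler {f : (Fin n → ℝ) → ℝ} {y : Fin n → ℝ} (hf : DifferentiableAt ℝ f y)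
    (k : ℕ) (hhom : ∀ c : ℝ, 0 < c → f (c • y) = c ^ k * f y) :
    fderiv ℝ f y y = k * f y := by
  have hone : (1:ℝ) • y = y := one_smul _ _
  have hc : HasDerivAt (fun c : ℝ => c • y) y 1 := by
    simpa using (hasDerivAt_id (1:ℝ)).smul_const y
  have h1 : HasDerivAt (fun c : ℝ => f (c • y)) (fderiv ℝ f y y) 1 := by
    have hf' : HasFDerivAt f (fderiv ℝ f y) ((1:ℝ) • y) := by
      rw [hone]; exact hf.hasFDerivAt
    exact hf'.comp_hasDerivAt 1 hc
  have h2 : HasDerivAt (fun c : ℝ => c ^ k * f y) ((k : ℝ) * f y) 1 := by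
    simpa using ((hasDerivAt_pow k (1:ℝ)).mul_const (f y))
  have hev : (fun c : ℝ => f (c • y)) =ᶠ[nhds (1:ℝ)] fun c => c ^ k * f y := by
    filter_upwards [eventually_gt_nhds zero_lt_one] with c hc using hhom c hc
  exact (h1.congr_of_eventuallyEq hev.symm).unique h2
lemma diffAt_finset_prod {ι : Type*} [DecidableEq ι] {g : ι → (Fin n → ℝ) → ℝ}
    {y : Fin n → ℝ} (s : Finset ι) (h : ∀ i ∈ s, DifferentiableAt ℝ (g i) y) :
    DifferentiableAt ℝ (fun z => ∏ i ∈ s, g i z) y := by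
  classical
  induction s using Finset.induction_on with
  | empty => simpa using differentiableAt_const (1:ℝ)
  | insert _ _ hx ih =>
    rename_i a s'
    simp only [Finset.prod_insert hx]
    exact (h a (Finset.mem_insert_self a s')).mul
      (ih fun i hi => h i (Finset.mem_insert_of_mem hi))

lemma diffAt_det {A : (Fin n → ℝ) → Matrix (Fin n) (Fin n) ℝ} {y : Fin n → ℝ}
    (h : ∀ i j, DifferentiableAt ℝ (fun z => A z i j) y) :
    DifferentiableAt ℝ (fun z => (A z).det) y := by
  have hrw : (fun z => (A z).det)
      = fun z => ∑ σ : Equiv.Perm (Fin n), ((Equiv.Perm.sign σ : ℤ) : ℝ) * ∏ i, A z (σ i) i := by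
    funext z
    rw [Matrix.det_apply']
  rw [hrw]
  exact DifferentiableAt.fun_sum fun σ _ =>
    ((diffAt_finset_prod Finset.univ fun i _ => h (σ i) i).const_mul _)


end helpers

section onefun
variable {n : ℕ}

lemma isOpen_ne0 : IsOpen {z : Fin n → ℝ | z ≠ 0} := isOpen_ne

noncomputable def bclm {n : ℕ} (bb : Fin n → ℝ) : (Fin n → ℝ) →L[ℝ] ℝ :=
  ∑ k, bb k • ContinuousLinearMap.proj k

lemma bclm_apply (bb w : Fin n → ℝ) : bclm bb w = ∑ k, bb k * w k := by
  simp [bclm]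

lemma bclm_single (bb : Fin n → ℝ) (j : Fin n) : bclm bb (Pi.single j 1) = bb j := by
  rw [bclm_apply]; simp [Pi.single_apply]

variable {f : (Fin n → ℝ) → ℝ} {y0 : Fin n → ℝ}

lemma diffAt_ne0 (hf : ContDiffOn ℝ (⊤:ℕ∞) f {z : Fin n → ℝ | z ≠ 0})
    {z : Fin n → ℝ} (hz : z ≠ 0) : DifferentiableAt ℝ f z :=
  (hf.contDiffAt (isOpen_ne0.mem_nhds hz)).differentiableAt (by simp)

lemma fderiv_contDiffOn (hf : ContDiffOn ℝ (⊤:ℕ∞) f {z : Fin n → ℝ | z ≠ 0}) :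
    ContDiffOn ℝ (⊤:ℕ∞) (fun z => fderiv ℝ f z) {z : Fin n → ℝ | z ≠ 0} :=
  hf.fderiv_of_isOpen isOpen_ne0 (by exact le_of_eq rfl)

lemma gj_diffAt (hf : ContDiffOn ℝ (⊤:ℕ∞) f {z : Fin n → ℝ | z ≠ 0})
    (hy0 : y0 ≠ 0) (j : Fin n) :
    DifferentiableAt ℝ (fun z => fderiv ℝ f z (Pi.single j 1)) y0 := by
  have h1 := ((fderiv_contDiffOn hf).contDiffAt (isOpen_ne0.mem_nhds hy0))
  exact (h1.clm_apply contDiffAt_const).differentiableAt (by simp)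

/-- scaling invariance of the derivative of a 1-homogeneous function -/
lemma fderiv_scale (hf : ContDiffOn ℝ (⊤:ℕ∞) f {z : Fin n → ℝ | z ≠ 0})
    (hhom : ∀ z : Fin n → ℝ, z ≠ 0 → ∀ c : ℝ, 0 < c → f (c • z) = c * f z)
    {z : Fin n → ℝ} (hz : z ≠ 0) {c : ℝ} (hc : 0 < c) :
    fderiv ℝ f (c • z) = fderiv ℝ f z := by
  have hcz : c • z ≠ 0 := smul_ne_zero (ne_of_gt hc) hz
  set m : (Fin n → ℝ) →L[ℝ] (Fin n → ℝ) := c • ContinuousLinearMap.id ℝ (Fin n → ℝ) with hm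
  have hmz : ∀ w : Fin n → ℝ, m w = c • w := fun w => rfl
  have hev : (fun w => f (m w)) =ᶠ[nhds z] fun w => c * f w := by
    filter_upwards [isOpen_ne0.mem_nhds hz] with w hw
    exact hhom w hw c hc
  have key : HasFDerivAt (fun w : Fin n → ℝ => f (c • w)) ((fderiv ℝ f (c • z)).comp m) z :=
    (diffAt_ne0 hf hcz).hasFDerivAt.comp z m.hasFDerivAt
  have hψ : HasFDerivAt (fun w => c * f w) (c • fderiv ℝ f z) z :=
    (diffAt_ne0 hf hz).hasFDerivAt.const_mul c
  have heq : (fderiv ℝ f (c • z)).comp m = c • fderiv ℝ f z :=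
    (key.congr_of_eventuallyEq hev.symm).unique hψ
  ext w
  have := DFunLike.congr_fun heq w
  simp only [ContinuousLinearMap.comp_apply, hmz, map_smul, smul_eq_mul,
    ContinuousLinearMap.coe_smul', Pi.smul_apply] at this
  exact mul_left_cancel₀ (ne_of_gt hc) this

lemma euler_a (hf : ContDiffOn ℝ (⊤:ℕ∞) f {z : Fin n → ℝ | z ≠ 0}) (hy0 : y0 ≠ 0)
    (hhom : ∀ z : Fin n → ℝ, z ≠ 0 → ∀ c : ℝ, 0 < c → f (c • z) = c * f z) :
    ∑ i, y0 i * pdy f i y0 = f y0 := by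
  have h := euler (diffAt_ne0 hf hy0) 1 (fun c hc => by rw [pow_one]; exact hhom y0 hy0 c hc)
  simp only [pdy]
  rw [← clm_eq_sum (fderiv ℝ f y0) y0, h]
  simp

lemma euler_b (hf : ContDiffOn ℝ (⊤:ℕ∞) f {z : Fin n → ℝ | z ≠ 0}) (hy0 : y0 ≠ 0)
    (hhom : ∀ z : Fin n → ℝ, z ≠ 0 → ∀ c : ℝ, 0 < c → f (c • z) = c * f z) (j : Fin n) :
    ∑ i, y0 i * pdy2 f i j y0 = 0 := by
  set g : (Fin n → ℝ) → ℝ := fun z => fderiv ℝ f z (Pi.single j 1) with hg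
  have hgd : DifferentiableAt ℝ g y0 := gj_diffAt hf hy0 j
  have hgh : ∀ c : ℝ, 0 < c → g (c • y0) = c ^ 0 * g y0 := by
    intro c hc
    simp only [g, pow_zero, one_mul, fderiv_scale hf hhom hy0 hc]
  have h := euler hgd 0 hgh
  simp only [Nat.cast_zero, zero_mul] at h
  have h2 := clm_eq_sum (fderiv ℝ g y0) y0
  rw [h] at h2
  simp only [pdy2]
  rw [← h2]

end onefun

section sq
variable {n : ℕ} {f : (Fin n → ℝ) → ℝ} {y0 : Fin n → ℝ}

lemma pdy2_sq_s13 (hf : ContDiffOn ℝ (⊤:ℕ∞) f {z : Fin n → ℝ | z ≠ 0}) (hy0 : y0 ≠ 0)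
    (s : ℝ) (bb : Fin n → ℝ) (i j : Fin n) :
    pdy2 (fun z => (Real.exp s * f z + ∑ k, bb k * z k)^2) i j y0
      = 2 * ((Real.exp s * pdy f i y0 + bb i) * (Real.exp s * pdy f j y0 + bb j))
        + 2 * (Real.exp s * f y0 + ∑ k, bb k * y0 k) * (Real.exp s * pdy2 f i j y0) := by
  have hrw : (fun z : Fin n → ℝ => (Real.exp s * f z + ∑ k, bb k * z k)^2)
      = fun z => (Real.exp s * f z + bclm bb z) * (Real.exp s * f z + bclm bb z) := by
    funext z; rw [bclm_apply]; ring
  rw [hrw]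
  set q : (Fin n → ℝ) → ℝ := fun z => Real.exp s * f z + bclm bb z with hq
  have hqd : ∀ z : Fin n → ℝ, z ≠ 0 → DifferentiableAt ℝ q z := fun z hz =>
    ((diffAt_ne0 hf hz).const_mul _).add (bclm bb).differentiableAt
  have hqf : ∀ z : Fin n → ℝ, z ≠ 0 → ∀ m : Fin n,
      fderiv ℝ q z (Pi.single m 1) = Real.exp s * fderiv ℝ f z (Pi.single m 1) + bb m := by
    intro z hz m
    have : fderiv ℝ q z = Real.exp s • fderiv ℝ f z + bclm bb := by
      rw [hq]
      rw [fderiv_fun_add ((diffAt_ne0 hf hz).const_mul _) (bclm bb).differentiableAt,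
        fderiv_const_mul (diffAt_ne0 hf hz), (bclm bb).fderiv]
    rw [this]
    simp [bclm_single]
  -- first derivative of the square
  have hsq1 : ∀ z : Fin n → ℝ, z ≠ 0 →
      fderiv ℝ (fun w => q w * q w) z (Pi.single j 1)
        = 2 * q z * (Real.exp s * fderiv ℝ f z (Pi.single j 1) + bb j) := by
    intro z hz
    rw [fderiv_fun_mul (hqd z hz) (hqd z hz)]
    simp only [ContinuousLinearMap.add_apply, ContinuousLinearMap.coe_smul',
      Pi.smul_apply, smul_eq_mul]
    rw [hqf z hz j]
    ring
  have hev : (fun z => fderiv ℝ (fun w => q w * q w) z (Pi.single j 1))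
      =ᶠ[nhds y0] fun z => 2 * q z * (Real.exp s * fderiv ℝ f z (Pi.single j 1) + bb j) := by
    filter_upwards [isOpen_ne0.mem_nhds hy0] with z hz
    exact hsq1 z hz
  have hgd := gj_diffAt hf hy0 j
  have hwd : DifferentiableAt ℝ
      (fun z => Real.exp s * fderiv ℝ f z (Pi.single j 1) + bb j) y0 :=
    (hgd.const_mul _).add_const _
  have hud : DifferentiableAt ℝ (fun z => 2 * q z) y0 := (hqd y0 hy0).const_mul 2
  simp only [pdy2]
  rw [hev.fderiv_eq]
  have hmul : (fun z => 2 * q z * (Real.exp s * fderiv ℝ f z (Pi.single j 1) + bb j))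
      = fun z => (fun w => 2 * q w) z * ((fun w => Real.exp s * fderiv ℝ f w (Pi.single j 1) + bb j) z) := rfl
  rw [hmul, fderiv_fun_mul hud hwd]
  simp only [ContinuousLinearMap.add_apply, ContinuousLinearMap.coe_smul',
    Pi.smul_apply, smul_eq_mul]
  rw [fderiv_const_mul (hqd y0 hy0), fderiv_fun_add (hgd.const_mul _) (differentiableAt_const _),
    fderiv_const_mul hgd, fderiv_fun_const]
  simp only [ContinuousLinearMap.add_apply, ContinuousLinearMap.coe_smul',
    Pi.smul_apply, smul_eq_mul, ContinuousLinearMap.zero_apply, add_zero]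
  rw [hqf y0 hy0 i]
  simp only [pdy, pdy2, hq, bclm_apply, Pi.zero_apply, ContinuousLinearMap.zero_apply]
  ring

end sq

section contract
variable {n : ℕ} {f : (Fin n → ℝ) → ℝ} {y0 : Fin n → ℝ}

lemma sq_expand (hf : ContDiffOn ℝ (⊤:ℕ∞) f {z : Fin n → ℝ | z ≠ 0}) (hy0 : y0 ≠ 0)
    (a c : Fin n) :
    pdy2 (fun z => f z ^ 2) a c y0
      = 2 * (pdy f a y0 * pdy f c y0) + 2 * f y0 * pdy2 f a c y0 := by
  have h0 := pdy2_sq_s13 hf hy0 0 (0 : Fin n → ℝ) a c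
  have hrw : (fun z : Fin n → ℝ => (Real.exp 0 * f z + ∑ k, (0 : Fin n → ℝ) k * z k) ^ 2)
      = fun z => f z ^ 2 := by
    funext z; simp
  rw [hrw] at h0
  rw [h0]
  simp

lemma gstar_contract (hf : ContDiffOn ℝ (⊤:ℕ∞) f {z : Fin n → ℝ | z ≠ 0}) (hy0 : y0 ≠ 0)
    (hpos : 0 < f y0)
    (hhom : ∀ z : Fin n → ℝ, z ≠ 0 → ∀ c : ℝ, 0 < c → f (c • z) = c * f z)
    (s : ℝ) (bb N : Fin n → ℝ)
    (hyN : ∑ i, y0 i * ∑ j, ((1/2) * pdy2 (fun z => f z ^ 2) i j y0) * N j = 0)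
    (hbN : ∑ j, bb j * N j = 0) (i : Fin n) :
    ∑ j, ((1/2) * pdy2 (fun z => (Real.exp s * f z + ∑ k, bb k * z k) ^ 2) i j y0) * N j
      = (Real.exp s * (Real.exp s * f y0 + ∑ k, bb k * y0 k) / f y0)
          * ∑ j, ((1/2) * pdy2 (fun z => f z ^ 2) i j y0) * N j := by
  set D : Fin n → ℝ := fun m => pdy f m y0 with hD
  set H : Fin n → Fin n → ℝ := fun a c => pdy2 f a c y0 with hH
  set f0 : ℝ := f y0
  set es : ℝ := Real.exp s
  set β0 : ℝ := ∑ k, bb k * y0 k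
  have e1 : ∀ a, ∑ j, ((1/2) * pdy2 (fun z => f z ^ 2) a j y0) * N j
      = D a * (∑ j, D j * N j) + f0 * ∑ j, H a j * N j := by
    intro a
    rw [Finset.mul_sum, Finset.mul_sum, ← Finset.sum_add_distrib]
    refine Finset.sum_congr rfl fun j _ => ?_
    rw [sq_expand hf hy0 a j]
    simp only [hD, hH]
    ring
  -- derive  ∑ j, D j * N j = 0
  have hyD : ∑ m, y0 m * D m = f0 := euler_a hf hy0 hhom
  have hyH : ∀ j, ∑ m, y0 m * H m j = 0 := euler_b hf hy0 hhom
  have hT : ∑ m, y0 m * ∑ j, H m j * N j = 0 := by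
    have : ∑ m, y0 m * ∑ j, H m j * N j = ∑ j, (∑ m, y0 m * H m j) * N j := by
      simp_rw [Finset.mul_sum, Finset.sum_mul, mul_assoc]
      rw [Finset.sum_comm]
    rw [this]
    simp [hyH]
  have hDN : ∑ j, D j * N j = 0 := by
    have h2 : ∑ m, y0 m * (D m * (∑ j, D j * N j) + f0 * ∑ j, H m j * N j) = 0 := by
      rw [← hyN]
      exact (Finset.sum_congr rfl fun m _ => by rw [e1 m]).symm
    have h3 : (∑ m, y0 m * D m) * (∑ j, D j * N j)
        + f0 * ∑ m, y0 m * ∑ j, H m j * N j = 0 := by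
      rw [← h2, Finset.sum_mul, Finset.mul_sum, ← Finset.sum_add_distrib]
      exact Finset.sum_congr rfl fun m _ => by ring
    rw [hyD, hT, mul_zero, add_zero] at h3
    exact (mul_eq_zero.1 h3).resolve_left (ne_of_gt hpos)
  have e2 : ∀ j, ((1/2) * pdy2 (fun z => (Real.exp s * f z + ∑ k, bb k * z k) ^ 2) i j y0) * N j
      = es * (es * D i + bb i) * (D j * N j) + (es * D i + bb i) * (bb j * N j)
        + (es * f0 + β0) * es * (H i j * N j) := by
    intro j
    rw [pdy2_sq_s13 hf hy0 s bb i j]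
    simp only [hD, hH]
    ring
  rw [Finset.sum_congr rfl fun j _ => e2 j]
  rw [Finset.sum_add_distrib, Finset.sum_add_distrib, ← Finset.mul_sum, ← Finset.mul_sum,
    ← Finset.mul_sum, hDN, hbN, e1 i, hDN]
  field_simp
  ring

end contract

section spraydiff
variable {n : ℕ} {U : Set (Fin n → ℝ)} {L : (Fin n → ℝ) → (Fin n → ℝ) → ℝ}
  {x0 y0 : Fin n → ℝ}

lemma diff_coord {j : Fin n} : DifferentiableAt ℝ (fun z : Fin n → ℝ => z j) y0 :=
  (ContinuousLinearMap.proj j : (Fin n → ℝ) →L[ℝ] ℝ).differentiableAt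

lemma fderiv_coord (j : Fin n) : fderiv ℝ (fun z : Fin n → ℝ => z j) y0
    = (ContinuousLinearMap.proj j : (Fin n → ℝ) →L[ℝ] ℝ) :=
  (ContinuousLinearMap.proj j : (Fin n → ℝ) →L[ℝ] ℝ).fderiv

lemma gten_contDiffAt (hU : IsOpen U)
    (hL : ContDiffOn ℝ (⊤ : ℕ∞)
      (fun p : (Fin n → ℝ) × (Fin n → ℝ) => L p.1 p.2)
      (U ×ˢ {y : Fin n → ℝ | y ≠ 0}))
    (hx0 : x0 ∈ U) (hy0 : y0 ≠ 0) (a c : Fin n) :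
    ContDiffAt ℝ (⊤ : ℕ∞) (fun p : (Fin n → ℝ) × (Fin n → ℝ) => gten L p.1 a c p.2) (x0, y0) := by
  have hW : IsOpen (U ×ˢ {y : Fin n → ℝ | y ≠ 0}) := hU.prod isOpen_ne0
  have hmemW : (x0, y0) ∈ U ×ˢ {y : Fin n → ℝ | y ≠ 0} := ⟨hx0, hy0⟩
  have hF2 : ∀ p ∈ U ×ˢ {y : Fin n → ℝ | y ≠ 0},
      ContDiffAt ℝ (⊤ : ℕ∞) (fun q : (Fin n → ℝ) × (Fin n → ℝ) => (L q.1 q.2) ^ 2) p :=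
    fun p hp => (hL.contDiffAt (hW.mem_nhds hp)).pow 2
  -- the smooth reshuffling map ((x,y),z) ↦ (x,z)
  have hlin : ContDiff ℝ (⊤ : ℕ∞)
      (fun q : ((Fin n → ℝ) × (Fin n → ℝ)) × (Fin n → ℝ) => (q.1.1, q.2)) :=
    (contDiff_fst.comp contDiff_fst).prodMk contDiff_snd
  -- first y-derivative, jointly smooth
  have hA : ∀ p ∈ U ×ˢ {y : Fin n → ℝ | y ≠ 0},
      ContDiffAt ℝ (⊤ : ℕ∞)
        (fun p : (Fin n → ℝ) × (Fin n → ℝ) =>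
          fderiv ℝ (fun z => (L p.1 z) ^ 2) p.2) p := by
    intro p hp
    refine ContDiffAt.fderiv (f := fun (p : (Fin n → ℝ) × (Fin n → ℝ)) (z : Fin n → ℝ) =>
      (L p.1 z) ^ 2) (g := Prod.snd) ?_ contDiffAt_snd (by exact le_of_eq rfl)
    have h1 : ContDiffAt ℝ (⊤ : ℕ∞)
        ((fun q : (Fin n → ℝ) × (Fin n → ℝ) => (L q.1 q.2) ^ 2)
          ∘ (fun q : ((Fin n → ℝ) × (Fin n → ℝ)) × (Fin n → ℝ) => (q.1.1, q.2)))
        (p, p.2) := by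
      refine ContDiffAt.comp _ ?_ hlin.contDiffAt
      exact hF2 p hp
    exact h1.congr_of_eventuallyEq (Filter.Eventually.of_forall fun q => rfl)
  have hA1 : ∀ p ∈ U ×ˢ {y : Fin n → ℝ | y ≠ 0},
      ContDiffAt ℝ (⊤ : ℕ∞)
        (fun p : (Fin n → ℝ) × (Fin n → ℝ) =>
          fderiv ℝ (fun z => (L p.1 z) ^ 2) p.2 (Pi.single c 1)) p :=
    fun p hp => (hA p hp).clm_apply contDiffAt_const
  have hB : ContDiffAt ℝ (⊤ : ℕ∞)
      (fun p : (Fin n → ℝ) × (Fin n → ℝ) =>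
        fderiv ℝ (fun w => fderiv ℝ (fun z => (L p.1 z) ^ 2) w (Pi.single c 1)) p.2) (x0, y0) := by
    refine ContDiffAt.fderiv (f := fun (p : (Fin n → ℝ) × (Fin n → ℝ)) (w : Fin n → ℝ) =>
      fderiv ℝ (fun z => (L p.1 z) ^ 2) w (Pi.single c 1)) (g := Prod.snd) ?_ contDiffAt_snd
      (by exact le_of_eq rfl)
    have h1 : ContDiffAt ℝ (⊤ : ℕ∞)
        ((fun p : (Fin n → ℝ) × (Fin n → ℝ) =>
            fderiv ℝ (fun z => (L p.1 z) ^ 2) p.2 (Pi.single c 1))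
          ∘ (fun q : ((Fin n → ℝ) × (Fin n → ℝ)) × (Fin n → ℝ) => (q.1.1, q.2)))
        ((x0, y0), y0) := by
      refine ContDiffAt.comp _ ?_ hlin.contDiffAt
      exact hA1 (x0, y0) hmemW
    exact h1.congr_of_eventuallyEq (Filter.Eventually.of_forall fun q => rfl)
  have := (hB.clm_apply (contDiffAt_const (c := (Pi.single a 1 : Fin n → ℝ)))).const_smul (1/2 : ℝ)
  exact this.congr_of_eventuallyEq (by
    filter_upwards with p
    simp [gten, pdy2, smul_eq_mul])

lemma gten_slice_contDiffAt (hU : IsOpen U)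
    (hL : ContDiffOn ℝ (⊤ : ℕ∞)
      (fun p : (Fin n → ℝ) × (Fin n → ℝ) => L p.1 p.2)
      (U ×ˢ {y : Fin n → ℝ | y ≠ 0}))
    (hx0 : x0 ∈ U) (hy0 : y0 ≠ 0) (a c : Fin n) :
    ContDiffAt ℝ (⊤ : ℕ∞) (fun z => gten L x0 a c z) y0 := by
  have h := gten_contDiffAt hU hL hx0 hy0 a c
  have h1 : ContDiffAt ℝ (⊤ : ℕ∞)
      ((fun p : (Fin n → ℝ) × (Fin n → ℝ) => gten L p.1 a c p.2)
        ∘ (fun z : Fin n → ℝ => (x0, z))) y0 := by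
    refine ContDiffAt.comp _ ?_ ((contDiff_const.prodMk contDiff_id).contDiffAt)
    exact h
  exact h1.congr_of_eventuallyEq (Filter.Eventually.of_forall fun q => rfl)

lemma pdx_gten_diffAt (hU : IsOpen U)
    (hL : ContDiffOn ℝ (⊤ : ℕ∞)
      (fun p : (Fin n → ℝ) × (Fin n → ℝ) => L p.1 p.2)
      (U ×ˢ {y : Fin n → ℝ | y ≠ 0}))
    (hx0 : x0 ∈ U) (hy0 : y0 ≠ 0) (a c k : Fin n) :
    DifferentiableAt ℝ (fun z => pdx (fun x' => gten L x' a c z) k x0) y0 := by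
  have hswap : ContDiffAt ℝ (⊤ : ℕ∞)
      (fun q : (Fin n → ℝ) × (Fin n → ℝ) => gten L q.2 a c q.1) (y0, x0) := by
    have h := gten_contDiffAt hU hL hx0 hy0 a c
    have hsw : ContDiff ℝ (⊤ : ℕ∞)
        (fun q : (Fin n → ℝ) × (Fin n → ℝ) => (q.2, q.1)) :=
      contDiff_snd.prodMk contDiff_fst
    have h1 : ContDiffAt ℝ (⊤ : ℕ∞)
        ((fun p : (Fin n → ℝ) × (Fin n → ℝ) => gten L p.1 a c p.2)
          ∘ (fun q : (Fin n → ℝ) × (Fin n → ℝ) => (q.2, q.1))) (y0, x0) := by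
      refine ContDiffAt.comp _ ?_ hsw.contDiffAt
      exact h
    exact h1.congr_of_eventuallyEq (Filter.Eventually.of_forall fun q => rfl)
  have hfd : ContDiffAt ℝ (⊤ : ℕ∞)
      (fun z => fderiv ℝ (fun x' => gten L x' a c z) x0) y0 := by
    refine ContDiffAt.fderiv (f := fun (z : Fin n → ℝ) (x' : Fin n → ℝ) => gten L x' a c z)
      (g := fun _ => x0) ?_ contDiffAt_const (by exact le_of_eq rfl)
    exact hswap
  exact ((hfd.clm_apply contDiffAt_const).differentiableAt (by simp))

lemma inv_entry_diffAt (hU : IsOpen U)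
    (hL : ContDiffOn ℝ (⊤ : ℕ∞)
      (fun p : (Fin n → ℝ) × (Fin n → ℝ) => L p.1 p.2)
      (U ×ˢ {y : Fin n → ℝ | y ≠ 0}))
    (hx0 : x0 ∈ U) (hy0 : y0 ≠ 0) (hdet : (gmat L x0 y0).det ≠ 0) (i r : Fin n) :
    DifferentiableAt ℝ (fun z => (gmat L x0 z)⁻¹ i r) y0 := by
  have hentry : ∀ a c : Fin n, DifferentiableAt ℝ (fun z => gmat L x0 z a c) y0 := fun a c =>
    ((gten_slice_contDiffAt hU hL hx0 hy0 a c).differentiableAt (by simp))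
  have hdetd : DifferentiableAt ℝ (fun z => (gmat L x0 z).det) y0 := diffAt_det hentry
  have hadj : DifferentiableAt ℝ (fun z => (gmat L x0 z).adjugate i r) y0 := by
    have : (fun z => (gmat L x0 z).adjugate i r)
        = fun z => ((gmat L x0 z).updateRow r (Pi.single i 1)).det := by
      funext z; rw [Matrix.adjugate_apply]
    rw [this]
    refine diffAt_det fun a c => ?_
    by_cases ha : a = r
    · simp only [Matrix.updateRow_apply, ha, if_true]
      exact differentiableAt_const _
    · simp only [Matrix.updateRow_apply, ha, if_false]
      exact hentry a c
  have hrw : (fun z => (gmat L x0 z)⁻¹ i r)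
      = fun z => ((gmat L x0 z).det)⁻¹ * (gmat L x0 z).adjugate i r := by
    funext z
    rw [Matrix.inv_def, Ring.inverse_eq_inv]
    simp [smul_eq_mul]
  rw [hrw]
  exact (hdetd.inv hdet).mul hadj

lemma spray_diffAt (hU : IsOpen U)
    (hL : ContDiffOn ℝ (⊤ : ℕ∞)
      (fun p : (Fin n → ℝ) × (Fin n → ℝ) => L p.1 p.2)
      (U ×ˢ {y : Fin n → ℝ | y ≠ 0}))
    (hx0 : x0 ∈ U) (hy0 : y0 ≠ 0) (hdet : (gmat L x0 y0).det ≠ 0) (i : Fin n) :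
    DifferentiableAt ℝ (fun z => spray L x0 z i) y0 := by
  simp only [spray]
  refine DifferentiableAt.const_mul ?_ _
  refine DifferentiableAt.fun_sum fun j _ => DifferentiableAt.fun_sum fun k _ => ?_
  refine DifferentiableAt.mul (DifferentiableAt.mul ?_ diff_coord) diff_coord
  refine DifferentiableAt.const_mul ?_ _
  refine DifferentiableAt.fun_sum fun r _ => ?_
  refine (inv_entry_diffAt hU hL hx0 hy0 hdet i r).mul ?_
  exact ((pdx_gten_diffAt hU hL hx0 hy0 j r k).add
    (pdx_gten_diffAt hU hL hx0 hy0 k r j)).sub (pdx_gten_diffAt hU hL hx0 hy0 j k r)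

end spraydiff
/-- Under a projective Randers conformal change, with `b` tangential along the hypersurface,
the hypersurface is totally geodesic in `(U, L)` (its normal curvature `H_α` vanishes
identically) if and only if it is totally geodesic in `(U, L*)` (the normal curvature
`H*_α` computed from `L*` with the unit normal `N* = N/√τ` vanishes identically). -/
theorem randers_conformal_totally_geodesic
    {n : ℕ} (U : Set (Fin n → ℝ)) (hU : IsOpen U)
    (L : (Fin n → ℝ) → (Fin n → ℝ) → ℝ)
    (hL : ContDiffOn ℝ (⊤ : ℕ∞)
      (fun p : (Fin n → ℝ) × (Fin n → ℝ) => L p.1 p.2)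
      (U ×ˢ {y : Fin n → ℝ | y ≠ 0}))
    (hLpos : ∀ x ∈ U, ∀ y : Fin n → ℝ, y ≠ 0 → 0 < L x y)
    (hLhom : ∀ x ∈ U, ∀ y : Fin n → ℝ, y ≠ 0 → ∀ c : ℝ, 0 < c →
      L x (c • y) = c * L x y)
    (σ : (Fin n → ℝ) → ℝ) (hσ : ContDiffOn ℝ (⊤ : ℕ∞) σ U)
    (b : (Fin n → ℝ) → (Fin n → ℝ)) (hb : ContDiffOn ℝ (⊤ : ℕ∞) b U)
    (V : Set (Fin (n - 1) → ℝ)) (hV : IsOpen V)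
    (xmap : (Fin (n - 1) → ℝ) → (Fin n → ℝ))
    (hxmap : ContDiffOn ℝ (⊤ : ℕ∞) xmap V)
    (hxU : ∀ u ∈ V, xmap u ∈ U)
    (hrank : ∀ u ∈ V,
      LinearIndependent ℝ (fun α : Fin (n - 1) => fun i => Bproj xmap u α i))
    (N : (Fin (n - 1) → ℝ) → (Fin (n - 1) → ℝ) → (Fin n → ℝ))
    (hposdef : ∀ u ∈ V, ∀ v : Fin (n - 1) → ℝ, yvec xmap u v ≠ 0 →
      ∀ w : Fin n → ℝ, w ≠ 0 →
        0 < ∑ i, ∑ j, gten L (xmap u) i j (yvec xmap u v) * w i * w j)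
    (hLstar : ∀ u ∈ V, ∀ v : Fin (n - 1) → ℝ, yvec xmap u v ≠ 0 →
      0 < RandersChange L σ b (xmap u) (yvec xmap u v))
    (hN1 : ∀ u ∈ V, ∀ v : Fin (n - 1) → ℝ, yvec xmap u v ≠ 0 →
      ∀ α, ∑ i, ∑ j,
        gten L (xmap u) i j (yvec xmap u v) * Bproj xmap u α i * N u v j = 0)
    (hN2 : ∀ u ∈ V, ∀ v : Fin (n - 1) → ℝ, yvec xmap u v ≠ 0 →
      ∑ i, ∑ j, gten L (xmap u) i j (yvec xmap u v) * N u v i * N u v j = 1)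
    (hbN : ∀ u ∈ V, ∀ v : Fin (n - 1) → ℝ, yvec xmap u v ≠ 0 →
      ∑ i, b (xmap u) i * N u v i = 0)
    (P : (Fin n → ℝ) → (Fin n → ℝ) → ℝ)
    (hP : ContDiffOn ℝ (⊤ : ℕ∞)
      (fun p : (Fin n → ℝ) × (Fin n → ℝ) => P p.1 p.2)
      (U ×ˢ {y : Fin n → ℝ | y ≠ 0}))
    (hproj : ∀ x ∈ U, ∀ y : Fin n → ℝ, y ≠ 0 → ∀ i : Fin n,
      spray (RandersChange L σ b) x y i = spray L x y i + P x y * y i) :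
    (∀ u ∈ V, ∀ v : Fin (n - 1) → ℝ, yvec xmap u v ≠ 0 →
      ∀ α : Fin (n - 1), normalCurv L xmap u v (N u v) α = 0) ↔
    (∀ u ∈ V, ∀ v : Fin (n - 1) → ℝ, yvec xmap u v ≠ 0 →
      ∀ α : Fin (n - 1),
        normalCurv (RandersChange L σ b) xmap u v
          (fun i => N u v i /
            Real.sqrt (tauRC L σ b (xmap u) (yvec xmap u v))) α = 0) := by
  classical
  have key : ∀ u ∈ V, ∀ v : Fin (n - 1) → ℝ, yvec xmap u v ≠ 0 → ∀ α : Fin (n - 1),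
      normalCurv (RandersChange L σ b) xmap u v
          (fun i => N u v i / Real.sqrt (tauRC L σ b (xmap u) (yvec xmap u v))) α
        = Real.sqrt (tauRC L σ b (xmap u) (yvec xmap u v)) *
            normalCurv L xmap u v (N u v) α := by
    intro u hu v hv α
    set x0 := xmap u with hx0def
    set y0 := yvec xmap u v with hy0def
    have hx0 : x0 ∈ U := hxU u hu
    have hy0 : y0 ≠ 0 := hv
    set Np := N u v with hNpdef
    set τ := tauRC L σ b x0 y0 with hτdef
    -- smoothness of the slice L x0
    have hslice : ContDiffOn ℝ (⊤ : ℕ∞) (L x0) {z : Fin n → ℝ | z ≠ 0} := by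
      have h1 : ContDiffOn ℝ (⊤ : ℕ∞)
          ((fun p : (Fin n → ℝ) × (Fin n → ℝ) => L p.1 p.2) ∘ (fun z : Fin n → ℝ => (x0, z)))
          {z : Fin n → ℝ | z ≠ 0} :=
        hL.comp (contDiffOn_const.prodMk contDiffOn_id) (fun z hz => ⟨hx0, hz⟩)
      exact h1.congr fun z hz => rfl
    have hhom : ∀ z : Fin n → ℝ, z ≠ 0 → ∀ c : ℝ, 0 < c → L x0 (c • z) = c * L x0 z :=
      fun z hz c hc => hLhom x0 hx0 z hz c hc
    have hpos : 0 < L x0 y0 := hLpos x0 hx0 y0 hy0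
    have hLs : 0 < RandersChange L σ b x0 y0 := hLstar u hu v hv
    have hτpos : 0 < τ := div_pos (mul_pos (Real.exp_pos _) hLs) hpos
    have hsq : Real.sqrt τ * Real.sqrt τ = τ := Real.mul_self_sqrt hτpos.le
    have hsqpos : 0 < Real.sqrt τ := Real.sqrt_pos.2 hτpos
    have hN1' : ∀ α', ∑ i, ∑ j, gten L x0 i j y0 * Bproj xmap u α' i * Np j = 0 :=
      hN1 u hu v hv
    have hbN' : ∑ j, b x0 j * Np j = 0 := hbN u hu v hv
    -- contraction of y0 with the metric against Np vanishes
    have hyN : ∑ i, y0 i * ∑ j, gten L x0 i j y0 * Np j = 0 := by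
      have hin : ∀ α', ∑ i, Bproj xmap u α' i * ∑ j, gten L x0 i j y0 * Np j = 0 := by
        intro α'
        rw [← hN1' α']
        refine Finset.sum_congr rfl fun i _ => ?_
        rw [Finset.mul_sum]
        refine Finset.sum_congr rfl fun j _ => ?_
        ring
      have hyv : ∀ i, y0 i = ∑ α', v α' * Bproj xmap u α' i := fun i => rfl
      calc ∑ i, y0 i * ∑ j, gten L x0 i j y0 * Np j
          = ∑ i, ∑ α', v α' * (Bproj xmap u α' i * ∑ j, gten L x0 i j y0 * Np j) := by
            refine Finset.sum_congr rfl fun i _ => ?_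
            rw [hyv i, Finset.sum_mul]
            exact Finset.sum_congr rfl fun α' _ => mul_assoc _ _ _
        _ = ∑ α', v α' * ∑ i, Bproj xmap u α' i * ∑ j, gten L x0 i j y0 * Np j := by
            rw [Finset.sum_comm]
            exact Finset.sum_congr rfl fun α' _ => (Finset.mul_sum _ _ _).symm
        _ = 0 := by simp [hin]
    -- metric contraction identity
    have hcontract : ∀ i, ∑ j, gten (RandersChange L σ b) x0 i j y0 * Np j
        = τ * ∑ j, gten L x0 i j y0 * Np j := by
      intro i
      exact gstar_contract hslice hy0 hpos hhom (σ x0) (b x0) Np hyN hbN' i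
    -- determinant nonzero
    have hdet : (gmat L x0 y0).det ≠ 0 := by
      intro h0
      obtain ⟨w, hw0, hww⟩ := (Matrix.exists_mulVec_eq_zero_iff).2 h0
      have hgt : 0 < ∑ i, ∑ j, gten L x0 i j y0 * w i * w j := hposdef u hu v hv w hw0
      have hz : ∑ i, ∑ j, gten L x0 i j y0 * w i * w j
          = ∑ i, w i * Matrix.mulVec (gmat L x0 y0) w i := by
        refine Finset.sum_congr rfl fun i _ => ?_
        simp only [Matrix.mulVec, dotProduct, gmat, Matrix.of_apply, Finset.mul_sum]
        exact Finset.sum_congr rfl fun j _ => by ring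
      rw [hz, hww] at hgt
      simp at hgt
    -- differentiability facts
    have hPdiff : DifferentiableAt ℝ (fun z => P x0 z) y0 := by
      have h1 : ContDiffOn ℝ (⊤ : ℕ∞)
          ((fun p : (Fin n → ℝ) × (Fin n → ℝ) => P p.1 p.2) ∘ (fun z : Fin n → ℝ => (x0, z)))
          {z : Fin n → ℝ | z ≠ 0} :=
        hP.comp (contDiffOn_const.prodMk contDiffOn_id) (fun z hz => ⟨hx0, hz⟩)
      exact (((h1.congr fun z hz => rfl).contDiffAt
        (isOpen_ne0.mem_nhds hy0)).differentiableAt (by simp))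
    have hsprayd : ∀ i, DifferentiableAt ℝ (fun z => spray L x0 z i) y0 :=
      fun i => spray_diffAt hU hL hx0 hy0 hdet i
    have hev : ∀ i, (fun z => spray (RandersChange L σ b) x0 z i)
        =ᶠ[nhds y0] (fun z => spray L x0 z i + P x0 z * z i) := by
      intro i
      filter_upwards [isOpen_ne0.mem_nhds hy0] with z hz
      exact hproj x0 hx0 z hz i
    have hpd : ∀ i j', pdy (fun z => spray (RandersChange L σ b) x0 z i) j' y0
        = pdy (fun z => spray L x0 z i) j' y0
          + (pdy (fun z => P x0 z) j' y0 * y0 i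
              + P x0 y0 * (Pi.single j' 1 : Fin n → ℝ) i) := by
      intro i j'
      simp only [pdy]
      rw [(hev i).fderiv_eq, fderiv_fun_add (hsprayd i) (hPdiff.fun_mul diff_coord),
        ContinuousLinearMap.add_apply]
      congr 1
      rw [fderiv_fun_mul hPdiff diff_coord]
      simp only [ContinuousLinearMap.add_apply, ContinuousLinearMap.coe_smul',
        Pi.smul_apply, smul_eq_mul]
      rw [fderiv_coord]
      simp only [ContinuousLinearMap.proj_apply]
      ring
    -- the two factor computations
    have hfac : ∀ i, (∑ j, gten (RandersChange L σ b) x0 i j y0 * (Np j / Real.sqrt τ))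
        = Real.sqrt τ * ∑ j, gten L x0 i j y0 * Np j := by
      intro i
      have h1 : ∑ j, gten (RandersChange L σ b) x0 i j y0 * (Np j / Real.sqrt τ)
          = (∑ j, gten (RandersChange L σ b) x0 i j y0 * Np j) / Real.sqrt τ := by
        rw [Finset.sum_div]
        exact Finset.sum_congr rfl fun j _ => by ring
      rw [h1, hcontract i, div_eq_iff (ne_of_gt hsqpos),
        show Real.sqrt τ * (∑ j, gten L x0 i j y0 * Np j) * Real.sqrt τ
          = (∑ j, gten L x0 i j y0 * Np j) * (Real.sqrt τ * Real.sqrt τ) from by ring, hsq]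
      ring
    have hinner : ∀ i, ∑ j, pdy (fun z => spray (RandersChange L σ b) x0 z i) j y0
          * Bproj xmap u α j
        = (∑ j, pdy (fun z => spray L x0 z i) j y0 * Bproj xmap u α j)
          + ((∑ j, pdy (fun z => P x0 z) j y0 * Bproj xmap u α j) * y0 i
              + P x0 y0 * Bproj xmap u α i) := by
      intro i
      rw [Finset.sum_congr rfl fun j' _ => by rw [hpd i j']]
      have hexp : ∀ j' : Fin n, (pdy (fun z => spray L x0 z i) j' y0
            + (pdy (fun z => P x0 z) j' y0 * y0 i
              + P x0 y0 * (Pi.single j' 1 : Fin n → ℝ) i)) * Bproj xmap u α j'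
          = pdy (fun z => spray L x0 z i) j' y0 * Bproj xmap u α j'
            + (pdy (fun z => P x0 z) j' y0 * Bproj xmap u α j') * y0 i
            + P x0 y0 * ((Pi.single j' 1 : Fin n → ℝ) i * Bproj xmap u α j') := by
        intro j'; ring
      rw [Finset.sum_congr rfl fun j' _ => hexp j']
      rw [Finset.sum_add_distrib, Finset.sum_add_distrib, ← Finset.sum_mul, ← Finset.mul_sum,
        sum_single_mul (Bproj xmap u α) i]
      ring
    -- orthogonality of the covector Np-contraction with tangents
    have hNy : ∑ i, (∑ j, gten L x0 i j y0 * Np j) * y0 i = 0 := by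
      rw [← hyN]
      exact Finset.sum_congr rfl fun i _ => mul_comm _ _
    have hNB : ∑ i, (∑ j, gten L x0 i j y0 * Np j) * Bproj xmap u α i = 0 := by
      rw [← hN1' α]
      refine Finset.sum_congr rfl fun i _ => ?_
      rw [Finset.sum_mul]
      refine Finset.sum_congr rfl fun j _ => ?_
      ring
    -- assemble
    have LHSeq : normalCurv (RandersChange L σ b) xmap u v
          (fun i => Np i / Real.sqrt τ) α
        = ∑ i, (Real.sqrt τ * ∑ j, gten L x0 i j y0 * Np j)
            * ((∑ β, v β * B2 xmap u β α i)
              + ((∑ j, pdy (fun z => spray L x0 z i) j y0 * Bproj xmap u α j)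
                + ((∑ j, pdy (fun z => P x0 z) j y0 * Bproj xmap u α j) * y0 i
                    + P x0 y0 * Bproj xmap u α i))) := by
      unfold normalCurv
      exact Finset.sum_congr rfl fun i _ => by rw [hfac i, hinner i]
    have RHSeq : normalCurv L xmap u v Np α
        = ∑ i, (∑ j, gten L x0 i j y0 * Np j)
            * ((∑ β, v β * B2 xmap u β α i)
              + ∑ j, pdy (fun z => spray L x0 z i) j y0 * Bproj xmap u α j) := rfl
    rw [LHSeq, RHSeq]
    calc ∑ i, (Real.sqrt τ * ∑ j, gten L x0 i j y0 * Np j)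
            * ((∑ β, v β * B2 xmap u β α i)
              + ((∑ j, pdy (fun z => spray L x0 z i) j y0 * Bproj xmap u α j)
                + ((∑ j, pdy (fun z => P x0 z) j y0 * Bproj xmap u α j) * y0 i
                    + P x0 y0 * Bproj xmap u α i)))
        = ∑ i, (Real.sqrt τ * ((∑ j, gten L x0 i j y0 * Np j)
              * ((∑ β, v β * B2 xmap u β α i)
                + ∑ j, pdy (fun z => spray L x0 z i) j y0 * Bproj xmap u α j))
            + ((Real.sqrt τ * (∑ j, pdy (fun z => P x0 z) j y0 * Bproj xmap u α j))
                * ((∑ j, gten L x0 i j y0 * Np j) * y0 i)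
              + (Real.sqrt τ * P x0 y0)
                  * ((∑ j, gten L x0 i j y0 * Np j) * Bproj xmap u α i))) := by
          exact Finset.sum_congr rfl fun i _ => by ring
      _ = Real.sqrt τ * ∑ i, (∑ j, gten L x0 i j y0 * Np j)
            * ((∑ β, v β * B2 xmap u β α i)
              + ∑ j, pdy (fun z => spray L x0 z i) j y0 * Bproj xmap u α j) := by
          rw [Finset.sum_add_distrib, ← Finset.mul_sum]
          rw [Finset.sum_add_distrib, ← Finset.mul_sum, ← Finset.mul_sum, hNy, hNB]
          ring
  -- positivity of the factor
  have hτpos : ∀ u ∈ V, ∀ v : Fin (n - 1) → ℝ, yvec xmap u v ≠ 0 →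
      0 < tauRC L σ b (xmap u) (yvec xmap u v) := fun u hu v hv =>
    div_pos (mul_pos (Real.exp_pos _) (hLstar u hu v hv))
      (hLpos _ (hxU u hu) _ hv)
  constructor
  · intro h u hu v hv α
    rw [key u hu v hv α, h u hu v hv α, mul_zero]
  · intro h u hu v hv α
    have h2 := h u hu v hv α
    rw [key u hu v hv α] at h2
    exact (mul_eq_zero.1 h2).resolve_left
      (ne_of_gt (Real.sqrt_pos.2 (hτpos u hu v hv)))
end
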